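/- arXiv:1202.1335 — 10 statements merged into one kernel-verified Lean document; each statement's English description precedes it below -/
import Mathlib

section
/- Let U ⊆ ℂ be a nonempty open connected set and let (f_n) be a sequence of analytic functions on U, none of which takes the value 0 anywhere on U. Suppose (f_n) converges to a function f uniformly on every compact subset of U. Then either f is identically 0 on U, or f does not take the value 0 anywhere on U. -/
open Filter Topology Metric Set

theorem stmt_0 (U : Set ℂ) (hUopen : IsOpen U) (hUconn : IsConnected U)
    (F : ℕ → ℂ → ℂ) (f : ℂ → ℂ)
    (hF : ∀ n, AnalyticOnNhd ℂ (F n) U)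
    (hFne : ∀ n, ∀ z ∈ U, F n z ≠ 0)
    (hconv : ∀ K ⊆ U, IsCompact K → TendstoUniformlyOn F f atTop K) :
    (∀ z ∈ U, f z = 0) ∨ (∀ z ∈ U, f z ≠ 0) := by
  have hloc : TendstoLocallyUniformlyOn F f atTop U := by
    rw [tendstoLocallyUniformlyOn_iff_forall_isCompact hUopen]
    exact fun K hK hKc => hconv K hK hKc
  have hfd : DifferentiableOn ℂ f U :=
    hloc.differentiableOn (Eventually.of_forall fun n => (hF n).differentiableOn) hUopen
  have hfa : AnalyticOnNhd ℂ f U := hfd.analyticOnNhd hUopen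
  by_cases hzero : ∀ z ∈ U, f z = 0
  · exact Or.inl hzero
  right
  push_neg at hzero
  obtain ⟨z₁, hz₁U, hz₁⟩ := hzero
  intro z₀ hz₀U hfz₀
  -- zeros of f are isolated
  have hiso : ∀ᶠ z in 𝓝[≠] z₀, f z ≠ 0 := by
    rcases (hfa z₀ hz₀U).eventually_eq_zero_or_eventually_ne_zero with h | h
    · exact absurd (hfa.eqOn_zero_of_preconnected_of_eventuallyEq_zero hUconn.isPreconnected
        hz₀U h hz₁U) hz₁
    · exact h
  rw [eventually_nhdsWithin_iff, Metric.eventually_nhds_iff] at hiso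
  obtain ⟨ε, hε, hiso⟩ := hiso
  obtain ⟨δ, hδ, hδU⟩ := Metric.isOpen_iff.mp hUopen z₀ hz₀U
  set r : ℝ := min (ε / 2) (δ / 2) with hr
  have hrpos : 0 < r := lt_min (by linarith) (by linarith)
  have hball : closedBall z₀ r ⊆ U := fun x hx =>
    hδU (lt_of_le_of_lt (mem_closedBall.mp hx) (lt_of_le_of_lt (min_le_right _ _) (by linarith)))
  -- f is nonzero on the sphere
  have hsph : ∀ z ∈ sphere z₀ r, f z ≠ 0 := by
    intro z hz
    have hzne : z ≠ z₀ := by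
      intro h; rw [h, mem_sphere, dist_self] at hz; exact hrpos.ne hz
    exact hiso (lt_of_le_of_lt (le_of_eq hz) (lt_of_le_of_lt (min_le_left _ _) (by linarith))) hzne
  -- minimum of ‖f‖ on the sphere
  have hsne : (sphere z₀ r).Nonempty := NormedSpace.sphere_nonempty.mpr hrpos.le
  obtain ⟨w, hw, hwmin⟩ := (isCompact_sphere z₀ r).exists_isMinOn hsne
    ((hfd.continuousOn.mono (fun x hx => hball (sphere_subset_closedBall hx))).norm)
  set m : ℝ := ‖f w‖ with hm
  have hmpos : 0 < m := norm_pos_iff.mpr (hsph w hw)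
  -- uniform convergence on the closed ball gives n
  have hconvK := hconv (closedBall z₀ r) hball (isCompact_closedBall z₀ r)
  rw [Metric.tendstoUniformlyOn_iff] at hconvK
  obtain ⟨n, hn⟩ := (hconvK (m / 2) (by linarith)).exists
  -- maximum modulus principle for (F n)⁻¹ on the ball
  have hFninv : DiffContOnCl ℂ (fun z => (F n z)⁻¹) (ball z₀ r) := by
    refine DifferentiableOn.diffContOnCl ?_
    rw [closure_ball z₀ hrpos.ne']
    exact ((hF n).differentiableOn.mono hball).inv (fun z hz => hFne n z (hball hz))
  have hbound : ∀ z ∈ frontier (ball z₀ r), ‖(F n z)⁻¹‖ ≤ 2 / m := by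
    intro z hz
    rw [frontier_ball z₀ hrpos.ne'] at hz
    have h1 : m ≤ ‖f z‖ := hwmin hz
    have h2 : dist (f z) (F n z) < m / 2 := hn z (sphere_subset_closedBall hz)
    have h3 : m / 2 ≤ ‖F n z‖ := by
      have := norm_sub_norm_le (f z) (F n z)
      rw [dist_eq_norm] at h2
      linarith
    rw [norm_inv]
    calc ‖F n z‖⁻¹ ≤ (m / 2)⁻¹ := inv_anti₀ (by linarith) h3
      _ = 2 / m := inv_div m 2
  have hz₀mem : z₀ ∈ closure (ball z₀ r) := by
    rw [closure_ball z₀ hrpos.ne']; exact mem_closedBall_self hrpos.le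
  have hmax := Complex.norm_le_of_forall_mem_frontier_norm_le isBounded_ball hFninv hbound hz₀mem
  -- derive contradiction
  have h4 : dist (f z₀) (F n z₀) < m / 2 := hn z₀ (mem_closedBall_self hrpos.le)
  rw [hfz₀, dist_eq_norm, zero_sub, norm_neg] at h4
  have h5 : m / 2 ≤ ‖F n z₀‖ := by
    have hne := hFne n z₀ hz₀U
    rw [norm_inv] at hmax
    rw [inv_le_iff_one_le_mul₀ (norm_pos_iff.mpr hne), div_mul_eq_mul_div,
      le_div_iff₀ hmpos] at hmax
    linarith
  linarith
end

section
/- Let 0 < R ≤ 1, let (ε_n) be a sequence with ε_n ∈ {1,−1} for all n ≥ 1, and let (α_n) be a sequence of complex numbers. Then the partial products ∏_{n=1}^{N} (1+ε_n z^n)^{α_n} converge compactly on the disk |z| < R (as N → ∞) if and only if the power series ∑_{n=1}^{∞} α_n z^n converges for every z with |z| < R; moreover, in that case the power series converges absolutely for every |z| < R. -/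
open Filter Topology Finset

lemma base_ne {w : ℂ} (h : ‖w‖ < 1) : (1 : ℂ) + w ≠ 0 := by
  intro h0
  have : w = -1 := by linear_combination h0
  rw [this] at h; simp at h

lemma norm_eps {e : ℂ} (he : e = 1 ∨ e = -1) : ‖e‖ = 1 := by
  rcases he with h | h <;> simp [h]

lemma glob_bound {v : ℕ → ℝ} (h : Tendsto v atTop (𝓝 0)) : ∃ C, 0 < C ∧ ∀ n, v n ≤ C := by
  obtain ⟨N, hN⟩ := Metric.tendsto_atTop.mp h 1 one_pos
  refine ⟨max 1 ((Finset.range (N + 1)).sup' ⟨0, by simp⟩ v), by positivity, fun n => ?_⟩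
  rcases le_or_gt n N with hn | hn
  · exact le_max_of_le_right (Finset.le_sup' v (Finset.mem_range.mpr (by omega)))
  · have := hN n (by omega)
    rw [Real.dist_eq, sub_zero] at this
    exact le_max_of_le_left (le_trans (le_abs_self _) this.le)

lemma terms_to_zero {u : ℕ → ℂ} {l : ℂ}
    (h : Tendsto (fun N => ∑ n ∈ Finset.Icc 1 N, u n) atTop (𝓝 l)) :
    Tendsto u atTop (𝓝 0) := by
  rw [← tendsto_add_atTop_iff_nat 1]
  have h2 : Tendsto (fun N => (∑ n ∈ Finset.Icc 1 (N+1), u n) - ∑ n ∈ Finset.Icc 1 N, u n)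
      atTop (𝓝 (l - l)) := (h.comp (tendsto_add_atTop_nat 1)).sub h
  rw [sub_self] at h2
  convert h2 using 2 with N
  rw [Finset.sum_Icc_succ_top (Nat.le_add_left 1 N)]
  ring

lemma sum_Icc_eq_range {u : ℕ → ℂ} (N : ℕ) :
    ∑ n ∈ Finset.Icc 1 N, u n = ∑ k ∈ Finset.range N, u (k + 1) := by
  rw [← Finset.Ico_add_one_right_eq_Icc, Finset.sum_Ico_eq_sum_range]
  simp [add_comm]

lemma sum_conv {u : ℕ → ℂ} (h : Summable fun n => ‖u n‖) :
    ∃ l, Tendsto (fun N => ∑ n ∈ Finset.Icc 1 N, u n) atTop (𝓝 l) := by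
  have hs : Summable u := h.of_norm
  refine ⟨(∑' n, u n) - u 0, ?_⟩
  have h1 : Tendsto (fun N => ∑ n ∈ Finset.range (N + 1), u n) atTop (𝓝 (∑' n, u n)) :=
    hs.hasSum.tendsto_sum_nat.comp (tendsto_add_atTop_nat 1)
  have h2 := h1.sub_const (u 0)
  convert h2 using 2 with N
  rw [Finset.sum_range_succ' u N, sum_Icc_eq_range]
  ring

lemma re_bound {x a : ℂ} (hx : x ≠ 0) (h : ‖x ^ a - 1‖ ≤ 1/2) :
    |(Complex.log x * a).re| ≤ 1 := by
  have hq : x ^ a = Complex.exp (Complex.log x * a) := Complex.cpow_def_of_ne_zero hx a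
  have hnorm : ‖x ^ a‖ = Real.exp ((Complex.log x * a).re) := by
    rw [hq]; exact Complex.norm_exp _
  have hub : ‖x ^ a‖ ≤ 3/2 := by
    calc ‖x ^ a‖ = ‖(x ^ a - 1) + 1‖ := by ring_nf
    _ ≤ ‖x ^ a - 1‖ + ‖(1:ℂ)‖ := norm_add_le _ _
    _ ≤ 3/2 := by rw [norm_one]; linarith
  have hlb : (1:ℝ)/2 ≤ ‖x ^ a‖ := by
    have := norm_sub_norm_le (1:ℂ) (x ^ a)
    rw [norm_one, norm_sub_rev] at this
    linarith
  set w := (Complex.log x * a).re with hw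
  rw [hnorm] at hub hlb
  have he : (2:ℝ) ≤ Real.exp 1 := by
    have := Real.add_one_le_exp (1:ℝ); linarith
  have h1 : w ≤ 1 := by
    by_contra hcon
    push_neg at hcon
    have := Real.exp_le_exp.mpr hcon.le
    linarith
  have h2 : -1 ≤ w := by
    by_contra hcon
    push_neg at hcon
    have hlt : Real.exp w < Real.exp (-1) := Real.exp_lt_exp.mpr hcon
    rw [Real.exp_neg] at hlt
    have h3 : Real.exp 1 * Real.exp w < 1 := by
      calc Real.exp 1 * Real.exp w < Real.exp 1 * (Real.exp 1)⁻¹ := by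
            apply mul_lt_mul_of_pos_left hlt (Real.exp_pos 1)
      _ = 1 := mul_inv_cancel₀ (Real.exp_pos 1).ne'
    nlinarith [Real.exp_pos w]
  exact abs_le.mpr ⟨h2, h1⟩

lemma key_est {t : ℝ} (ht0 : 0 < t) (ht1 : t < 1) {a : ℂ}
    (h1 : ‖((1 - t : ℝ) : ℂ) ^ a - 1‖ ≤ 1/2)
    (h2 : ‖((1 : ℂ) + (t:ℝ) * Complex.I) ^ a - 1‖ ≤ 1/2) :
    ‖a‖ * t ≤ 10 := by
  have hx1 : ((1 - t : ℝ) : ℂ) ≠ 0 := by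
    simp only [ne_eq, Complex.ofReal_eq_zero]; linarith
  have hre1 := re_bound hx1 h1
  -- log of positive real
  have hlog1 : Complex.log ((1 - t : ℝ) : ℂ) = ((Real.log (1 - t) : ℝ) : ℂ) :=
    (Complex.ofReal_log (by linarith)).symm
  rw [hlog1] at hre1
  have hre1' : |Real.log (1 - t) * a.re| ≤ 1 := by
    have : (((Real.log (1 - t) : ℝ) : ℂ) * a).re = Real.log (1 - t) * a.re := by
      simp [Complex.mul_re]
    rwa [this] at hre1
  have hlogle : Real.log (1 - t) ≤ -t := by
    have := Real.log_le_sub_one_of_pos (show (0:ℝ) < 1 - t by linarith)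
    linarith
  have hare : |a.re| * t ≤ 1 := by
    have h3 : t ≤ |Real.log (1 - t)| := by
      rw [abs_of_nonpos (by linarith)]; linarith
    calc |a.re| * t ≤ |a.re| * |Real.log (1 - t)| := by
          apply mul_le_mul_of_nonneg_left h3 (abs_nonneg _)
    _ = |Real.log (1 - t) * a.re| := by rw [abs_mul]; ring
    _ ≤ 1 := hre1'
  -- second point
  set x₂ : ℂ := (1 : ℂ) + (t:ℝ) * Complex.I with hx₂def
  have hx₂re : x₂.re = 1 := by simp [hx₂def]
  have hx₂im : x₂.im = t := by simp [hx₂def]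
  have hx₂ne : x₂ ≠ 0 := by
    intro h; apply one_ne_zero (α := ℝ); rw [← hx₂re, h]; simp
  have hre2 := re_bound hx₂ne h2
  set A := ‖x₂‖ with hA
  have hA2 : A ^ 2 = 1 + t ^ 2 := by
    rw [hA, Complex.sq_norm, Complex.normSq_apply, hx₂re, hx₂im]; ring
  have hA1 : 1 ≤ A := by nlinarith [norm_nonneg x₂]
  have hAle2 : A ≤ 2 := by nlinarith
  have hlogA : Real.log A ≤ t ^ 2 / 2 := by
    have hL : Real.log (A ^ 2) = 2 * Real.log A := by
      rw [Real.log_pow]; push_cast; ring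
    have := Real.log_le_sub_one_of_pos (show (0:ℝ) < A ^ 2 by nlinarith)
    rw [hL, hA2] at this
    linarith
  have hlogA0 : 0 ≤ Real.log A := Real.log_nonneg hA1
  have harg : t / 2 ≤ x₂.arg := by
    have hargeq : x₂.arg = Real.arcsin (t / A) := by
      rw [Complex.arg_of_re_nonneg (by rw [hx₂re]; norm_num), hx₂im]
    have htA1 : t / A ≤ 1 := by
      rw [div_le_one (by linarith)]; linarith
    have htA0 : 0 ≤ t / A := div_nonneg ht0.le (by linarith)
    have hsin : Real.sin (Real.arcsin (t / A)) = t / A :=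
      Real.sin_arcsin (by linarith) htA1
    have : t / A ≤ Real.arcsin (t / A) := by
      nth_rewrite 1 [← hsin]
      exact Real.sin_le (Real.arcsin_nonneg.mpr htA0)
    have ht2A : t / 2 ≤ t / A := by
      apply div_le_div_of_nonneg_left ht0.le (by linarith) hAle2
    rw [hargeq]; linarith
  have hre2' : |Real.log A * a.re - x₂.arg * a.im| ≤ 1 := by
    have : (Complex.log x₂ * a).re = Real.log A * a.re - x₂.arg * a.im := by
      rw [Complex.mul_re, Complex.log_re, Complex.log_im]
    rwa [this] at hre2
  have haim : |a.im| * t ≤ 3 := by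
    have e1 : |x₂.arg * a.im| ≤ 1 + |Real.log A * a.re| := by
      have := abs_sub_abs_le_abs_sub (x₂.arg * a.im) (Real.log A * a.re)
      have h4 : |x₂.arg * a.im - Real.log A * a.re| ≤ 1 := by
        rw [← abs_neg]; convert hre2' using 2; ring
      linarith
    have e2 : |Real.log A * a.re| ≤ t / 2 := by
      rw [abs_mul, abs_of_nonneg hlogA0]
      calc Real.log A * |a.re| ≤ (t^2/2) * |a.re| := by
            apply mul_le_mul_of_nonneg_right hlogA (abs_nonneg _)
      _ = (t * |a.re|) * (t / 2) := by ring
      _ ≤ 1 * (t/2) := by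
            apply mul_le_mul_of_nonneg_right _ (by linarith)
            rw [mul_comm]; exact hare
      _ = t / 2 := by ring
    have e3 : (t/2) * |a.im| ≤ |x₂.arg * a.im| := by
      rw [abs_mul, abs_of_nonneg (by linarith : (0:ℝ) ≤ x₂.arg)]
      apply mul_le_mul_of_nonneg_right harg (abs_nonneg _)
    nlinarith
  have hnorm : ‖a‖ ≤ |a.re| + |a.im| := Complex.norm_le_abs_re_add_abs_im a
  nlinarith [norm_nonneg a, abs_nonneg a.re, abs_nonneg a.im]

lemma exp_unif {S : ℂ → ℂ} {SN : ℕ → ℂ → ℂ} {K : Set ℂ} {M : ℝ}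
    (h : TendstoUniformlyOn SN S atTop K) (hM : ∀ z ∈ K, ‖S z‖ ≤ M) :
    TendstoUniformlyOn (fun N z => Complex.exp (SN N z)) (fun z => Complex.exp (S z)) atTop K := by
  rw [Metric.tendstoUniformlyOn_iff] at h ⊢
  intro δ hδ
  have hEM : 0 < Real.exp M := Real.exp_pos M
  have hη : 0 < min 1 (δ / (2 * Real.exp M + 1)) := by positivity
  filter_upwards [h _ hη] with N hN z hz
  have hd := hN z hz
  rw [dist_eq_norm, norm_sub_rev] at hd
  rw [dist_eq_norm]
  set d := SN N z - S z with hdef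
  have hd1 : ‖d‖ ≤ 1 := le_trans hd.le (min_le_left _ _)
  have hd2 : ‖d‖ < δ / (2 * Real.exp M + 1) := lt_of_lt_of_le hd (min_le_right _ _)
  have hsplit : Complex.exp (S z) - Complex.exp (SN N z)
      = Complex.exp (S z) * (1 - Complex.exp d) := by
    rw [mul_sub, mul_one, ← Complex.exp_add, hdef]; ring_nf
  rw [hsplit, norm_mul]
  have h1 : ‖Complex.exp (S z)‖ ≤ Real.exp M := by
    rw [Complex.norm_exp]
    apply Real.exp_le_exp.mpr
    refine le_trans ?_ (hM z hz)
    exact le_trans (le_abs_self _) (Complex.abs_re_le_norm _)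
  have h2 : ‖1 - Complex.exp d‖ ≤ 2 * ‖d‖ := by
    rw [norm_sub_rev]
    exact Complex.norm_exp_sub_one_le hd1
  calc ‖Complex.exp (S z)‖ * ‖1 - Complex.exp d‖ ≤ Real.exp M * (2 * ‖d‖) := by
        apply mul_le_mul h1 h2 (norm_nonneg _) hEM.le
  _ < Real.exp M * (2 * (δ / (2 * Real.exp M + 1))) := by
        apply mul_lt_mul_of_pos_left _ hEM
        linarith
  _ ≤ δ := by
        rw [div_eq_mul_inv]
        have : Real.exp M * (2 * (δ * (2 * Real.exp M + 1)⁻¹))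
            = δ * ((2 * Real.exp M) * (2 * Real.exp M + 1)⁻¹) := by ring
        rw [this]
        have hpos : (0:ℝ) < 2 * Real.exp M + 1 := by linarith
        have : (2 * Real.exp M) * (2 * Real.exp M + 1)⁻¹ ≤ 1 := by
          rw [← div_eq_mul_inv, div_le_one hpos]; linarith
        nlinarith

lemma bwd (R : ℝ) (hR0 : 0 < R) (hR1 : R ≤ 1) (ε : ℕ → ℂ) (hε : ∀ n ≥ 1, ε n = 1 ∨ ε n = -1)
    (α : ℕ → ℂ)
    (hs : ∀ z ∈ Metric.ball (0 : ℂ) R, ∃ l : ℂ,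
      Tendsto (fun N => ∑ n ∈ Finset.Icc 1 N, α n * z ^ n) atTop (𝓝 l)) :
    ∃ f : ℂ → ℂ, ∀ K ⊆ Metric.ball (0 : ℂ) R, IsCompact K →
      TendstoUniformlyOn (fun N z => ∏ n ∈ Finset.Icc 1 N, (1 + ε n * z ^ n) ^ (α n)) f atTop K := by
  set g : ℕ → ℂ → ℂ := fun n z => Complex.log (1 + ε n * z ^ n) * α n with hg
  refine ⟨fun z => Complex.exp (∑' k : ℕ, g (k + 1) z), ?_⟩
  intro K hK hKc
  rcases K.eq_empty_or_nonempty with rfl | hne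
  · intro u hu; simp
  obtain ⟨z₀, hz₀K, hmax⟩ := hKc.exists_isMaxOn hne continuous_norm.continuousOn
  set r := ‖z₀‖ with hrdef
  have hr0 : 0 ≤ r := norm_nonneg _
  have hrR : r < R := by
    have := hK hz₀K; rwa [mem_ball_zero_iff] at this
  have hr1 : r < 1 := lt_of_lt_of_le hrR hR1
  set r₁ : ℝ := (r + R) / 2 with hr₁def
  have hrr₁ : r < r₁ := by rw [hr₁def]; linarith
  have hr₁R : r₁ < R := by rw [hr₁def]; linarith
  have hr₁0 : 0 < r₁ := by rw [hr₁def]; linarith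
  -- coefficient decay
  obtain ⟨l, hl⟩ := hs ((r₁ : ℝ) : ℂ) (by
    rw [mem_ball_zero_iff, Complex.norm_real, Real.norm_eq_abs, abs_of_pos hr₁0]; exact hr₁R)
  obtain ⟨C, hC0, hC⟩ := glob_bound (by simpa using (terms_to_zero hl).norm)
  have hCb : ∀ n : ℕ, ‖α n‖ * r ^ n ≤ C * (r / r₁) ^ n := by
    intro n
    have h1 : ‖α n‖ * r₁ ^ n ≤ C := by
      simpa [abs_of_pos hr₁0] using hC n
    have hr₁n : r₁ ^ n ≠ 0 := pow_ne_zero n hr₁0.ne'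
    have h2 : ‖α n‖ * r ^ n = (‖α n‖ * r₁ ^ n) * (r / r₁) ^ n := by
      have hdp : (r / r₁) ^ n = r ^ n / r₁ ^ n := div_pow r r₁ n
      rw [hdp, mul_assoc]
      congr 1
      calc r ^ n = r₁ ^ n * r ^ n / r₁ ^ n := (mul_div_cancel_left₀ _ hr₁n).symm
      _ = r₁ ^ n * (r ^ n / r₁ ^ n) := mul_div_assoc _ _ _
    rw [h2]
    apply mul_le_mul_of_nonneg_right h1 (by positivity)
  set B : ℝ := r * (1 - r)⁻¹ / 2 + 1 with hBdef
  have hB0 : 0 < B := by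
    have : 0 ≤ r * (1 - r)⁻¹ / 2 := by
      apply div_nonneg _ (by norm_num)
      exact mul_nonneg hr0 (by rw [inv_nonneg]; linarith)
    rw [hBdef]; linarith
  -- bound on each summand
  have hgb : ∀ (k : ℕ), ∀ z ∈ K, ‖g (k + 1) z‖ ≤ (B * C * (r / r₁)) * (r / r₁) ^ k := by
    intro k z hzK
    have hzr : ‖z‖ ≤ r := hmax hzK
    have hz1 : ‖z‖ < 1 := lt_of_le_of_lt hzr hr1
    set w : ℂ := ε (k + 1) * z ^ (k + 1) with hwdef
    have hwnorm : ‖w‖ = ‖z‖ ^ (k + 1) := by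
      rw [hwdef, norm_mul, norm_pow, norm_eps (hε (k + 1) (Nat.le_add_left 1 k)), one_mul]
    have hwr : ‖w‖ ≤ r ^ (k + 1) := by
      rw [hwnorm]; exact pow_le_pow_left₀ (norm_nonneg z) hzr (k + 1)
    have hwr' : ‖w‖ ≤ r := by
      refine le_trans hwr ?_
      simpa using pow_le_pow_of_le_one hr0 hr1.le (Nat.le_add_left 1 k)
    have hw1 : ‖w‖ < 1 := lt_of_le_of_lt hwr' hr1
    have hlog : ‖Complex.log (1 + w)‖ ≤ B * ‖w‖ := by
      have h1 := Complex.norm_log_one_add_le hw1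
      have h2 : ‖w‖ ^ 2 * (1 - ‖w‖)⁻¹ / 2 ≤ ‖w‖ * (r * (1 - r)⁻¹ / 2) := by
        have hinv : (1 - ‖w‖)⁻¹ ≤ (1 - r)⁻¹ := by
          apply inv_anti₀ (by linarith) (by linarith)
        have hsq : ‖w‖ ^ 2 ≤ ‖w‖ * r := by
          rw [pow_two]
          exact mul_le_mul_of_nonneg_left hwr' (norm_nonneg _)
        have hinv0 : 0 ≤ (1 - ‖w‖)⁻¹ := by rw [inv_nonneg]; linarith
        have hmain : ‖w‖ ^ 2 * (1 - ‖w‖)⁻¹ ≤ (‖w‖ * r) * (1 - r)⁻¹ :=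
          mul_le_mul hsq hinv hinv0 (mul_nonneg (norm_nonneg _) hr0)
        linarith
      rw [hBdef]
      calc ‖Complex.log (1 + w)‖ ≤ ‖w‖ ^ 2 * (1 - ‖w‖)⁻¹ / 2 + ‖w‖ := h1
      _ ≤ ‖w‖ * (r * (1 - r)⁻¹ / 2) + ‖w‖ := by linarith
      _ = (r * (1 - r)⁻¹ / 2 + 1) * ‖w‖ := by ring
    calc ‖g (k + 1) z‖ = ‖Complex.log (1 + w)‖ * ‖α (k + 1)‖ := by
          rw [hg]; simp only [norm_mul, hwdef]
    _ ≤ (B * ‖w‖) * ‖α (k + 1)‖ := by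
          apply mul_le_mul_of_nonneg_right hlog (norm_nonneg _)
    _ ≤ B * (‖α (k + 1)‖ * r ^ (k + 1)) := by
          rw [hwnorm]
          have : ‖z‖ ^ (k+1) * ‖α (k+1)‖ ≤ ‖α (k+1)‖ * r ^ (k+1) := by
            rw [mul_comm]
            apply mul_le_mul_of_nonneg_left _ (norm_nonneg _)
            exact pow_le_pow_left₀ (norm_nonneg z) hzr (k + 1)
          calc B * ‖z‖ ^ (k+1) * ‖α (k+1)‖ = B * (‖z‖^(k+1) * ‖α (k+1)‖) := by ring
          _ ≤ B * (‖α (k+1)‖ * r ^ (k+1)) := mul_le_mul_of_nonneg_left this hB0.le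
    _ ≤ B * (C * (r / r₁) ^ (k + 1)) := mul_le_mul_of_nonneg_left (hCb (k+1)) hB0.le
    _ = (B * C * (r / r₁)) * (r / r₁) ^ k := by rw [pow_succ]; ring
  -- summability of the bound
  have hrr₁1 : r / r₁ < 1 := by rwa [div_lt_one hr₁0]
  have hrr₁0 : 0 ≤ r / r₁ := div_nonneg hr0 hr₁0.le
  have hu : Summable (fun k : ℕ => (B * C * (r / r₁)) * (r / r₁) ^ k) :=
    (summable_geometric_of_lt_one hrr₁0 hrr₁1).mul_left _
  have htsum := tendstoUniformlyOn_tsum_nat (f := fun k z => g (k + 1) z) hu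
    (fun k z hz => hgb k z hz)
  -- bound on limit
  have hM : ∀ z ∈ K, ‖∑' k : ℕ, g (k + 1) z‖ ≤ ∑' k : ℕ, (B * C * (r / r₁)) * (r / r₁) ^ k := by
    intro z hz
    have hsum : Summable fun k : ℕ => ‖g (k + 1) z‖ :=
      Summable.of_nonneg_of_le (fun _ => norm_nonneg _) (fun k => hgb k z hz) hu
    refine le_trans (norm_tsum_le_tsum_norm hsum) ?_
    exact Summable.tsum_le_tsum (fun k => hgb k z hz) hsum hu
  have hexp := exp_unif htsum hM
  apply hexp.congr
  filter_upwards with N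
  intro z hz
  have hne : ∀ n ∈ Finset.Icc 1 N, (1 : ℂ) + ε n * z ^ n ≠ 0 := by
    intro n hn
    rw [Finset.mem_Icc] at hn
    apply base_ne
    rw [norm_mul, norm_pow, norm_eps (hε n hn.1), one_mul]
    have hzr : ‖z‖ ≤ r := hmax hz
    have h1 : ‖z‖ ^ n ≤ r ^ n := pow_le_pow_left₀ (norm_nonneg z) hzr n
    have h2 : r ^ n ≤ r := by simpa using pow_le_pow_of_le_one hr0 hr1.le hn.1
    linarith
  calc Complex.exp (∑ k ∈ Finset.range N, g (k + 1) z)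
      = Complex.exp (∑ n ∈ Finset.Icc 1 N, g n z) := by rw [sum_Icc_eq_range]
  _ = ∏ n ∈ Finset.Icc 1 N, Complex.exp (g n z) := Complex.exp_sum _ _
  _ = ∏ n ∈ Finset.Icc 1 N, (1 + ε n * z ^ n) ^ (α n) := by
      apply Finset.prod_congr rfl
      intro n hn
      rw [hg]
      exact (Complex.cpow_def_of_ne_zero (hne n hn) (α n)).symm

lemma fwd (R : ℝ) (hR0 : 0 < R) (hR1 : R ≤ 1) (ε : ℕ → ℂ) (hε : ∀ n ≥ 1, ε n = 1 ∨ ε n = -1)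
    (α : ℕ → ℂ) (f : ℂ → ℂ)
    (hf : ∀ K ⊆ Metric.ball (0 : ℂ) R, IsCompact K →
      TendstoUniformlyOn (fun N z => ∏ n ∈ Finset.Icc 1 N, (1 + ε n * z ^ n) ^ (α n)) f atTop K) :
    ∀ z ∈ Metric.ball (0 : ℂ) R, Summable (fun n => ‖α n * z ^ n‖) := by
  -- differentiability of partial products
  have hPdiff : ∀ N : ℕ, DifferentiableOn ℂ
      (fun z => ∏ n ∈ Finset.Icc 1 N, (1 + ε n * z ^ n) ^ (α n)) (Metric.ball 0 R) := by
    intro N y hy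
    rw [mem_ball_zero_iff] at hy
    apply DifferentiableAt.differentiableWithinAt
    apply DifferentiableAt.fun_finsetProd
    intro n hn
    rw [Finset.mem_Icc] at hn
    have hbase : DifferentiableAt ℂ (fun z : ℂ => 1 + ε n * z ^ n) y := by
      apply (differentiableAt_const _).add
      exact (differentiableAt_const _).mul (differentiableAt_pow n)
    apply hbase.cpow (differentiableAt_const _)
    -- slitPlane
    rw [Complex.mem_slitPlane_iff]
    left
    have hnorm : ‖ε n * y ^ n‖ < 1 := by
      rw [norm_mul, norm_pow, norm_eps (hε n hn.1), one_mul]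
      have h1 : ‖y‖ ^ n ≤ ‖y‖ := by
        simpa using pow_le_pow_of_le_one (norm_nonneg y) (by linarith) hn.1
      linarith
    have := Complex.abs_re_le_norm (ε n * y ^ n)
    have h2 : |(ε n * y ^ n).re| < 1 := lt_of_le_of_lt this hnorm
    rw [abs_lt] at h2
    simp only [Complex.add_re, Complex.one_re]
    linarith
  have hloc := (tendstoLocallyUniformlyOn_iff_forall_isCompact Metric.isOpen_ball).mpr hf
  have hfd : DifferentiableOn ℂ f (Metric.ball 0 R) :=
    hloc.differentiableOn (Filter.Eventually.of_forall hPdiff) Metric.isOpen_ball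
  -- value at zero
  have hf0 : f 0 = 1 := by
    have h0mem : (0 : ℂ) ∈ Metric.ball (0 : ℂ) R := Metric.mem_ball_self hR0
    have h0 := (hf {0} (by simpa using h0mem) isCompact_singleton).tendsto_at rfl
    have hP0 : ∀ N : ℕ, ∏ n ∈ Finset.Icc 1 N, (1 + ε n * (0:ℂ) ^ n) ^ (α n) = 1 := by
      intro N
      apply Finset.prod_eq_one
      intro n hn
      rw [Finset.mem_Icc] at hn
      rw [zero_pow (by omega), mul_zero, add_zero, Complex.one_cpow]
    refine tendsto_nhds_unique h0 ?_
    simp only [hP0]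
    exact tendsto_const_nhds
  intro z hz
  rw [mem_ball_zero_iff] at hz
  set s := ‖z‖ with hsdef
  have hs0 : 0 ≤ s := norm_nonneg z
  set R₁ : ℝ := (s + R) / 2 with hR₁def
  have hsR₁ : s < R₁ := by rw [hR₁def]; linarith
  have hR₁R : R₁ < R := by rw [hR₁def]; linarith
  -- zeros of f in the closed ball of radius R₁ are finite
  set Z : Set ℂ := {y : ℂ | y ∈ Metric.closedBall 0 R₁ ∧ f y = 0} with hZdef
  have hZfin : Z.Finite := by
    by_contra hinf
    rw [← Set.not_infinite, not_not] at hinf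
    obtain ⟨x, hxB, hacc⟩ := hinf.exists_accPt_of_subset_isCompact
      (isCompact_closedBall (0:ℂ) R₁) (fun y hy => hy.1)
    have hxball : x ∈ Metric.ball (0:ℂ) R := by
      rw [mem_ball_zero_iff]
      exact lt_of_le_of_lt (mem_closedBall_zero_iff.mp hxB) hR₁R
    have hfreq : ∃ᶠ y in 𝓝[≠] x, f y = 0 := by
      have h1 : ∃ᶠ y in 𝓝[≠] x, y ∈ Z := by
        rw [Filter.frequently_iff_neBot]
        exact hacc
      exact h1.mono fun y hy => hy.2
    have hana : AnalyticOnNhd ℂ f (Metric.ball 0 R) := hfd.analyticOnNhd Metric.isOpen_ball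
    have heq := hana.eqOn_zero_of_preconnected_of_frequently_eq_zero
      (convex_ball (0:ℂ) R).isPreconnected hxball hfreq
    have := heq (Metric.mem_ball_self hR0)
    rw [hf0] at this
    exact one_ne_zero this
  -- choose a good radius r₂
  obtain ⟨r₂, hr₂⟩ := ((Set.Ioo_infinite hsR₁).diff (hZfin.image fun y => ‖y‖)).nonempty
  obtain ⟨⟨hsr₂, hr₂R₁⟩, hr₂M⟩ := hr₂
  have hr₂0 : 0 < r₂ := lt_of_le_of_lt hs0 hsr₂
  have hr₂R : r₂ < R := lt_trans hr₂R₁ hR₁R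
  have hr₂1 : r₂ < 1 := lt_of_lt_of_le hr₂R hR1
  have hfne : ∀ y : ℂ, ‖y‖ = r₂ → f y ≠ 0 := by
    intro y hy hfy
    apply hr₂M
    exact ⟨y, ⟨mem_closedBall_zero_iff.mpr (by rw [hy]; exact hr₂R₁.le), hfy⟩, hy⟩
  -- the sphere
  set Sp := Metric.sphere (0:ℂ) r₂ with hSp
  have hSsub : Sp ⊆ Metric.ball (0:ℂ) R := by
    intro y hy
    rw [mem_sphere_zero_iff_norm] at hy
    rw [mem_ball_zero_iff, hy]
    exact hr₂R
  have hSne : Sp.Nonempty := ⟨(r₂ : ℂ), by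
    rw [mem_sphere_zero_iff_norm, Complex.norm_real, Real.norm_eq_abs, abs_of_pos hr₂0]⟩
  obtain ⟨y₀, hy₀S, hmin⟩ := (isCompact_sphere (0:ℂ) r₂).exists_isMinOn hSne
    ((hfd.continuousOn.mono hSsub).norm)
  set m := ‖f y₀‖ with hmdef
  have hm0 : 0 < m := by
    rw [hmdef, norm_pos_iff]
    exact hfne y₀ (mem_sphere_zero_iff_norm.mp hy₀S)
  have hmS : ∀ y ∈ Sp, m ≤ ‖f y‖ := fun y hy => hmin hy
  -- uniform convergence on the sphere
  have husp := hf Sp hSsub (isCompact_sphere _ _)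
  rw [Metric.tendstoUniformlyOn_iff] at husp
  obtain ⟨N₀, hN₀⟩ := Filter.eventually_atTop.mp (husp (m/8) (by positivity))
  -- the factors are close to 1
  have hq : ∀ n : ℕ, N₀ + 1 ≤ n → ∀ y ∈ Sp, ‖(1 + ε n * y ^ n) ^ (α n) - 1‖ ≤ 1/2 := by
    intro n hn y hy
    obtain ⟨k, rfl⟩ : ∃ k, n = k + 1 := ⟨n - 1, by omega⟩
    have ha := hN₀ k (by omega) y hy
    have hb := hN₀ (k+1) (by omega) y hy
    rw [dist_eq_norm] at ha hb
    set a := ∏ i ∈ Finset.Icc 1 k, (1 + ε i * y ^ i) ^ (α i) with hadef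
    set q := (1 + ε (k+1) * y ^ (k+1)) ^ (α (k+1)) with hqdef
    have hprod : (∏ i ∈ Finset.Icc 1 (k+1), (1 + ε i * y ^ i) ^ (α i)) = a * q :=
      Finset.prod_Icc_succ_top (Nat.le_add_left 1 k) _
    rw [hprod] at hb
    have hfy : m ≤ ‖f y‖ := hmS y hy
    have hanorm : 7 * m / 8 ≤ ‖a‖ := by
      have := norm_sub_norm_le (f y) a
      linarith
    have hdiff : ‖a * q - a‖ ≤ m / 4 := by
      have h1 : a * q - a = (f y - a) - (f y - a * q) := by ring
      rw [h1]
      refine le_trans (norm_sub_le _ _) ?_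
      linarith
    have hfactor : ‖a‖ * ‖q - 1‖ ≤ m / 4 := by
      rw [← norm_mul]
      have : a * (q - 1) = a * q - a := by ring
      rw [this]
      exact hdiff
    by_contra hcon
    push_neg at hcon
    have : ‖a‖ * (1/2) < ‖a‖ * ‖q - 1‖ :=
      mul_lt_mul_of_pos_left hcon (by linarith)
    nlinarith
  -- find points on the sphere realizing given values of ε n * y ^ n
  have hroot : ∀ n : ℕ, 1 ≤ n → ∀ w : ℂ, ‖w‖ = r₂ ^ n →
      ∃ y ∈ Sp, ε n * y ^ n = w := by
    intro n hn w hw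
    have hεn := hε n hn
    have hεne : ε n ≠ 0 := by
      rcases hεn with h | h <;> rw [h] <;> norm_num
    obtain ⟨y, hy⟩ := IsAlgClosed.exists_pow_nat_eq (w / ε n) (by omega : 0 < n)
    have hynorm : ‖y‖ = r₂ := by
      have h1 : ‖y‖ ^ n = ‖w / ε n‖ := by rw [← hy, norm_pow]
      rw [norm_div, hw, norm_eps hεn, div_one] at h1
      exact (pow_left_inj₀ (norm_nonneg y) hr₂0.le (by omega)).mp h1
    refine ⟨y, mem_sphere_zero_iff_norm.mpr hynorm, ?_⟩
    rw [hy, mul_div_cancel₀ _ hεne]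
  -- coefficient bound
  have hαb : ∀ n : ℕ, N₀ + 1 ≤ n → ‖α n‖ * r₂ ^ n ≤ 10 := by
    intro n hn
    have hn1 : 1 ≤ n := by omega
    set t := r₂ ^ n with htdef
    have ht0 : 0 < t := pow_pos hr₂0 n
    have ht1 : t < 1 := pow_lt_one₀ hr₂0.le hr₂1 (by omega)
    have h1 : ‖((1 - t : ℝ) : ℂ) ^ (α n) - 1‖ ≤ 1/2 := by
      obtain ⟨y, hyS, hyval⟩ := hroot n hn1 (-(t : ℂ)) (by
        rw [norm_neg, Complex.norm_real, Real.norm_eq_abs, abs_of_pos ht0])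
      have := hq n hn y hyS
      rw [hyval] at this
      convert this using 3
      push_cast
      ring
    have h2 : ‖((1 : ℂ) + (t:ℝ) * Complex.I) ^ (α n) - 1‖ ≤ 1/2 := by
      obtain ⟨y, hyS, hyval⟩ := hroot n hn1 ((t : ℂ) * Complex.I) (by
        rw [norm_mul, Complex.norm_real, Complex.norm_I, mul_one,
          Real.norm_eq_abs, abs_of_pos ht0])
      have := hq n hn y hyS
      rw [hyval] at this
      exact this
    exact key_est ht0 ht1 h1 h2
  -- summability
  have hsr₂' : s / r₂ < 1 := by rw [div_lt_one hr₂0]; exact hsr₂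
  have hsr₂0 : 0 ≤ s / r₂ := div_nonneg hs0 hr₂0.le
  have hbound : ∀ n : ℕ, N₀ + 1 ≤ n → ‖α n * z ^ n‖ ≤ 10 * (s / r₂) ^ n := by
    intro n hn
    have hr₂n : r₂ ^ n ≠ 0 := pow_ne_zero n hr₂0.ne'
    have heq : ‖α n * z ^ n‖ = (‖α n‖ * r₂ ^ n) * (s / r₂) ^ n := by
      rw [norm_mul, norm_pow, ← hsdef]
      have hdp : (s / r₂) ^ n = s ^ n / r₂ ^ n := div_pow s r₂ n
      rw [hdp, mul_assoc]
      congr 1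
      calc s ^ n = r₂ ^ n * s ^ n / r₂ ^ n := (mul_div_cancel_left₀ _ hr₂n).symm
      _ = r₂ ^ n * (s ^ n / r₂ ^ n) := mul_div_assoc _ _ _
    rw [heq]
    exact mul_le_mul_of_nonneg_right (hαb n hn) (by positivity)
  rw [← summable_nat_add_iff (N₀ + 1)]
  apply Summable.of_nonneg_of_le (fun _ => norm_nonneg _)
    (fun k => hbound (k + (N₀ + 1)) (by omega))
  have hgeo : Summable (fun k : ℕ => (10 * (s / r₂) ^ (N₀ + 1)) * (s / r₂) ^ k) :=
    (summable_geometric_of_lt_one hsr₂0 hsr₂').mul_left _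
  apply hgeo.congr
  intro k
  rw [pow_add]
  ring

theorem stmt_1 (R : ℝ) (hR0 : 0 < R) (hR1 : R ≤ 1)
    (ε : ℕ → ℂ) (hε : ∀ n ≥ 1, ε n = 1 ∨ ε n = -1) (α : ℕ → ℂ) :
    ((∃ f : ℂ → ℂ, ∀ K ⊆ Metric.ball (0 : ℂ) R, IsCompact K →
        TendstoUniformlyOn
          (fun N z => ∏ n ∈ Finset.Icc 1 N, (1 + ε n * z ^ n) ^ (α n)) f atTop K) ↔
      (∀ z ∈ Metric.ball (0 : ℂ) R,
        ∃ l : ℂ, Tendsto (fun N => ∑ n ∈ Finset.Icc 1 N, α n * z ^ n) atTop (𝓝 l)))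
    ∧
    ((∃ f : ℂ → ℂ, ∀ K ⊆ Metric.ball (0 : ℂ) R, IsCompact K →
        TendstoUniformlyOn
          (fun N z => ∏ n ∈ Finset.Icc 1 N, (1 + ε n * z ^ n) ^ (α n)) f atTop K) →
      ∀ z ∈ Metric.ball (0 : ℂ) R, Summable (fun n => ‖α n * z ^ n‖)) := by
  constructor
  · constructor
    · rintro ⟨f, hf⟩ z hz
      exact sum_conv (fwd R hR0 hR1 ε hε α f hf z hz)
    · exact bwd R hR0 hR1 ε hε α
  · rintro ⟨f, hf⟩ z hz
    exact fwd R hR0 hR1 ε hε α f hf z hz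
end

section
/- Let 0 < R ≤ 1, let (ε_n) be a sequence with ε_n ∈ {1,−1} for all n ≥ 1, and let (α_n) be a sequence of complex numbers. Then the partial products ∏_{n=1}^{N} (1+ε_n z^n)^{α_n} converge compactly on the disk |z| < R (as N → ∞) if and only if the series ∑_{n=1}^{∞} α_n·Log(1+ε_n z^n) converges compactly on the disk |z| < R; moreover, in that case this series converges absolutely at every point z with |z| < R. -/
open Filter Topology Finset Metric

namespace Stmt2Aux

noncomputable def S (ε α : ℕ → ℂ) (N : ℕ) (z : ℂ) : ℂ :=
  ∑ n ∈ Finset.Icc 1 N, α n * Complex.log (1 + ε n * z ^ n)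

noncomputable def Q (ε α : ℕ → ℂ) (N : ℕ) (z : ℂ) : ℂ := Complex.exp (S ε α N z)

variable {ε α : ℕ → ℂ}

lemma eps_norm (hε : ∀ n ≥ 1, ε n = 1 ∨ ε n = -1) {n : ℕ} (hn : 1 ≤ n) : ‖ε n‖ = 1 := by
  rcases hε n hn with h | h <;> simp [h]

lemma base_small (hε : ∀ n ≥ 1, ε n = 1 ∨ ε n = -1) {n : ℕ} (hn : 1 ≤ n) {z : ℂ}
    (hz : ‖z‖ < 1) : ‖ε n * z ^ n‖ < 1 := by
  rw [norm_mul, eps_norm hε hn, one_mul, norm_pow]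
  calc ‖z‖ ^ n ≤ ‖z‖ ^ 1 := pow_le_pow_of_le_one (norm_nonneg z) hz.le hn
  _ = ‖z‖ := pow_one _
  _ < 1 := hz

lemma mem_slitPlane_of_small {w : ℂ} (hw : ‖w‖ < 1) : 1 + w ∈ Complex.slitPlane := by
  rw [Complex.mem_slitPlane_iff]
  left
  have h1 : |w.re| ≤ ‖w‖ := by
    exact Complex.abs_re_le_norm w
  have h2 := neg_abs_le w.re
  simp only [Complex.add_re, Complex.one_re]
  linarith

lemma ne_zero_of_small {w : ℂ} (hw : ‖w‖ < 1) : 1 + w ≠ 0 :=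
  Complex.slitPlane_ne_zero (mem_slitPlane_of_small hw)

lemma prod_eq_Q (hε : ∀ n ≥ 1, ε n = 1 ∨ ε n = -1) (N : ℕ) {z : ℂ} (hz : ‖z‖ < 1) :
    ∏ n ∈ Finset.Icc 1 N, (1 + ε n * z ^ n) ^ (α n) = Q ε α N z := by
  rw [Q, S, Complex.exp_sum]
  refine Finset.prod_congr rfl fun n hn => ?_
  have hn1 : 1 ≤ n := (Finset.mem_Icc.mp hn).1
  rw [Complex.cpow_def_of_ne_zero (ne_zero_of_small (base_small hε hn1 hz)), mul_comm]

lemma S_diffOn (hε : ∀ n ≥ 1, ε n = 1 ∨ ε n = -1) (N : ℕ) :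
    DifferentiableOn ℂ (S ε α N) (ball (0:ℂ) 1) := by
  apply DifferentiableOn.fun_sum
  intro n hn
  have hn1 : 1 ≤ n := (Finset.mem_Icc.mp hn).1
  intro z hz
  have hz1 : ‖z‖ < 1 := by simpa using hz
  apply DifferentiableAt.differentiableWithinAt
  apply DifferentiableAt.const_mul
  have hbase : DifferentiableAt ℂ (fun z : ℂ => 1 + ε n * z ^ n) z := by fun_prop
  exact hbase.clog (mem_slitPlane_of_small (base_small hε hn1 hz1))

lemma S_contOn (hε : ∀ n ≥ 1, ε n = 1 ∨ ε n = -1) (N : ℕ) :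
    ContinuousOn (S ε α N) (ball (0:ℂ) 1) :=
  (S_diffOn hε N).continuousOn

lemma Q_diffOn (hε : ∀ n ≥ 1, ε n = 1 ∨ ε n = -1) (N : ℕ) :
    DifferentiableOn ℂ (Q ε α N) (ball (0:ℂ) 1) :=
  (S_diffOn hε N).cexp

lemma S_zero (N : ℕ) : S ε α N 0 = 0 := by
  rw [S]
  refine Finset.sum_eq_zero fun n hn => ?_
  have hn1 : 1 ≤ n := (Finset.mem_Icc.mp hn).1
  rw [zero_pow (by omega), mul_zero, add_zero, Complex.log_one, mul_zero]

lemma Q_zero (N : ℕ) : Q ε α N 0 = 1 := by rw [Q, S_zero, Complex.exp_zero]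

lemma exp_one_discrete_aux {a c : ℂ} (ha : Complex.exp a = 1) (hc : Complex.exp c = 1)
    (h : dist a c < 6) : a = c := by
  obtain ⟨m, rfl⟩ := Complex.exp_eq_one_iff.mp ha
  obtain ⟨k, rfl⟩ := Complex.exp_eq_one_iff.mp hc
  have hmk : (m : ℂ) * (2 * Real.pi * Complex.I) - (k : ℂ) * (2 * Real.pi * Complex.I)
      = ((m - k : ℤ) : ℂ) * (2 * Real.pi * Complex.I) := by push_cast; ring
  have h2pi : ‖(2 * (Real.pi : ℂ) * Complex.I)‖ = 2 * Real.pi := by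
    simp [norm_mul, Complex.norm_I, Complex.norm_real, abs_of_pos Real.pi_pos]
  have hd : dist ((m : ℂ) * (2 * Real.pi * Complex.I)) ((k : ℂ) * (2 * Real.pi * Complex.I))
      = |((m - k : ℤ) : ℝ)| * (2 * Real.pi) := by
    rw [dist_eq_norm, hmk, norm_mul, Complex.norm_intCast, h2pi]
  by_contra hne
  have hmk' : m ≠ k := by
    intro h'; exact hne (by rw [h'])
  have h1 : (1 : ℝ) ≤ |((m - k : ℤ) : ℝ)| := by
    rw [← Int.cast_abs]
    exact_mod_cast Int.one_le_abs (sub_ne_zero.mpr hmk')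
  have hpi := Real.pi_gt_three
  have : (6 : ℝ) ≤ |((m - k : ℤ) : ℝ)| * (2 * Real.pi) := by nlinarith
  rw [hd] at h
  linarith

instance : DiscreteTopology ({c : ℂ | Complex.exp c = 1} : Set ℂ) := by
  rw [discreteTopology_iff_isOpen_singleton]
  rintro ⟨c, hc⟩
  have heq : {(⟨c, hc⟩ : ({c : ℂ | Complex.exp c = 1} : Set ℂ))} =
      (Subtype.val) ⁻¹' (Metric.ball c 6) := by
    ext ⟨a, ha⟩
    simp only [Set.mem_singleton_iff, Set.mem_preimage, Metric.mem_ball, Subtype.mk.injEq]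
    constructor
    · rintro rfl; simp
    · intro h; exact exp_one_discrete_aux ha hc h
  rw [heq]
  exact Metric.isOpen_ball.preimage continuous_subtype_val

/-- Branch selection: if `w` is continuous on a closed ball centered at `0`,
vanishes at `0`, and `exp (w z)` stays close to `1`, then `w z = log (exp (w z))`. -/
lemma branch {r : ℝ} {w : ℂ → ℂ} (hw : ContinuousOn w (closedBall (0:ℂ) r))
    (hw0 : w 0 = 0) (hsmall : ∀ z ∈ closedBall (0:ℂ) r, ‖Complex.exp (w z) - 1‖ < 1/2) :
    ∀ z ∈ closedBall (0:ℂ) r, w z = Complex.log (Complex.exp (w z)) := by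
  rcases le_or_gt r 0 with hr | hr
  · intro z hz
    rcases lt_or_eq_of_le hr with hr' | hr'
    · exact absurd hz (by simp [Metric.closedBall_eq_empty.mpr hr'])
    · have hz0 : z = 0 := by
        have h := mem_closedBall_zero_iff.mp hz
        rw [hr'] at h
        exact norm_le_zero_iff.mp h
      subst hz0
      rw [hw0, Complex.exp_zero, Complex.log_one]
  · have h0mem : (0:ℂ) ∈ closedBall (0:ℂ) r := by simp [hr.le]
    set v : ℂ → ℂ := fun z => w z - Complex.log (Complex.exp (w z)) with hv
    have hslit : ∀ z ∈ closedBall (0:ℂ) r, Complex.exp (w z) ∈ Complex.slitPlane := by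
      intro z hz
      have h' : Complex.exp (w z) = 1 + (Complex.exp (w z) - 1) := by ring
      rw [h']
      exact mem_slitPlane_of_small (lt_trans (hsmall z hz) (by norm_num))
    have hvcont : ContinuousOn v (closedBall (0:ℂ) r) := by
      apply hw.sub
      exact ContinuousOn.clog hw.cexp hslit
    have hmaps : Set.MapsTo v (closedBall (0:ℂ) r) {c : ℂ | Complex.exp c = 1} := by
      intro z hz
      have hne : Complex.exp (w z) ≠ 0 := Complex.exp_ne_zero _
      simp only [Set.mem_setOf_eq, hv]
      rw [Complex.exp_sub, Complex.exp_log hne, div_self hne]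
    intro z hz
    have hconst : v z = v 0 :=
      (convex_closedBall (0:ℂ) r).isPreconnected.constant_of_mapsTo ⟨inferInstance⟩ hvcont hmaps hz h0mem
    have hv0 : v 0 = 0 := by
      simp [hv, hw0, Complex.exp_zero, Complex.log_one]
    have hz0 : v z = 0 := by rw [hconst, hv0]
    exact sub_eq_zero.mp hz0
/-- Hurwitz-type lemma: a compact-uniform limit of nonvanishing holomorphic functions
on the ball which equals `1` at the center is nonvanishing. -/
lemma limit_ne_zero {R : ℝ} (hR0 : 0 < R) {F : ℕ → ℂ → ℂ} {f : ℂ → ℂ}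
    (hFd : ∀ N, DifferentiableOn ℂ (F N) (ball (0:ℂ) R))
    (hFne : ∀ N z, F N z ≠ 0)
    (hconv : ∀ K ⊆ ball (0:ℂ) R, IsCompact K → TendstoUniformlyOn F f atTop K)
    (hf0 : f 0 = 1) : ∀ z ∈ ball (0:ℂ) R, f z ≠ 0 := by
  have hopen : IsOpen (ball (0:ℂ) R) := isOpen_ball
  have htlu : TendstoLocallyUniformlyOn F f atTop (ball (0:ℂ) R) :=
    (tendstoLocallyUniformlyOn_iff_forall_isCompact hopen).mpr hconv
  have hfd : DifferentiableOn ℂ f (ball (0:ℂ) R) :=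
    htlu.differentiableOn (Eventually.of_forall hFd) hopen
  have han : AnalyticOnNhd ℂ f (ball (0:ℂ) R) := hfd.analyticOnNhd hopen
  have h0mem : (0:ℂ) ∈ ball (0:ℂ) R := by simp [hR0]
  intro z0 hz0 hfz0
  -- zeros are isolated
  have hnotfreq : ¬ (∃ᶠ z in 𝓝[≠] z0, f z = 0) := by
    intro hfreq
    have := (han.eqOn_zero_of_preconnected_of_frequently_eq_zero
      (convex_ball (0:ℂ) R).isPreconnected hz0 hfreq) h0mem
    rw [hf0] at this
    exact one_ne_zero this
  have hev : ∀ᶠ z in 𝓝[≠] z0, f z ≠ 0 := by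
    rcases (han z0 hz0).eventually_eq_zero_or_eventually_ne_zero with h | h
    · exact absurd ((h.filter_mono nhdsWithin_le_nhds).frequently) hnotfreq
    · exact h
  -- extract a punctured-neighborhood radius
  rw [eventually_nhdsWithin_iff, Metric.eventually_nhds_iff] at hev
  obtain ⟨ρ0, hρ0, hball⟩ := hev
  set ρ : ℝ := min (ρ0 / 2) ((R - ‖z0‖) / 2) with hρdef
  have hz0R : ‖z0‖ < R := mem_ball_zero_iff.mp hz0
  have hρpos : 0 < ρ := lt_min (by linarith) (by linarith)
  have hsub : closedBall z0 ρ ⊆ ball (0:ℂ) R := by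
    intro z hz
    rw [mem_closedBall] at hz
    rw [mem_ball_zero_iff]
    calc ‖z‖ = ‖z0 + (z - z0)‖ := by ring_nf
    _ ≤ ‖z0‖ + ‖z - z0‖ := norm_add_le _ _
    _ ≤ ‖z0‖ + ρ := by
        have : ‖z - z0‖ = dist z z0 := (dist_eq_norm z z0).symm
        linarith [hz, this ▸ hz]
    _ ≤ ‖z0‖ + (R - ‖z0‖) / 2 := by linarith [min_le_right (ρ0/2) ((R - ‖z0‖)/2)]
    _ < R := by linarith
  have hsphne : ∀ z ∈ sphere z0 ρ, f z ≠ 0 := by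
    intro z hz
    rw [mem_sphere] at hz
    apply hball
    · rw [hz]
      calc ρ ≤ ρ0 / 2 := min_le_left _ _
      _ < ρ0 := by linarith
    · rw [Set.mem_compl_singleton_iff]
      intro h
      subst h
      simp at hz
      linarith [hρpos, hz]
  -- minimum of ‖f‖ on the sphere
  have hsphcompact : IsCompact (sphere z0 ρ) := isCompact_sphere _ _
  have hsphsub : sphere z0 ρ ⊆ ball (0:ℂ) R := sphere_subset_closedBall.trans hsub
  have hsphnonempty : (sphere z0 ρ).Nonempty :=
    NormedSpace.sphere_nonempty.mpr hρpos.le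
  obtain ⟨z1, hz1mem, hz1min⟩ :=
    hsphcompact.exists_isMinOn hsphnonempty ((hfd.continuousOn.mono hsphsub).norm)
  set δ : ℝ := ‖f z1‖ with hδdef
  have hδpos : 0 < δ := norm_pos_iff.mpr (hsphne z1 hz1mem)
  -- choose N with uniform approximation on the closed ball
  have hcb : TendstoUniformlyOn F f atTop (closedBall z0 ρ) :=
    hconv _ hsub (isCompact_closedBall _ _)
  rw [Metric.tendstoUniformlyOn_iff] at hcb
  obtain ⟨N, hN⟩ := (hcb (δ/2) (by linarith)).exists
  -- maximum principle for 1/(F N)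
  have hFNlower : ∀ z ∈ sphere z0 ρ, δ/2 ≤ ‖F N z‖ := by
    intro z hz
    have h1 : dist (f z) (F N z) < δ/2 := hN z (sphere_subset_closedBall hz)
    have h2 : δ ≤ ‖f z‖ := hz1min hz
    have h3 : ‖f z‖ - ‖F N z‖ ≤ ‖f z - F N z‖ := norm_sub_norm_le _ _
    rw [dist_eq_norm] at h1
    linarith
  have hg : DifferentiableOn ℂ (fun z => (F N z)⁻¹) (ball (0:ℂ) R) :=
    (hFd N).inv (fun z _ => hFne N z)
  have hgcl : DiffContOnCl ℂ (fun z => (F N z)⁻¹) (ball z0 ρ) := by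
    apply DifferentiableOn.diffContOnCl
    apply hg.mono
    rw [closure_ball z0 hρpos.ne']
    exact hsub
  have hmax : ‖(F N z0)⁻¹‖ ≤ (δ/2)⁻¹ := by
    apply Complex.norm_le_of_forall_mem_frontier_norm_le isBounded_ball hgcl
    · intro z hz
      rw [frontier_ball z0 hρpos.ne'] at hz
      rw [norm_inv]
      exact inv_anti₀ (by linarith) (hFNlower z hz)
    · rw [closure_ball z0 hρpos.ne']
      exact mem_closedBall_self hρpos.le
  have hFNz0 : δ/2 ≤ ‖F N z0‖ := by
    rw [norm_inv] at hmax
    have hne : F N z0 ≠ 0 := hFne N z0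
    have hpos : 0 < ‖F N z0‖ := norm_pos_iff.mpr hne
    rw [inv_le_inv₀ (by positivity) (by linarith)] at hmax  -- may need fixing
    exact hmax
  have hclose : dist (f z0) (F N z0) < δ/2 := hN z0 (mem_closedBall_self hρpos.le)
  rw [hfz0, dist_eq_norm, zero_sub, norm_neg] at hclose
  linarith
lemma S_uniformCauchy {R : ℝ} (hR0 : 0 < R) (hR1 : R ≤ 1)
    (hε : ∀ n ≥ 1, ε n = 1 ∨ ε n = -1) {f : ℂ → ℂ}
    (hf : ∀ K ⊆ ball (0:ℂ) R, IsCompact K → TendstoUniformlyOn (Q ε α) f atTop K)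
    {r : ℝ} (hr0 : 0 ≤ r) (hrR : r < R) :
    UniformCauchySeqOn (S ε α) atTop (closedBall (0:ℂ) r) := by
  have hRsub : ball (0:ℂ) R ⊆ ball (0:ℂ) 1 := ball_subset_ball hR1
  have hK'sub : closedBall (0:ℂ) r ⊆ ball (0:ℂ) R := closedBall_subset_ball hrR
  have hK'sub1 : closedBall (0:ℂ) r ⊆ ball (0:ℂ) 1 := hK'sub.trans hRsub
  -- f 0 = 1
  have hf0 : f 0 = 1 := by
    have h0 : (0:ℂ) ∈ ball (0:ℂ) R := by simp [hR0]
    have := (hf {0} (by simpa using h0) isCompact_singleton).tendsto_at rfl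
    simp only [Q_zero] at this
    exact tendsto_nhds_unique this tendsto_const_nhds
  -- f is nonvanishing
  have hfne : ∀ z ∈ ball (0:ℂ) R, f z ≠ 0 := by
    apply limit_ne_zero hR0 (fun N => (Q_diffOn hε N).mono hRsub)
      (fun N z => Complex.exp_ne_zero _) hf hf0
  -- continuity of f on the closed ball
  have hfc : ContinuousOn f (closedBall (0:ℂ) r) := by
    apply (hf _ hK'sub (isCompact_closedBall _ _)).continuousOn
    exact (Eventually.of_forall (f := atTop) (p := fun N => ContinuousOn (Q ε α N) (closedBall (0:ℂ) r)) fun N => (S_contOn hε N).cexp.mono hK'sub1).frequently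
  -- minimum of ‖f‖
  have hne : (closedBall (0:ℂ) r).Nonempty := ⟨0, by simp [hr0]⟩
  obtain ⟨z1, hz1, hmin⟩ := (isCompact_closedBall (0:ℂ) r).exists_isMinOn hne hfc.norm
  set c : ℝ := ‖f z1‖ with hcdef
  have hc : 0 < c := norm_pos_iff.mpr (hfne z1 (hK'sub hz1))
  rw [Metric.uniformCauchySeqOn_iff]
  intro η hη
  set θ : ℝ := min (1/3) (η/3) with hθdef
  have hθpos : 0 < θ := lt_min (by norm_num) (by linarith)
  have hθ13 : θ ≤ 1/3 := min_le_left _ _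
  have hθη : θ ≤ η/3 := min_le_right _ _
  set δ : ℝ := min (c/2) (c*θ/4) with hδdef
  have hδpos : 0 < δ := lt_min (by linarith) (by positivity)
  have hδc2 : δ ≤ c/2 := min_le_left _ _
  have hδcθ : δ ≤ c*θ/4 := min_le_right _ _
  have hcb := hf _ hK'sub (isCompact_closedBall (0:ℂ) r)
  rw [Metric.tendstoUniformlyOn_iff] at hcb
  obtain ⟨N₀, hN₀⟩ := Filter.eventually_atTop.mp (hcb δ hδpos)
  refine ⟨N₀, ?_⟩
  have claim : ∀ m n, N₀ ≤ m → m ≤ n → ∀ z ∈ closedBall (0:ℂ) r,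
      dist (S ε α m z) (S ε α n z) < η := by
    intro m n hm hmn z hz
    set w : ℂ → ℂ := fun z => S ε α n z - S ε α m z with hwdef
    have hwcont : ContinuousOn w (closedBall (0:ℂ) r) :=
      ((S_contOn hε n).mono hK'sub1).sub ((S_contOn hε m).mono hK'sub1)
    have hw0 : w 0 = 0 := by simp [hwdef, S_zero]
    have hQm : ∀ x ∈ closedBall (0:ℂ) r, c/2 ≤ ‖Q ε α m x‖ := by
      intro x hx
      have h1 : dist (f x) (Q ε α m x) < δ := hN₀ m hm x hx
      have h2 : c ≤ ‖f x‖ := hmin hx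
      rw [dist_eq_norm] at h1
      have h3 : ‖f x‖ - ‖Q ε α m x‖ ≤ ‖f x - Q ε α m x‖ := norm_sub_norm_le _ _
      linarith
    have hsmall : ∀ x ∈ closedBall (0:ℂ) r, ‖Complex.exp (w x) - 1‖ ≤ θ := by
      intro x hx
      have hQmne : Q ε α m x ≠ 0 := Complex.exp_ne_zero _
      have hexpw : Complex.exp (w x) = Q ε α n x / Q ε α m x := by
        rw [hwdef]
        simp only [Q]
        rw [Complex.exp_sub]
      have heq : Complex.exp (w x) - 1 = (Q ε α n x - Q ε α m x) / Q ε α m x := by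
        rw [hexpw]
        field_simp
      have h2δ : ‖Q ε α n x - Q ε α m x‖ ≤ 2*δ := by
        have h1 : dist (f x) (Q ε α n x) < δ := hN₀ n (hm.trans hmn) x hx
        have h2 : dist (f x) (Q ε α m x) < δ := hN₀ m hm x hx
        calc ‖Q ε α n x - Q ε α m x‖ = dist (Q ε α n x) (Q ε α m x) := (dist_eq_norm _ _).symm
        _ ≤ dist (Q ε α n x) (f x) + dist (f x) (Q ε α m x) := dist_triangle _ _ _
        _ ≤ δ + δ := by rw [dist_comm (Q ε α n x) (f x)]; linarith
        _ = 2*δ := by ring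
      rw [heq, norm_div]
      have hQmx := hQm x hx
      have hdd : ‖Q ε α n x - Q ε α m x‖ / ‖Q ε α m x‖ ≤ (2*δ) / (c/2) :=
        div_le_div₀ (by positivity) h2δ (by linarith) hQmx
      have : (2*δ) / (c/2) ≤ θ := by
        rw [div_le_iff₀ (by linarith)]
        nlinarith
      linarith
    have hsmall' : ∀ x ∈ closedBall (0:ℂ) r, ‖Complex.exp (w x) - 1‖ < 1/2 := by
      intro x hx
      have := hsmall x hx
      linarith [hθ13]
    have hbr := branch hwcont hw0 hsmall' z hz
    have hwz : ‖w z‖ ≤ 3/2 * θ := by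
      have h1 : (1:ℂ) + (Complex.exp (w z) - 1) = Complex.exp (w z) := by ring
      have h2 : ‖Complex.exp (w z) - 1‖ ≤ 1/2 := by linarith [hsmall z hz, hθ13]
      calc ‖w z‖ = ‖Complex.log (Complex.exp (w z))‖ := by rw [← hbr]
      _ = ‖Complex.log (1 + (Complex.exp (w z) - 1))‖ := by rw [h1]
      _ ≤ 3/2 * ‖Complex.exp (w z) - 1‖ := Complex.norm_log_one_add_half_le_self h2
      _ ≤ 3/2 * θ := by linarith [hsmall z hz]
    rw [dist_eq_norm]
    have : ‖S ε α m z - S ε α n z‖ = ‖w z‖ := by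
      rw [hwdef]; exact (norm_sub_rev _ _)
    rw [this]
    linarith
  intro m hm n hn z hz
  rcases le_total m n with h | h
  · exact claim m n hm h z hz
  · rw [dist_comm]
    exact claim n m hn h z hz
lemma log_lb {x : ℝ} (hx0 : 0 ≤ x) (hx1 : x ≤ 1) : x / 2 ≤ Real.log (1 + x) := by
  have hpos : (0:ℝ) < 1 + x := by linarith
  have h1 := Real.log_le_sub_one_of_pos (inv_pos.mpr hpos)
  rw [Real.log_inv] at h1
  have h3 : (1:ℝ)/(1+x) ≤ 1 - x/2 := by
    rw [div_le_iff₀ hpos]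
    nlinarith
  rw [one_div] at h3
  linarith

set_option maxHeartbeats 2000000 in
lemma summable_log {R : ℝ} (hR0 : 0 < R) (hR1 : R ≤ 1)
    (hε : ∀ n ≥ 1, ε n = 1 ∨ ε n = -1) {f : ℂ → ℂ}
    (hf : ∀ K ⊆ ball (0:ℂ) R, IsCompact K → TendstoUniformlyOn (Q ε α) f atTop K) :
    ∀ z ∈ ball (0:ℂ) R, Summable (fun n => ‖α n * Complex.log (1 + ε n * z ^ n)‖) := by
  intro z hz
  set ρ : ℝ := ‖z‖ with hρdef
  have hρ0 : 0 ≤ ρ := norm_nonneg z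
  have hρR : ρ < R := mem_ball_zero_iff.mp hz
  set r : ℝ := (ρ + R) / 2 with hrdef
  have hr0 : 0 < r := by positivity
  have hρr : ρ < r := by rw [hrdef]; linarith
  have hrR : r < R := by rw [hrdef]; linarith
  have hr1 : r < 1 := lt_of_lt_of_le hrR hR1
  have hUC := S_uniformCauchy hR0 hR1 hε hf hr0.le hrR
  rw [Metric.uniformCauchySeqOn_iff] at hUC
  obtain ⟨N₀, hN₀⟩ := hUC 1 one_pos
  -- terms are uniformly ≤ 1 on the closed ball for n > N₀
  have hterm : ∀ n, N₀ + 1 ≤ n → ∀ x ∈ closedBall (0:ℂ) r,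
      ‖α n * Complex.log (1 + ε n * x ^ n)‖ ≤ 1 := by
    intro n hn x hx
    obtain ⟨k, rfl⟩ : ∃ k, n = k + 1 := ⟨n - 1, by omega⟩
    have hk : N₀ ≤ k := by omega
    have hd := hN₀ k hk (k+1) (by omega) x hx
    have hsum : S ε α (k+1) x = S ε α k x + α (k+1) * Complex.log (1 + ε (k+1) * x ^ (k+1)) := by
      rw [S, S, Finset.sum_Icc_succ_top (by omega : 1 ≤ k + 1)]
    rw [dist_eq_norm, hsum] at hd
    simp only [sub_add_cancel_left, norm_neg] at hd
    -- hd : ‖α (k+1) * log (...)‖ < 1  (after simplification)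
    have : S ε α k x - (S ε α k x + α (k+1) * Complex.log (1 + ε (k+1) * x ^ (k+1)))
        = -(α (k+1) * Complex.log (1 + ε (k+1) * x ^ (k+1))) := by ring
    linarith [hd]
  -- ‖α n‖ * r ^ n ≤ 2 for n > N₀
  have hαbound : ∀ n, N₀ + 1 ≤ n → 1 ≤ n → ‖α n‖ * r ^ n ≤ 2 := by
    intro n hn hn1
    -- choose a point x on the circle of radius r with ε n * x ^ n = r ^ n
    obtain ⟨x, hxr, hxval⟩ : ∃ x : ℂ, ‖x‖ = r ∧ ε n * x ^ n = ((r ^ n : ℝ) : ℂ) := by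
      rcases hε n hn1 with h1 | h1
      · refine ⟨(r : ℂ), by simp [Complex.norm_real, abs_of_nonneg hr0.le], ?_⟩
        rw [h1, one_mul]
        push_cast
        ring
      · refine ⟨(r : ℂ) * Complex.exp ((Real.pi / n : ℝ) * Complex.I), ?_, ?_⟩
        · rw [norm_mul]
          rw [Complex.norm_exp_ofReal_mul_I]
          simp [Complex.norm_real, abs_of_nonneg hr0.le]
        · have hne : (n : ℝ) ≠ 0 := by positivity
          have hnc : (n : ℂ) ≠ 0 := Nat.cast_ne_zero.mpr (by omega)
          have hexp : Complex.exp ((Real.pi / n : ℝ) * Complex.I) ^ n = -1 := by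
            rw [← Complex.exp_nat_mul]
            have harg : (n : ℂ) * ((Real.pi / n : ℝ) * Complex.I) = (Real.pi : ℂ) * Complex.I := by
              push_cast
              field_simp
            rw [harg, Complex.exp_pi_mul_I]
          rw [h1, mul_pow, hexp]
          push_cast
          ring
    have hxmem : x ∈ closedBall (0:ℂ) r := by
      rw [mem_closedBall_zero_iff, hxr]
    have h1 := hterm n (by omega) x hxmem
    have hlogval : ‖Complex.log (1 + ε n * x ^ n)‖ = Real.log (1 + r ^ n) := by
      rw [hxval]
      have : (1 : ℂ) + ((r ^ n : ℝ) : ℂ) = ((1 + r ^ n : ℝ) : ℂ) := by push_cast; ring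
      rw [this, ← Complex.ofReal_log (by positivity)]
      rw [Complex.norm_real]
      exact abs_of_nonneg (Real.log_nonneg (by nlinarith [pow_nonneg hr0.le n]))
    rw [norm_mul, hlogval] at h1
    have hrn1 : r ^ n ≤ 1 := by
      calc r ^ n ≤ 1 ^ n := pow_le_pow_left₀ hr0.le hr1.le n
      _ = 1 := one_pow n
    have hlb := log_lb (pow_nonneg hr0.le n) hrn1
    have hα0 : 0 ≤ ‖α n‖ := norm_nonneg _
    nlinarith
  -- geometric comparison at z
  have hgeo0 : 0 ≤ ρ / r := by positivity
  have hgeo1 : ρ / r < 1 := (div_lt_one hr0).mpr hρr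
  obtain ⟨N₂, hN₂⟩ := Filter.eventually_atTop.mp
    ((tendsto_pow_atTop_nhds_zero_of_lt_one hρ0 (lt_of_lt_of_le hρR hR1)).eventually_lt_const
      (by norm_num : (0:ℝ) < 1/2))
  set N₃ : ℕ := max (N₀ + 1) (max N₂ 1) with hN₃def
  rw [← summable_nat_add_iff N₃]
  apply Summable.of_nonneg_of_le (f := fun k => (3 * (ρ/r) ^ N₃) * (ρ/r) ^ k)
    (fun k => norm_nonneg _)
  · intro k
    set n : ℕ := k + N₃ with hndef
    have hn1 : 1 ≤ n := by omega
    have hnN₀ : N₀ + 1 ≤ n := by omega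
    have hnN₂ : N₂ ≤ n := by omega
    have hρn : ρ ^ n < 1/2 := hN₂ n hnN₂
    have hnorm : ‖ε n * z ^ n‖ = ρ ^ n := by
      rw [norm_mul, eps_norm hε hn1, one_mul, norm_pow]
    have hlog : ‖Complex.log (1 + ε n * z ^ n)‖ ≤ 3/2 * ρ ^ n := by
      have := Complex.norm_log_one_add_half_le_self (z := ε n * z ^ n)
        (by rw [hnorm]; linarith)
      rw [hnorm] at this
      exact this
    have hαr : ‖α n‖ * r ^ n ≤ 2 := hαbound n hnN₀ hn1
    have hsplit : ρ ^ n = (ρ/r) ^ n * r ^ n := by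
      rw [div_pow]
      field_simp
    calc ‖α n * Complex.log (1 + ε n * z ^ n)‖
        = ‖α n‖ * ‖Complex.log (1 + ε n * z ^ n)‖ := norm_mul _ _
      _ ≤ ‖α n‖ * (3/2 * ρ ^ n) := by
          apply mul_le_mul_of_nonneg_left hlog (norm_nonneg _)
      _ = 3/2 * (‖α n‖ * r ^ n) * (ρ/r) ^ n := by rw [hsplit]; ring
      _ ≤ 3/2 * 2 * (ρ/r) ^ n := by
          apply mul_le_mul_of_nonneg_right _ (pow_nonneg hgeo0 n)
          linarith
      _ = 3 * (ρ/r) ^ n := by ring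
      _ = (3 * (ρ/r) ^ N₃) * (ρ/r) ^ k := by rw [hndef, pow_add]; ring
  · exact (summable_geometric_of_lt_one hgeo0 hgeo1).mul_left _
lemma sum_converges {R : ℝ} (hR0 : 0 < R) (hR1 : R ≤ 1)
    (hε : ∀ n ≥ 1, ε n = 1 ∨ ε n = -1) {f : ℂ → ℂ}
    (hf : ∀ K ⊆ ball (0:ℂ) R, IsCompact K → TendstoUniformlyOn (Q ε α) f atTop K) :
    ∃ h : ℂ → ℂ, ∀ K ⊆ ball (0:ℂ) R, IsCompact K →
      TendstoUniformlyOn (S ε α) h atTop K := by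
  set h : ℂ → ℂ := fun z => limUnder atTop (fun N => S ε α N z) with hhdef
  refine ⟨h, ?_⟩
  intro K hK hKc
  rcases K.eq_empty_or_nonempty with rfl | hKne
  · exact tendstoUniformlyOn_empty
  obtain ⟨z1, hz1K, hmax⟩ := hKc.exists_isMaxOn hKne continuous_norm.continuousOn
  set r : ℝ := ‖z1‖ with hrdef
  have hrR : r < R := mem_ball_zero_iff.mp (hK hz1K)
  have hKsub : K ⊆ closedBall (0:ℂ) r := by
    intro x hx
    rw [mem_closedBall_zero_iff]
    exact hmax hx
  have hUC := S_uniformCauchy hR0 hR1 hε hf (norm_nonneg z1) hrR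
  have hpt : ∀ x ∈ closedBall (0:ℂ) r,
      Tendsto (fun N => S ε α N x) atTop (𝓝 (h x)) := by
    intro x hx
    have hcs : CauchySeq (fun N => S ε α N x) := by
      rw [Metric.cauchySeq_iff]
      intro η hη
      rw [Metric.uniformCauchySeqOn_iff] at hUC
      obtain ⟨N, hN⟩ := hUC η hη
      exact ⟨N, fun m hm n hn => hN m hm n hn x hx⟩
    obtain ⟨L, hL⟩ := cauchySeq_tendsto_of_complete hcs
    have : h x = L := hL.limUnder_eq
    rw [this]
    exact hL
  exact (hUC.tendstoUniformlyOn_of_tendsto hpt).mono hKsub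

lemma prod_converges {R : ℝ} (hR1 : R ≤ 1)
    (hε : ∀ n ≥ 1, ε n = 1 ∨ ε n = -1) {h : ℂ → ℂ}
    (hs : ∀ K ⊆ ball (0:ℂ) R, IsCompact K → TendstoUniformlyOn (S ε α) h atTop K) :
    ∃ f : ℂ → ℂ, ∀ K ⊆ ball (0:ℂ) R, IsCompact K →
      TendstoUniformlyOn (Q ε α) f atTop K := by
  refine ⟨fun z => Complex.exp (h z), ?_⟩
  intro K hK hKc
  have hK1 : K ⊆ ball (0:ℂ) 1 := hK.trans (ball_subset_ball hR1)
  have hsK := hs K hK hKc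
  rw [Metric.tendstoUniformlyOn_iff] at hsK
  -- bound on h over K
  obtain ⟨N₁, hN₁⟩ := (hsK 1 one_pos).exists
  obtain ⟨M₀, hM₀⟩ := hKc.exists_bound_of_continuousOn ((S_contOn hε N₁).mono hK1)
  set M : ℝ := M₀ + 1 with hMdef
  have hhM : ∀ x ∈ K, ‖h x‖ ≤ M := by
    intro x hx
    have h1 := hN₁ x hx
    rw [dist_eq_norm] at h1
    have h2 : ‖h x‖ - ‖S ε α N₁ x‖ ≤ ‖h x - S ε α N₁ x‖ := norm_sub_norm_le _ _
    have h3 := hM₀ x hx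
    linarith
  rw [Metric.tendstoUniformlyOn_iff]
  intro η hη
  have hexpM : 0 < Real.exp M := Real.exp_pos M
  set δ : ℝ := min 1 (η / (2 * Real.exp M + 1)) with hδdef
  have hδpos : 0 < δ := lt_min one_pos (by positivity)
  have hδ1 : δ ≤ 1 := min_le_left _ _
  have hδη : δ ≤ η / (2 * Real.exp M + 1) := min_le_right _ _
  filter_upwards [hsK δ hδpos] with N hN
  intro x hx
  have hd := hN x hx
  rw [dist_eq_norm] at hd
  have hfact : Complex.exp (h x) - Q ε α N x
      = Complex.exp (h x) * (1 - Complex.exp (S ε α N x - h x)) := by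
    rw [Q, mul_sub, mul_one, ← Complex.exp_add]
    ring_nf
  have hnorm1 : ‖Complex.exp (h x)‖ ≤ Real.exp M := by
    rw [Complex.norm_exp]
    apply Real.exp_le_exp.mpr
    calc (h x).re ≤ |(h x).re| := le_abs_self _
    _ ≤ ‖h x‖ := Complex.abs_re_le_norm _
    _ = ‖h x‖ := rfl
    _ ≤ M := hhM x hx
  have hnorm2 : ‖1 - Complex.exp (S ε α N x - h x)‖ ≤ 2 * ‖S ε α N x - h x‖ := by
    rw [norm_sub_rev]
    have hle : ‖S ε α N x - h x‖ ≤ 1 := by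
      rw [← norm_sub_rev]
      linarith
    have := Complex.norm_exp_sub_one_le hle
    simpa using this
  have hSh : ‖S ε α N x - h x‖ < δ := by
    rw [norm_sub_rev]
    exact hd
  rw [dist_eq_norm, hfact, norm_mul]
  calc ‖Complex.exp (h x)‖ * ‖1 - Complex.exp (S ε α N x - h x)‖
      ≤ Real.exp M * (2 * ‖S ε α N x - h x‖) := by
        apply mul_le_mul hnorm1 hnorm2 (norm_nonneg _) hexpM.le
    _ < Real.exp M * (2 * δ) := by
        apply mul_lt_mul_of_pos_left _ hexpM
        linarith
    _ ≤ η := by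
        have h1 : δ * (2 * Real.exp M + 1) ≤ η := by
          rw [← le_div_iff₀ (by positivity : (0:ℝ) < 2 * Real.exp M + 1)]
          exact hδη
        nlinarith
end Stmt2Aux

open Stmt2Aux in
theorem stmt_2 (R : ℝ) (hR0 : 0 < R) (hR1 : R ≤ 1)
    (ε : ℕ → ℂ) (hε : ∀ n ≥ 1, ε n = 1 ∨ ε n = -1) (α : ℕ → ℂ) :
    ((∃ f : ℂ → ℂ, ∀ K ⊆ Metric.ball (0 : ℂ) R, IsCompact K →
        TendstoUniformlyOn
          (fun N z => ∏ n ∈ Finset.Icc 1 N, (1 + ε n * z ^ n) ^ (α n)) f atTop K) ↔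
      (∃ h : ℂ → ℂ, ∀ K ⊆ Metric.ball (0 : ℂ) R, IsCompact K →
        TendstoUniformlyOn
          (fun N z => ∑ n ∈ Finset.Icc 1 N, α n * Complex.log (1 + ε n * z ^ n)) h atTop K))
    ∧
    ((∃ f : ℂ → ℂ, ∀ K ⊆ Metric.ball (0 : ℂ) R, IsCompact K →
        TendstoUniformlyOn
          (fun N z => ∏ n ∈ Finset.Icc 1 N, (1 + ε n * z ^ n) ^ (α n)) f atTop K) →
      ∀ z ∈ Metric.ball (0 : ℂ) R,
        Summable (fun n => ‖α n * Complex.log (1 + ε n * z ^ n)‖)) := by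
  have hPQ : ∀ f : ℂ → ℂ, (∀ K ⊆ Metric.ball (0 : ℂ) R, IsCompact K →
      TendstoUniformlyOn
        (fun N z => ∏ n ∈ Finset.Icc 1 N, (1 + ε n * z ^ n) ^ (α n)) f atTop K)
      ↔ (∀ K ⊆ Metric.ball (0 : ℂ) R, IsCompact K →
        TendstoUniformlyOn (Q ε α) f atTop K) := by
    intro f
    constructor
    · intro hf K hK hKc
      apply (hf K hK hKc).congr
      filter_upwards with N
      intro z hz
      exact prod_eq_Q hε N (lt_of_lt_of_le (mem_ball_zero_iff.mp (hK hz)) hR1)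
    · intro hf K hK hKc
      apply (hf K hK hKc).congr
      filter_upwards with N
      intro z hz
      exact (prod_eq_Q hε N (lt_of_lt_of_le (mem_ball_zero_iff.mp (hK hz)) hR1)).symm
  refine ⟨⟨?_, ?_⟩, ?_⟩
  · rintro ⟨f, hf⟩
    exact sum_converges hR0 hR1 hε ((hPQ f).mp hf)
  · rintro ⟨h, hs⟩
    obtain ⟨f, hf⟩ := prod_converges hR1 hε (h := h) hs
    exact ⟨f, (hPQ f).mpr hf⟩
  · rintro ⟨f, hf⟩
    exact summable_log hR0 hR1 hε ((hPQ f).mp hf)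
end

section
/- Let (ε_n) be a sequence with ε_n ∈ {1,−1}, let (α_n) be a sequence of complex numbers, and define a sequence (b_n) of complex numbers by b_n = ∑ C(α_1,k_1)·C(α_2,k_2)···C(α_n,k_n)·ε_1^{k_1}·ε_2^{k_2}···ε_n^{k_n}, the sum extending over all tuples (k_1,…,k_n) of non-negative integers with k_1 + 2k_2 + ⋯ + n·k_n = n. Then b_n is an integer for every n ≥ 1 if and only if α_n is an integer for every n ≥ 1. -/
open Finset

lemma prodIntZ (m : ℤ) (k : ℕ) : ∃ c : ℤ, ∏ j ∈ Finset.range k, (m - (j:ℤ)) = c * k.factorial := by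
  refine ⟨Ring.choose m k, ?_⟩
  have h1 : ∏ j ∈ Finset.range k, (m - (j:ℤ)) = (descPochhammer ℤ k).eval m := by
    induction k with
    | zero => simp
    | succ k ih => rw [Finset.prod_range_succ, ih, descPochhammer_succ_right]; simp
  have h2 := Ring.descPochhammer_eq_factorial_smul_choose (R := ℤ) m k
  rw [h1, Polynomial.eval_eq_smeval, h2, nsmul_eq_mul, mul_comm]

lemma termInt (x e : ℂ) (hx : ∃ m : ℤ, x = m) (he : e = 1 ∨ e = -1) (k : ℕ) :
    ∃ c : ℤ, (∏ j ∈ Finset.range k, (x - (j:ℂ))) / (Nat.factorial k) * e ^ k = c := by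
  obtain ⟨m, rfl⟩ := hx
  obtain ⟨c, hc⟩ := prodIntZ m k
  have hf : ((k.factorial : ℂ)) ≠ 0 := Nat.cast_ne_zero.mpr k.factorial_ne_zero
  have hprod : (∏ j ∈ Finset.range k, ((m:ℂ) - (j:ℂ))) = ((c : ℂ) * (k.factorial : ℂ)) := by
    calc (∏ j ∈ Finset.range k, ((m:ℂ) - (j:ℂ)))
        = (((∏ j ∈ Finset.range k, (m - (j:ℤ))) : ℤ) : ℂ) := by push_cast; rfl
      _ = ((c : ℂ) * (k.factorial : ℂ)) := by rw [hc]; push_cast; rfl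
  have hdiv : (∏ j ∈ Finset.range k, ((m:ℂ) - (j:ℂ))) / (k.factorial : ℂ) = (c : ℂ) := by
    rw [hprod, mul_div_assoc, div_self hf, mul_one]
  rcases he with rfl | rfl
  · exact ⟨c, by rw [hdiv, one_pow, mul_one]⟩
  · refine ⟨c * (-1)^k, by rw [hdiv]; push_cast; ring⟩

lemma sumInt {ι : Type*} {s : Finset ι} {f : ι → ℂ} (h : ∀ i ∈ s, ∃ m : ℤ, f i = m) :
    ∃ m : ℤ, ∑ i ∈ s, f i = m := by
  have : ∑ i ∈ s, f i ∈ (⊥ : Subring ℂ) :=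
    sum_mem fun i hi => Subring.mem_bot.2 (by obtain ⟨m, hm⟩ := h i hi; exact ⟨m, hm.symm⟩)
  obtain ⟨m, hm⟩ := Subring.mem_bot.1 this
  exact ⟨m, hm.symm⟩

lemma prodInt {ι : Type*} {s : Finset ι} {f : ι → ℂ} (h : ∀ i ∈ s, ∃ m : ℤ, f i = m) :
    ∃ m : ℤ, ∏ i ∈ s, f i = m := by
  have : ∏ i ∈ s, f i ∈ (⊥ : Subring ℂ) :=
    prod_mem fun i hi => Subring.mem_bot.2 (by obtain ⟨m, hm⟩ := h i hi; exact ⟨m, hm.symm⟩)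
  obtain ⟨m, hm⟩ := Subring.mem_bot.1 this
  exact ⟨m, hm.symm⟩

theorem stmt_5 (ε : ℕ → ℂ) (hε : ∀ n ≥ 1, ε n = 1 ∨ ε n = -1)
    (α : ℕ → ℂ) (b : ℕ → ℂ)
    (hb : ∀ n ≥ 1, b n =
      ∑ κ ∈ Finset.univ.filter
          (fun κ : Fin n → Fin (n + 1) => ∑ i : Fin n, (i.1 + 1) * (κ i).1 = n),
        ∏ i : Fin n,
          ((∏ j ∈ Finset.range (κ i).1, (α (i.1 + 1) - (j : ℂ))) / (Nat.factorial (κ i).1)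
            * ε (i.1 + 1) ^ (κ i).1)) :
    (∀ n ≥ 1, ∃ m : ℤ, b n = (m : ℂ)) ↔ (∀ n ≥ 1, ∃ m : ℤ, α n = (m : ℂ)) := by
  constructor
  · intro hB n
    induction n using Nat.strong_induction_on with
    | _ n IH =>
    intro hn
    have hI : n - 1 < n := by omega
    set I : Fin n := ⟨n - 1, hI⟩ with hIdef
    have hIn : (I : ℕ) + 1 = n := by simp [hIdef]; omega
    set κ₀ : Fin n → Fin (n + 1) := fun i => if i = I then ⟨1, by omega⟩ else ⟨0, by omega⟩
      with hκ₀
    have hmem : κ₀ ∈ Finset.univ.filter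
        (fun κ : Fin n → Fin (n + 1) => ∑ i : Fin n, (i.1 + 1) * (κ i).1 = n) := by
      simp only [Finset.mem_filter, Finset.mem_univ, true_and]
      rw [Fintype.sum_eq_single I (fun i hi => by simp [hκ₀, hi])]
      simp [hκ₀, hIn]
    have hterm0 : (∏ i : Fin n,
        ((∏ j ∈ Finset.range ((κ₀ i).1), (α (i.1 + 1) - (j : ℂ))) / (Nat.factorial ((κ₀ i).1))
          * ε (i.1 + 1) ^ ((κ₀ i).1))) = α n * ε n := by
      rw [Fintype.prod_eq_single I (fun i hi => by simp [hκ₀, hi])]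
      simp [hκ₀, hIn]
    have hrest : ∃ m : ℤ, ∑ κ ∈ (Finset.univ.filter
        (fun κ : Fin n → Fin (n + 1) => ∑ i : Fin n, (i.1 + 1) * (κ i).1 = n)).erase κ₀,
        ∏ i : Fin n,
          ((∏ j ∈ Finset.range ((κ i).1), (α (i.1 + 1) - (j : ℂ))) / (Nat.factorial ((κ i).1))
            * ε (i.1 + 1) ^ ((κ i).1)) = m := by
      apply sumInt
      intro κ hκ
      obtain ⟨hκne, hκf⟩ := Finset.mem_erase.1 hκ
      have hsum : ∑ i : Fin n, (i.1 + 1) * (κ i).1 = n := (Finset.mem_filter.1 hκf).2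
      have hκI : (κ I).1 = 0 := by
        by_contra h0
        apply hκne
        have hs : (I.1 + 1) * (κ I).1 + ∑ i ∈ Finset.univ.erase I, (i.1 + 1) * (κ i).1 = n :=
          (Finset.add_sum_erase Finset.univ (fun i : Fin n => (i.1 + 1) * (κ i).1)
            (Finset.mem_univ I)).trans hsum
        rw [hIn] at hs
        have hle : n * (κ I).1 ≤ n * 1 := by rw [mul_one]; exact Nat.le.intro hs
        have hq : (κ I).1 = 1 := by
          have := Nat.le_of_mul_le_mul_left hle (by omega)
          omega
        rw [hq, mul_one] at hs
        have hz : ∀ i ∈ Finset.univ.erase I, (i.1 + 1) * (κ i).1 = 0 :=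
          Finset.sum_eq_zero_iff.1 (by omega)
        funext i
        by_cases hi : i = I
        · subst hi; exact Fin.ext (by rw [hq]; simp [hκ₀])
        · have h0 := hz i (Finset.mem_erase.2 ⟨hi, Finset.mem_univ i⟩)
          have hki : (κ i).1 = 0 := by
            rcases Nat.mul_eq_zero.1 h0 with h | h
            · omega
            · exact h
          exact Fin.ext (by simp [hκ₀, hi, hki])
      apply prodInt
      intro i _
      by_cases hi : i = I
      · subst hi
        rw [hκI]
        exact ⟨1, by simp⟩
      · have hlt : i.1 + 1 < n := by
          have : i.1 ≠ n - 1 := fun h => hi (Fin.ext (by simp [hIdef, h]))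
          have := i.2; omega
        exact termInt _ _ (IH (i.1 + 1) hlt (by omega)) (hε (i.1 + 1) (by omega)) _
    obtain ⟨S, hS⟩ := hrest
    obtain ⟨B, hBn⟩ := hB n hn
    have key : α n * ε n = ((B : ℂ) - (S : ℂ)) := by
      have h := hb n hn
      rw [← Finset.add_sum_erase _ _ hmem, hterm0, hS, hBn] at h
      linear_combination -h
    rcases hε n hn with he | he
    · exact ⟨B - S, by rw [← mul_one (α n), ← he, key]; push_cast; ring⟩
    · exact ⟨-(B - S), by
        have : α n * ε n * ε n = ((B:ℂ) - S) * ε n := by rw [key]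
        rw [he] at this
        push_cast
        linear_combination this⟩
  · intro hA n hn
    rw [hb n hn]
    apply sumInt
    intro κ _
    apply prodInt
    intro i _
    exact termInt _ _ (hA (i.1 + 1) (by omega)) (hε (i.1 + 1) (by omega)) _
end

section
/- Let (g_n)_{n≥1} be a sequence of complex numbers, let (ε_n) be a sequence with ε_n ∈ {1,−1}, and let (α_n) be the unique sequence of complex numbers satisfying −g_n = ∑_{d | n} d·α_d·(−ε_d)^{n/d−1} for every n ≥ 1. Then |α_n| ≤ n·∑_{k=1}^{n} |g_k| for every n ≥ 1. -/
open Finset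

lemma tele (n : ℕ) (hn : 1 ≤ n) :
    ∑ e ∈ Finset.Icc 2 n, (1 : ℝ) / ((e : ℝ) * ((e : ℝ) - 1)) = 1 - 1 / n := by
  induction n with
  | zero => omega
  | succ m ih =>
    rcases Nat.lt_or_ge m 1 with h | h
    · interval_cases m
      · simp
    · rw [Finset.sum_Icc_succ_top (by omega), ih h]
      have hm0 : (m : ℝ) ≠ 0 := by positivity
      have hm1 : (m : ℝ) + 1 ≠ 0 := by positivity
      push_cast
      field_simp
      ring_nf; rw [mul_inv_cancel₀ hm0]; ring

lemma sq_sum_proper (n : ℕ) (hn : 1 ≤ n) :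
    ∑ d ∈ n.properDivisors, (d : ℝ) ^ 2 ≤ (n : ℝ) ^ 2 - n := by
  have hinj : Set.InjOn (fun d => n / d) (n.properDivisors : Set ℕ) := by
    intro a ha b hb hab
    simp only [Nat.mem_properDivisors, Finset.coe_sort_coe, Finset.mem_coe] at ha hb
    have ha' := ha.1; have hb' := hb.1
    have hab' : n / a = n / b := hab
    have : n / (n / a) = n / (n / b) := by rw [hab']
    rwa [Nat.div_div_self ha' (by omega), Nat.div_div_self hb' (by omega)] at this
  have key : ∑ d ∈ n.properDivisors, (d : ℝ) ^ 2
      = ∑ e ∈ n.properDivisors.image (fun d => n / d), (n : ℝ) ^ 2 / (e : ℝ) ^ 2 := by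
    rw [Finset.sum_image (fun a ha b hb => hinj ha hb)]
    apply Finset.sum_congr rfl
    intro d hd
    simp only [Nat.mem_properDivisors] at hd
    have hd1 : 1 ≤ d := Nat.pos_of_mem_divisors (Nat.mem_divisors.2 ⟨hd.1, by omega⟩)
    have hmul : d * (n / d) = n := Nat.mul_div_cancel' hd.1
    have he1 : 1 ≤ n / d := Nat.one_le_div_iff (by omega) |>.2 (Nat.le_of_lt hd.2)
    have hne : ((n / d : ℕ) : ℝ) ≠ 0 := by positivity
    have hcast : (d : ℝ) * ((n / d : ℕ) : ℝ) = (n : ℝ) := by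
      exact_mod_cast congrArg (Nat.cast : ℕ → ℝ) hmul
    field_simp
    nlinarith [hcast]
  rw [key]
  have hsub : n.properDivisors.image (fun d => n / d) ⊆ Finset.Icc 2 n := by
    intro e he
    simp only [Finset.mem_image, Nat.mem_properDivisors] at he
    obtain ⟨d, ⟨hdvd, hlt⟩, rfl⟩ := he
    have hd1 : 1 ≤ d := Nat.pos_of_mem_divisors (Nat.mem_divisors.2 ⟨hdvd, by omega⟩)
    have he1 : n / d ≤ n := Nat.div_le_self n d
    have he2 : 2 ≤ n / d := by
      rcases Nat.lt_or_ge (n / d) 2 with h | h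
      · exfalso
        have hmul : d * (n / d) = n := Nat.mul_div_cancel' hdvd
        interval_cases h' : (n / d) <;> omega
      · exact h
    exact Finset.mem_Icc.2 ⟨he2, he1⟩
  calc ∑ e ∈ n.properDivisors.image (fun d => n / d), (n : ℝ) ^ 2 / (e : ℝ) ^ 2
      ≤ ∑ e ∈ Finset.Icc 2 n, (n : ℝ) ^ 2 / (e : ℝ) ^ 2 := by
        apply Finset.sum_le_sum_of_subset_of_nonneg hsub
        intro i _ _
        positivity
    _ ≤ ∑ e ∈ Finset.Icc 2 n, (n : ℝ) ^ 2 * (1 / ((e : ℝ) * ((e : ℝ) - 1))) := by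
        apply Finset.sum_le_sum
        intro e he
        have h2 : (2 : ℝ) ≤ (e : ℝ) := by exact_mod_cast (Finset.mem_Icc.1 he).1
        rw [div_eq_mul_one_div]
        apply mul_le_mul_of_nonneg_left _ (by positivity)
        apply one_div_le_one_div_of_le (by nlinarith)
        nlinarith
    _ = (n : ℝ) ^ 2 * (1 - 1 / n) := by rw [← Finset.mul_sum, tele n hn]
    _ ≤ (n : ℝ) ^ 2 - n := by
        have hn' : (1 : ℝ) ≤ n := by exact_mod_cast hn
        have : (n : ℝ) ≠ 0 := by positivity
        have h : (n : ℝ) ^ 2 * (1 - 1 / n) = (n:ℝ)^2 - (n:ℝ)^2/n := by ring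
        rw [h, pow_two, mul_div_assoc, div_self this, mul_one]

theorem stmt_9 (g : ℕ → ℂ) (ε : ℕ → ℂ) (hε : ∀ n ≥ 1, ε n = 1 ∨ ε n = -1)
    (α : ℕ → ℂ)
    (hα : ∀ n ≥ 1, -g n = ∑ d ∈ Nat.divisors n, (d : ℂ) * α d * (-ε d) ^ (n / d - 1)) :
    ∀ n ≥ 1, ‖α n‖ ≤ n * ∑ k ∈ Finset.Icc 1 n, ‖g k‖ := by
  intro n
  induction n using Nat.strong_induction_on with
  | _ n ih =>
  intro hn
  have key := hα n hn
  rw [← Nat.insert_self_properDivisors (by omega : n ≠ 0),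
    Finset.sum_insert Nat.self_notMem_properDivisors] at key
  have hnn : n / n - 1 = 0 := by rw [Nat.div_self (by omega)]
  rw [hnn, pow_zero, mul_one] at key
  have heq : (n : ℂ) * α n
      = -g n - ∑ d ∈ n.properDivisors, (d : ℂ) * α d * (-ε d) ^ (n / d - 1) := by
    linear_combination -key
  set S : ℝ := ∑ k ∈ Finset.Icc 1 n, ‖g k‖ with hS
  have hS0 : 0 ≤ S := Finset.sum_nonneg fun _ _ => norm_nonneg _
  have hgS : ‖g n‖ ≤ S :=
    Finset.single_le_sum (f := fun k => ‖g k‖) (fun _ _ => norm_nonneg _)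
      (Finset.mem_Icc.2 ⟨hn, le_refl n⟩)
  have hterm : ∀ d ∈ n.properDivisors,
      ‖(d : ℂ) * α d * (-ε d) ^ (n / d - 1)‖ ≤ (d : ℝ) ^ 2 * S := by
    intro d hd
    rw [Nat.mem_properDivisors] at hd
    have hd1 : 1 ≤ d := Nat.pos_of_mem_divisors (Nat.mem_divisors.2 ⟨hd.1, by omega⟩)
    have hεd : ‖(-ε d)‖ = 1 := by
      rcases hε d hd1 with h | h <;> simp [h]
    have hαd : ‖α d‖ ≤ (d : ℝ) * ∑ k ∈ Finset.Icc 1 d, ‖g k‖ := ih d hd.2 hd1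
    have hSd : ∑ k ∈ Finset.Icc 1 d, ‖g k‖ ≤ S := by
      apply Finset.sum_le_sum_of_subset_of_nonneg
      · exact Finset.Icc_subset_Icc_right (le_of_lt hd.2)
      · intro _ _ _; exact norm_nonneg _
    calc ‖(d : ℂ) * α d * (-ε d) ^ (n / d - 1)‖
        = (d : ℝ) * ‖α d‖ := by
          rw [norm_mul, norm_mul, norm_pow, hεd, one_pow, mul_one]
          simp
      _ ≤ (d : ℝ) * ((d : ℝ) * S) := by
          apply mul_le_mul_of_nonneg_left _ (by positivity)
          exact hαd.trans (by apply mul_le_mul_of_nonneg_left hSd (by positivity))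
      _ = (d : ℝ) ^ 2 * S := by ring
  have hbound : (n : ℝ) * ‖α n‖ ≤ S + ((n : ℝ) ^ 2 - n) * S := by
    calc (n : ℝ) * ‖α n‖ = ‖(n : ℂ) * α n‖ := by rw [norm_mul]; simp
      _ ≤ ‖g n‖ + ‖∑ d ∈ n.properDivisors, (d : ℂ) * α d * (-ε d) ^ (n / d - 1)‖ := by
          rw [heq]
          refine (norm_sub_le _ _).trans ?_
          rw [norm_neg]
      _ ≤ ‖g n‖ + ∑ d ∈ n.properDivisors, ‖(d : ℂ) * α d * (-ε d) ^ (n / d - 1)‖ := by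
          gcongr
          exact norm_sum_le _ _
      _ ≤ S + ∑ d ∈ n.properDivisors, (d : ℝ) ^ 2 * S :=
          add_le_add hgS (Finset.sum_le_sum hterm)
      _ = S + (∑ d ∈ n.properDivisors, (d : ℝ) ^ 2) * S := by rw [Finset.sum_mul]
      _ ≤ S + ((n : ℝ) ^ 2 - n) * S := by
          gcongr
          exact sq_sum_proper n hn
  have hn1 : (1 : ℝ) ≤ (n : ℝ) := by exact_mod_cast hn
  have hfinal : (n : ℝ) * ‖α n‖ ≤ (n : ℝ) * ((n : ℝ) * S) := by nlinarith
  exact le_of_mul_le_mul_left hfinal (by linarith)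
end

section
/- For every z ∈ ℂ with |z| < 1, the partial products ∏_{n=1}^{N} (1−z^n)^{μ(n)/n} converge as N → ∞ to e^{−z}, where μ is the Möbius function; that is, e^{−z} = ∏_{n=1}^{∞} (1−z^n)^{μ(n)/n}. -/
open Filter Topology Finset ArithmeticFunction
open ArithmeticFunction.Moebius

private lemma aux_summable (z : ℂ) (hz : ‖z‖ < 1) :
    Summable (fun p : ℕ × ℕ => (μ p.1 : ℂ) * (z ^ (p.1 * p.2) / (p.1 * p.2))) := by
  set s : ℝ := Real.sqrt ‖z‖ with hs
  have hs0 : 0 ≤ s := Real.sqrt_nonneg _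
  have hs1 : s < 1 := by
    rw [hs, show (1:ℝ) = Real.sqrt 1 by simp]
    exact Real.sqrt_lt_sqrt (norm_nonneg z) hz
  have hsum : Summable (fun p : ℕ × ℕ => s ^ p.1 * s ^ p.2) :=
    (summable_geometric_of_lt_one hs0 hs1).mul_of_nonneg
      (summable_geometric_of_lt_one hs0 hs1)
      (fun n => pow_nonneg hs0 n) (fun n => pow_nonneg hs0 n)
  refine Summable.of_norm_bounded hsum ?_
  rintro ⟨n, m⟩
  simp only
  rcases Nat.eq_zero_or_pos n with rfl | hn
  · simpa using mul_nonneg (pow_nonneg hs0 0) (pow_nonneg hs0 m)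
  rcases Nat.eq_zero_or_pos m with rfl | hm
  · simpa using mul_nonneg (pow_nonneg hs0 n) (pow_nonneg hs0 0)
  have h1 : ‖(μ n : ℂ)‖ ≤ 1 := by
    rw [show ((μ n : ℤ) : ℂ) = ((μ n : ℤ) : ℂ) from rfl]
    rw [Complex.norm_intCast]
    exact_mod_cast abs_moebius_le_one
  have h2 : ‖z ^ (n * m) / ((n : ℂ) * (m : ℂ))‖ ≤ ‖z‖ ^ (n * m) := by
    rw [show ((n:ℂ) * m) = ((n*m : ℕ) : ℂ) by push_cast; ring,
      norm_div, norm_pow, Complex.norm_natCast]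
    have : (1:ℝ) ≤ (n*m : ℕ) := by exact_mod_cast Nat.one_le_iff_ne_zero.mpr (by positivity)
    calc ‖z‖ ^ (n*m) / ((n*m:ℕ):ℝ) ≤ ‖z‖ ^ (n*m) / 1 :=
          div_le_div_of_nonneg_left (pow_nonneg (norm_nonneg z) _) one_pos this
      _ = ‖z‖ ^ (n*m) := div_one _
  have h3 : ‖z‖ ^ (n * m) ≤ s ^ n * s ^ m := by
    have hzz : ‖z‖ = s ^ 2 := (Real.sq_sqrt (norm_nonneg z)).symm
    rw [hzz, ← pow_mul, ← pow_add]
    exact pow_le_pow_of_le_one hs0 hs1.le (by nlinarith)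
  calc ‖(μ n : ℂ) * (z ^ (n * m) / ((n : ℂ) * (m : ℂ)))‖
      = ‖(μ n : ℂ)‖ * ‖z ^ (n * m) / ((n : ℂ) * (m : ℂ))‖ := norm_mul _ _
    _ ≤ 1 * (‖z‖ ^ (n*m)) := mul_le_mul h1 h2 (norm_nonneg _) zero_le_one
    _ = ‖z‖ ^ (n*m) := one_mul _
    _ ≤ s ^ n * s ^ m := h3

private lemma aux_hasSum (z : ℂ) (hz : ‖z‖ < 1) :
    HasSum (fun n : ℕ => (μ n : ℂ) / n * Complex.log (1 - z ^ n)) (-z) := by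
  set F : ℕ × ℕ → ℂ := fun p => (μ p.1 : ℂ) * (z ^ (p.1 * p.2) / (p.1 * p.2)) with hF_def
  obtain ⟨T, hF⟩ := (aux_summable z hz)
  -- compute T = z by fibering over the product map
  have hfib := hF.tsum_fiberwise (fun p => p.1 * p.2)
  have hTz : T = z := by
    have he : (fun k : ℕ => ∑' (b : (fun p : ℕ × ℕ => p.1 * p.2) ⁻¹' {k}), F b)
        = fun k => if k = 1 then z else 0 := by
      funext k
      rcases Nat.eq_zero_or_pos k with rfl | hk
      · have : ∀ b : (fun p : ℕ × ℕ => p.1 * p.2) ⁻¹' {(0:ℕ)}, F b = 0 := by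
          rintro ⟨⟨n, m⟩, hb⟩
          simp only [Set.mem_preimage, Set.mem_singleton_iff, Nat.mul_eq_zero] at hb
          rcases hb with rfl | rfl <;> simp [hF_def]
        simp [this, tsum_zero]
      · rw [show (fun p : ℕ × ℕ => p.1 * p.2) ⁻¹' {k} = ↑(Nat.divisorsAntidiagonal k) by
            ext p; simp [Nat.mem_divisorsAntidiagonal, hk.ne'],
          Finset.tsum_subtype' (Nat.divisorsAntidiagonal k) F]
        have hstep : ∑ p ∈ Nat.divisorsAntidiagonal k, F p
            = (∑ p ∈ Nat.divisorsAntidiagonal k, (μ p.1 : ℂ)) * (z ^ k / k) := by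
          rw [Finset.sum_mul]
          refine Finset.sum_congr rfl fun p hp => ?_
          have hpk := (Nat.mem_divisorsAntidiagonal.mp hp).1
          simp only [hF_def, ← hpk]
          push_cast
          ring
        rw [hstep]
        have hmz : ∑ p ∈ Nat.divisorsAntidiagonal k, (μ p.1 : ℂ)
            = if k = 1 then 1 else 0 := by
          have h1 : ∑ p ∈ Nat.divisorsAntidiagonal k, (μ p.1 : ℂ)
              = ∑ i ∈ Nat.divisors k, ((μ : ArithmeticFunction ℂ) i) := by
            rw [Nat.sum_divisorsAntidiagonal (fun i _ => (μ i : ℂ))]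
            refine Finset.sum_congr rfl fun i _ => ?_
            simp [intCoe_apply]
          rw [h1, ← coe_mul_zeta_apply, coe_moebius_mul_coe_zeta, one_apply]
        rw [hmz]
        rcases eq_or_ne k 1 with rfl | hk1
        · simp
        · simp [hk1]
    rw [he] at hfib
    exact hfib.unique (hasSum_ite_eq 1 z)
  rw [hTz] at hF
  -- fiber over the first coordinate
  have hcol : ∀ n : ℕ, HasSum (fun m => F (n, m))
      ((μ n : ℂ) / n * (-Complex.log (1 - z ^ n))) := by
    intro n
    rcases Nat.eq_zero_or_pos n with rfl | hn
    · simpa [hF_def] using hasSum_zero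
    · have hzn : ‖z ^ n‖ < 1 := by
        rw [norm_pow]
        exact pow_lt_one₀ (norm_nonneg z) hz hn.ne'
      have h := (Complex.hasSum_taylorSeries_neg_log hzn).mul_left ((μ n : ℂ) / n)
      refine h.congr_fun fun m => ?_
      simp only [hF_def, ← pow_mul]
      ring
  have hrow := hF.prod_fiberwise hcol
  have := hrow.neg
  refine this.congr_fun fun n => ?_
  ring

theorem stmt_14 (z : ℂ) (hz : ‖z‖ < 1) :
    Tendsto (fun N => ∏ n ∈ Finset.Icc 1 N, (1 - z ^ n) ^ ((μ n : ℂ) / n)) atTop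
      (𝓝 (Complex.exp (-z))) := by
  set f : ℕ → ℂ := fun n => (μ n : ℂ) / n * Complex.log (1 - z ^ n) with hf_def
  have hsum := aux_hasSum z hz
  have hrange : Tendsto (fun N => ∑ n ∈ Finset.range (N + 1), f n) atTop (𝓝 (-z)) :=
    hsum.tendsto_sum_nat.comp (tendsto_add_atTop_nat 1)
  have hIcc : ∀ N, ∑ n ∈ Finset.Icc 1 N, f n = ∑ n ∈ Finset.range (N + 1), f n := by
    intro N
    refine Finset.sum_subset (fun x hx => ?_) (fun x hx hx' => ?_)
    · simp only [Finset.mem_Icc] at hx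
      simp only [Finset.mem_range]
      omega
    · have hx0 : x = 0 := by
        simp only [Finset.mem_range] at hx
        simp only [Finset.mem_Icc, not_and, not_le] at hx'
        omega
      subst hx0
      simp [hf_def]
  have hS : Tendsto (fun N => ∑ n ∈ Finset.Icc 1 N, f n) atTop (𝓝 (-z)) := by
    simp only [hIcc]; exact hrange
  have hprod : ∀ N, ∏ n ∈ Finset.Icc 1 N, (1 - z ^ n) ^ ((μ n : ℂ) / n)
      = Complex.exp (∑ n ∈ Finset.Icc 1 N, f n) := by
    intro N
    rw [Complex.exp_sum]
    refine Finset.prod_congr rfl fun n hn => ?_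
    have hn1 : 1 ≤ n := (Finset.mem_Icc.mp hn).1
    have hne : 1 - z ^ n ≠ 0 := by
      rw [sub_ne_zero]
      intro h
      have : ‖z ^ n‖ < 1 := by
        rw [norm_pow]
        exact pow_lt_one₀ (norm_nonneg z) hz (by omega)
      rw [← h] at this
      simp at this
    rw [Complex.cpow_def_of_ne_zero hne, hf_def, mul_comm]
  simp only [hprod]
  exact (Complex.continuous_exp.tendsto (-z)).comp hS
end

section
/- For every z ∈ ℂ with |z| < 1, the partial products ∏_{n=1}^{N} (1−z^n)^{φ(n)/n} converge as N → ∞ to e^{z/(z−1)}, where φ is the Euler totient function; that is, e^{z/(z−1)} = ∏_{n=1}^{∞} (1−z^n)^{φ(n)/n}. -/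
open Filter Topology Finset

theorem stmt_15 (z : ℂ) (hz : ‖z‖ < 1) :
    Tendsto (fun N => ∏ n ∈ Finset.Icc 1 N, (1 - z ^ n) ^ ((Nat.totient n : ℂ) / n)) atTop
      (𝓝 (Complex.exp (z / (z - 1)))) := by
  set r : ℝ := ‖z‖ with hr
  have hr0 : 0 ≤ r := norm_nonneg z
  have hr1 : r ≤ 1 := hz.le
  have hzn : ∀ n : ℕ, 1 ≤ n → ‖z ^ n‖ < 1 := by
    intro n hn
    rw [norm_pow]
    calc r ^ n ≤ r ^ 1 := pow_le_pow_of_le_one hr0 hr1 hn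
    _ = r := pow_one r
    _ < 1 := hz
  have hne : ∀ n : ℕ, 1 ≤ n → (1 : ℂ) - z ^ n ≠ 0 := by
    intro n hn
    rw [sub_ne_zero]
    intro h
    have := hzn n hn
    rw [← h] at this
    simp at this
  set f : ℕ → ℂ := fun n => (Nat.totient n : ℂ) / n * Complex.log (1 - z ^ n) with hf
  have hf0 : f 0 = 0 := by simp [hf]
  set F : ℕ × ℕ → ℂ := fun p =>
    -((Nat.totient p.1 : ℂ) / p.1 * (z ^ (p.1 * p.2) / p.2)) with hF
  have hFsum : Summable F := by
    have hb : Summable (fun n : ℕ => r ^ (n - 1)) := by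
      rw [← summable_nat_add_iff 1]
      simpa using summable_geometric_of_lt_one hr0 hz
    have hbb : Summable (fun p : ℕ × ℕ => r ^ (p.1 - 1) * r ^ (p.2 - 1)) := by
      apply Summable.mul_of_nonneg (f := fun n : ℕ => r ^ (n - 1))
        (g := fun n : ℕ => r ^ (n - 1)) hb hb
      · intro n; positivity
      · intro n; positivity
    refine Summable.of_norm_bounded hbb ?_
    rintro ⟨a, b⟩
    rcases Nat.eq_zero_or_pos a with rfl | ha
    · simp only [hF]
      simp
      positivity
    rcases Nat.eq_zero_or_pos b with rfl | hb'
    · simp only [hF]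
      simp
      positivity
    have h1 : ‖F (a, b)‖ = (Nat.totient a : ℝ) / a * (r ^ (a * b) / b) := by
      simp [hF, norm_div, norm_pow]
      exact Or.inl rfl
    rw [h1]
    have h2 : (Nat.totient a : ℝ) / a ≤ 1 := by
      rw [div_le_one (by exact_mod_cast ha)]
      exact_mod_cast Nat.totient_le a
    have h3 : r ^ (a * b) / b ≤ r ^ (a * b) := by
      apply div_le_self (pow_nonneg hr0 _)
      exact_mod_cast hb'
    have h4 : r ^ (a * b) ≤ r ^ (a - 1 + (b - 1)) := by
      apply pow_le_pow_of_le_one hr0 hr1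
      have ha1 : 1 ≤ a := ha
      have hb1 : 1 ≤ b := hb'
      have : a - 1 + (b - 1) = a + b - 2 := by omega
      rw [this]
      have h5 : a + b ≤ a * b + 2 := by nlinarith
      omega
    calc (Nat.totient a : ℝ) / a * (r ^ (a * b) / b) ≤ 1 * r ^ (a * b) :=
          mul_le_mul h2 h3 (by positivity) one_pos.le
    _ = r ^ (a * b) := one_mul _
    _ ≤ r ^ (a - 1 + (b - 1)) := h4
    _ = r ^ (a - 1) * r ^ (b - 1) := pow_add r _ _
  have hFib : ∀ n : ℕ, HasSum (fun k => F (n, k)) (f n) := by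
    intro n
    rcases Nat.eq_zero_or_pos n with rfl | hn
    · have : (fun k => F (0, k)) = fun _ => 0 := by
        funext k; simp [hF]
      rw [this, hf0]
      exact hasSum_zero
    · have h := Complex.hasSum_taylorSeries_neg_log (z := z ^ n) (hzn n hn)
      have h' := h.mul_left (-((Nat.totient n : ℂ) / n))
      have e1 : (fun k => F (n, k)) =
          fun k : ℕ => -((Nat.totient n : ℂ) / n) * ((z ^ n) ^ k / k) := by
        funext k
        simp only [hF, ← pow_mul]
        ring
      have e2 : f n = -((Nat.totient n : ℂ) / n) * -Complex.log (1 - z ^ n) := by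
        simp only [hf]
        ring
      rw [e1, e2]
      exact h'
  have hFhs : HasSum F (∑' p, F p) := hFsum.hasSum
  have hfhs : HasSum f (∑' p, F p) := hFhs.prod_fiberwise hFib
  have hfib2 : HasSum (fun m : ℕ => ∑' p : (fun p : ℕ × ℕ => p.1 * p.2) ⁻¹' {m}, F p)
      (∑' p, F p) := hFhs.tsum_fiberwise _
  have hGeq : (fun m : ℕ => ∑' p : (fun p : ℕ × ℕ => p.1 * p.2) ⁻¹' {m}, F p) =
      fun m => if m = 0 then 0 else -z ^ m := by
    funext m
    rcases Nat.eq_zero_or_pos m with rfl | hm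
    · simp only [if_pos rfl]
      have hzero : ∀ p : (fun p : ℕ × ℕ => p.1 * p.2) ⁻¹' {(0 : ℕ)}, F p = 0 := by
        rintro ⟨⟨a, b⟩, hp⟩
        simp only [Set.mem_preimage, Set.mem_singleton_iff, Nat.mul_eq_zero] at hp
        rcases hp with rfl | rfl <;> simp [hF]
      rw [tsum_congr hzero, tsum_zero]
      simp
    · rw [if_neg hm.ne']
      have hset : (fun p : ℕ × ℕ => p.1 * p.2) ⁻¹' {m} = ↑(Nat.divisorsAntidiagonal m) := by
        ext p
        simp [Nat.mem_divisorsAntidiagonal, hm.ne', eq_comm]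
      rw [hset, Finset.tsum_subtype' (Nat.divisorsAntidiagonal m) F]
      have hterm : ∀ p ∈ Nat.divisorsAntidiagonal m,
          F p = (Nat.totient p.1 : ℂ) * (-(z ^ m / m)) := by
        rintro ⟨a, b⟩ hp
        rw [Nat.mem_divisorsAntidiagonal] at hp
        obtain ⟨hab, -⟩ := hp
        have ha : a ≠ 0 := by rintro rfl; simp at hab; omega
        have hb : b ≠ 0 := by rintro rfl; simp at hab; omega
        have hac : (a : ℂ) ≠ 0 := Nat.cast_ne_zero.mpr ha
        have hbc : (b : ℂ) ≠ 0 := Nat.cast_ne_zero.mpr hb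
        simp only [hF, ← hab]
        push_cast
        field_simp
      rw [Finset.sum_congr rfl hterm, ← Finset.sum_mul]
      have hd : ∑ p ∈ Nat.divisorsAntidiagonal m, (Nat.totient p.1 : ℂ) = (m : ℂ) := by
        have := Nat.sum_divisorsAntidiagonal (fun a b => (Nat.totient a : ℂ)) (n := m)
        rw [this]
        rw [← Nat.cast_sum]
        norm_cast
        exact Nat.sum_totient m
      rw [hd]
      have hmc : (m : ℂ) ≠ 0 := Nat.cast_ne_zero.mpr hm.ne'
      field_simp
  have hz1 : (1 : ℂ) - z ≠ 0 := by simpa using hne 1 le_rfl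
  have hGhs : HasSum (fun m : ℕ => if m = 0 then (0 : ℂ) else -z ^ m) (z / (z - 1)) := by
    have h1 : HasSum (fun m : ℕ => -z ^ m) (-(1 - z)⁻¹) :=
      (hasSum_geometric_of_norm_lt_one hz).neg
    have h2 : HasSum (fun m : ℕ => if m = 0 then (1 : ℂ) else 0) 1 := hasSum_ite_eq 0 1
    have h3 := h1.add h2
    have heq : (fun m : ℕ => -z ^ m + if m = 0 then (1 : ℂ) else 0) =
        fun m : ℕ => if m = 0 then (0 : ℂ) else -z ^ m := by
      funext m
      rcases eq_or_ne m 0 with rfl | hm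
      · simp
      · simp [hm]
    rw [heq] at h3
    convert h3 using 1
    have : z - 1 ≠ 0 := by
      intro h; apply hz1; rw [← neg_sub] at h; simpa using neg_eq_zero.mp h
    field_simp
    ring
  have hT : (∑' p, F p) = z / (z - 1) := by
    rw [hGeq] at hfib2
    exact hfib2.unique hGhs
  rw [hT] at hfhs
  -- convert partial sums over Icc 1 N
  have hsum_eq : ∀ N : ℕ, ∑ n ∈ Finset.Icc 1 N, f n = ∑ n ∈ Finset.range (N + 1), f n := by
    intro N
    apply Finset.sum_subset
    · intro x hx
      simp only [Finset.mem_Icc] at hx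
      simp only [Finset.mem_range]
      omega
    · intro x hx1 hx2
      simp only [Finset.mem_Icc] at hx2
      simp only [Finset.mem_range] at hx1
      have : x = 0 := by omega
      rw [this, hf0]
  have htend : Tendsto (fun N => ∑ n ∈ Finset.Icc 1 N, f n) atTop (𝓝 (z / (z - 1))) := by
    have h1 := hfhs.tendsto_sum_nat
    have h2 : Tendsto (fun N : ℕ => N + 1) atTop atTop := tendsto_add_atTop_nat 1
    have h3 := h1.comp h2
    simpa [Function.comp_def, hsum_eq] using h3
  have hprod_eq : ∀ N : ℕ, ∏ n ∈ Finset.Icc 1 N, (1 - z ^ n) ^ ((Nat.totient n : ℂ) / n) =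
      Complex.exp (∑ n ∈ Finset.Icc 1 N, f n) := by
    intro N
    rw [Complex.exp_sum]
    apply Finset.prod_congr rfl
    intro n hn
    rw [Finset.mem_Icc] at hn
    rw [Complex.cpow_def_of_ne_zero (hne n hn.1), hf]
    ring_nf
  have := (Complex.continuous_exp.tendsto (z / (z - 1))).comp htend
  refine this.congr fun N => ?_
  simp only [Function.comp]
  exact (hprod_eq N).symm
end

section
/- Let q be a monic polynomial of degree k with integer coefficients, and let x_1, …, x_k ∈ ℂ be its roots listed with multiplicity, so that q(x) = (x−x_1)(x−x_2)⋯(x−x_k) over ℂ. For each n ≥ 1 set q_n = x_1^n + x_2^n + ⋯ + x_k^n. Then for every n ≥ 1 there exists an integer t such that ∑_{d | n} q_d·μ(n/d) = n·t, where μ is the Möbius function; that is, ∑_{d | n} q_d·μ(n/d) ≡ 0 (mod n). -/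
open scoped ArithmeticFunction.Moebius

namespace Gauss16

open MvPolynomial

variable {k : ℕ}

/-- The Frobenius-twist endomorphism `Xᵢ ↦ Xᵢ^p`. -/
noncomputable def psi (k p : ℕ) :
    MvPolynomial (Fin k) ℤ →ₐ[ℤ] MvPolynomial (Fin k) ℤ :=
  bind₁ (fun i => X i ^ p)

lemma psi_psum (p d : ℕ) : psi k p (psum (Fin k) ℤ d) = psum (Fin k) ℤ (p * d) := by
  simp only [psi, psum, map_sum, map_pow, bind₁_X_right, ← pow_mul]

lemma psi_symm {p : ℕ} {s : MvPolynomial (Fin k) ℤ} (hs : s.IsSymmetric) :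
    (psi k p s).IsSymmetric := by
  intro e
  have h1 : rename (⇑e) (psi k p s) = bind₁ ((fun i : Fin k => (X i : MvPolynomial (Fin k) ℤ) ^ p) ∘ e) s := by
    rw [psi, rename_bind₁]
    simp only [map_pow, rename_X]
    rfl
  rw [h1, ← bind₁_rename, hs e, psi]

lemma psi_mod (p : ℕ) (hp : p.Prime) (s : MvPolynomial (Fin k) ℤ) :
    ∃ u : MvPolynomial (Fin k) ℤ,
      psi k p s = s ^ p + MvPolynomial.C (p : ℤ) * u ∧ (s.IsSymmetric → u.IsSymmetric) := by
  haveI : Fact p.Prime := ⟨hp⟩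
  haveI : CharP (MvPolynomial (Fin k) (ZMod p)) p :=
    charP_of_injective_ringHom (MvPolynomial.C_injective (Fin k) (ZMod p)) p
  have frob : ∀ t : MvPolynomial (Fin k) (ZMod p),
      bind₁ (fun i : Fin k => (X i : MvPolynomial (Fin k) (ZMod p)) ^ p) t = t ^ p := by
    have hhom : ((bind₁ (fun i : Fin k => (X i : MvPolynomial (Fin k) (ZMod p)) ^ p)).toRingHom :
        MvPolynomial (Fin k) (ZMod p) →+* MvPolynomial (Fin k) (ZMod p)) =
        frobenius (MvPolynomial (Fin k) (ZMod p)) p := by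
      apply MvPolynomial.ringHom_ext
      · intro r
        simp [frobenius_def, ← map_pow, ZMod.pow_card]
      · intro i
        simp [frobenius_def]
    intro t
    exact RingHom.congr_fun hhom t
  have hdvd : MvPolynomial.C (p : ℤ) ∣ psi k p s - s ^ p := by
    rw [MvPolynomial.C_dvd_iff_dvd_coeff]
    intro i
    rw [← ZMod.intCast_zmod_eq_zero_iff_dvd]
    have h : MvPolynomial.map (Int.castRingHom (ZMod p)) (psi k p s - s ^ p) = 0 := by
      rw [map_sub, map_pow]
      rw [psi, MvPolynomial.map_bind₁]
      simp only [map_pow, MvPolynomial.map_X]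
      rw [frob, sub_self]
    have h2 := congrArg (MvPolynomial.coeff i) h
    rw [MvPolynomial.coeff_map] at h2
    simpa using h2
  obtain ⟨u, hu⟩ := hdvd
  refine ⟨u, by linear_combination hu, fun hs => ?_⟩
  intro e
  have hCu : (MvPolynomial.C (p : ℤ) * u).IsSymmetric := by
    have hsp : (s ^ p).IsSymmetric := fun e => by rw [map_pow, hs e]
    rw [← hu]
    exact (psi_symm hs).sub hsp
  have h2 := hCu e
  rw [map_mul, rename_C] at h2
  have hC0 : (MvPolynomial.C (p : ℤ) : MvPolynomial (Fin k) ℤ) ≠ 0 := by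
    simp [MvPolynomial.C_eq_zero, hp.ne_zero]
  exact mul_left_cancel₀ hC0 h2

lemma psi_pow_symm (p : ℕ) (e : ℕ) {s : MvPolynomial (Fin k) ℤ} (hs : s.IsSymmetric) :
    ((psi k p ^ e) s).IsSymmetric := by
  induction e with
  | zero => simpa using hs
  | succ e ih =>
    rw [pow_succ', AlgHom.mul_apply]
    exact psi_symm ih

lemma psi_pow_psum (p : ℕ) (e : ℕ) (c : ℕ) :
    (psi k p ^ e) (psum (Fin k) ℤ c) = psum (Fin k) ℤ (p ^ e * c) := by
  induction e with
  | zero => simp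
  | succ e ih =>
    rw [pow_succ', AlgHom.mul_apply, ih, psi_psum, ← mul_assoc, ← pow_succ']

lemma int_val (x : Fin k → ℂ)
    (hint : ∀ j : Fin k, ∃ z : ℤ, aeval x (esymm (Fin k) ℤ ((j : ℕ) + 1)) = (z : ℂ))
    {s : MvPolynomial (Fin k) ℤ} (hs : s.IsSymmetric) :
    ∃ z : ℤ, aeval x s = (z : ℂ) := by
  choose c hc using hint
  obtain ⟨P, hP⟩ := esymmAlgHom_surjective (σ := Fin k) (R := ℤ) (n := k)
    (by simp) ⟨s, (mem_symmetricSubalgebra s).mpr hs⟩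
  have hs' : s = bind₁ (fun i : Fin k => esymm (Fin k) ℤ ((i : ℕ) + 1)) P := by
    have h := congrArg Subtype.val hP
    rw [esymmAlgHom_apply] at h
    exact h.symm
  have hcast : ∀ P : MvPolynomial (Fin k) ℤ,
      (aeval fun i : Fin k => ((c i : ℤ) : ℂ)) P = ((MvPolynomial.eval c P : ℤ) : ℂ) := by
    intro P
    induction P using MvPolynomial.induction_on with
    | C a => simp
    | add p q hp hq => simp [hp, hq]
    | mul_X p i hp => simp [hp]
  refine ⟨MvPolynomial.eval c P, ?_⟩
  rw [hs', aeval_bind₁]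
  have heq : (fun i : Fin k => aeval x (esymm (Fin k) ℤ ((i : ℕ) + 1))) = fun i => ((c i : ℤ) : ℂ) := by
    funext i; exact hc i
  rw [heq, hcast]

lemma fermat_int (p : ℕ) (hp : p.Prime) (m : ℤ) : (p : ℤ) ∣ m ^ p - m := by
  haveI : Fact p.Prime := ⟨hp⟩
  rw [← ZMod.intCast_zmod_eq_zero_iff_dvd]
  push_cast
  rw [ZMod.pow_card, sub_self]

lemma pow_cong {p : ℕ} (hp : p.Prime) {e : ℕ} (he : 1 ≤ e) {a b : ℤ}
    (h : (p : ℤ) ^ e ∣ a - b) : (p : ℤ) ^ (e + 1) ∣ a ^ p - b ^ p := by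
  haveI : Fact p.Prime := ⟨hp⟩
  have hd : (p : ℤ) ∣ a - b := by
    calc (p : ℤ) = (p : ℤ) ^ 1 := (pow_one _).symm
    _ ∣ (p : ℤ) ^ e := pow_dvd_pow _ he
    _ ∣ a - b := h
  have key : (p : ℤ) ∣ ∑ i ∈ Finset.range p, a ^ i * b ^ (p - 1 - i) := by
    rw [← ZMod.intCast_zmod_eq_zero_iff_dvd]
    push_cast
    have hab : (a : ZMod p) = (b : ZMod p) := by
      have h0 : ((a - b : ℤ) : ZMod p) = 0 := (ZMod.intCast_zmod_eq_zero_iff_dvd _ _).mpr hd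
      push_cast at h0
      exact sub_eq_zero.mp h0
    rw [hab]
    have hcongr : ∀ i ∈ Finset.range p, (b : ZMod p) ^ i * (b : ZMod p) ^ (p - 1 - i)
        = (b : ZMod p) ^ (p - 1) := by
      intro i hi
      rw [← pow_add]
      congr 1
      have := Finset.mem_range.mp hi
      omega
    rw [Finset.sum_congr rfl hcongr, Finset.sum_const, Finset.card_range]
    simp
  have hgeom : a ^ p - b ^ p = (∑ i ∈ Finset.range p, a ^ i * b ^ (p - 1 - i)) * (a - b) :=
    (geom_sum₂_mul a b p).symm
  rw [hgeom, pow_succ, mul_comm ((p:ℤ)^e)]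
  exact mul_dvd_mul key h

lemma key_cong (x : Fin k → ℂ)
    (hint : ∀ j : Fin k, ∃ z : ℤ, aeval x (esymm (Fin k) ℤ ((j : ℕ) + 1)) = (z : ℂ))
    (p : ℕ) (hp : p.Prime) :
    ∀ e : ℕ, ∀ s : MvPolynomial (Fin k) ℤ, s.IsSymmetric →
      ∃ w : ℤ, aeval x ((psi k p ^ (e + 1)) s) - aeval x ((psi k p ^ e) s)
        = (((p : ℤ) ^ (e + 1) * w : ℤ) : ℂ) := by
  intro e
  induction e with
  | zero =>
    intro s hs
    obtain ⟨u, hu, husym⟩ := psi_mod p hp s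
    obtain ⟨m, hm⟩ := int_val x hint hs
    obtain ⟨wu, hwu⟩ := int_val x hint (husym hs)
    obtain ⟨t, ht⟩ := fermat_int p hp m
    refine ⟨t + wu, ?_⟩
    rw [pow_one, pow_zero, AlgHom.one_apply, hu]
    rw [map_add, map_mul, map_pow, aeval_C]
    rw [hm, hwu]
    have hc2 : ((m : ℂ)) ^ p - (m : ℂ) = ((p : ℤ) : ℂ) * (t : ℂ) := by
      exact_mod_cast congrArg (Int.cast : ℤ → ℂ) ht
    push_cast at hc2 ⊢
    linear_combination hc2
  | succ e ih =>
    intro s hs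
    obtain ⟨u, hu, husym⟩ := psi_mod p hp s
    have hus := husym hs
    -- rewrite both iterates through ψ s
    have h1 : (psi k p ^ (e + 2)) s = (psi k p ^ (e + 1)) (psi k p s) := by
      rw [pow_succ, AlgHom.mul_apply]
    have h2 : (psi k p ^ (e + 1)) s = (psi k p ^ e) (psi k p s) := by
      rw [pow_succ, AlgHom.mul_apply]
    obtain ⟨w1, hw1⟩ := ih s hs
    obtain ⟨w2, hw2⟩ := ih u hus
    obtain ⟨m, hm⟩ := int_val x hint (psi_pow_symm p e hs)
    have hps : aeval x ((psi k p ^ (e + 1)) s) = ((m + (p : ℤ) ^ (e + 1) * w1 : ℤ) : ℂ) := by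
      push_cast at hw1 ⊢
      rw [← hm]
      linear_combination hw1
    obtain ⟨t, ht⟩ := pow_cong hp (Nat.le_add_left 1 e)
      (a := m + (p : ℤ) ^ (e + 1) * w1) (b := m) ⟨w1, by ring⟩
    refine ⟨t + w2, ?_⟩
    have expand : ∀ j : ℕ, (psi k p ^ j) (psi k p s)
        = ((psi k p ^ j) s) ^ p + MvPolynomial.C (p : ℤ) * ((psi k p ^ j) u) := by
      intro j
      rw [hu, map_add, map_mul, map_pow]
      congr 2
      exact AlgHom.commutes _ (p : ℤ)
    rw [h1, h2, expand, expand]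
    simp only [map_add, map_mul, map_pow, aeval_C]
    have hcast : (((m + (p : ℤ) ^ (e + 1) * w1 : ℤ) : ℂ)) ^ p - ((m : ℤ) : ℂ) ^ p
        = (((p : ℤ) ^ (e + 2) * t : ℤ) : ℂ) := by
      exact_mod_cast congrArg (Int.cast : ℤ → ℂ) ht
    rw [hps, hm]
    push_cast at hcast hw2 ⊢
    linear_combination hcast + (p : ℂ) * hw2


open ArithmeticFunction in
lemma gauss_p (a : ℕ → ℤ)
    (hkey : ∀ p : ℕ, p.Prime → ∀ e : ℕ, 1 ≤ e → ∀ c : ℕ,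
      (p : ℤ) ^ e ∣ a (p ^ e * c) - a (p ^ (e - 1) * c))
    (p : ℕ) (hp : p.Prime) (e m : ℕ) (he : 1 ≤ e) (hm0 : m ≠ 0) (hm : ¬ p ∣ m) :
    (p : ℤ) ^ e ∣ ∑ d ∈ Nat.divisors (p ^ e * m), a d * μ ((p ^ e * m) / d) := by
  classical
  set n := p ^ e * m with hn
  have hppos : 0 < p := hp.pos
  have hn0 : n ≠ 0 := mul_ne_zero (pow_ne_zero _ hp.ne_zero) hm0
  set T₁ : Finset ℕ := m.divisors.image (fun c => p ^ e * c) with hT₁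
  set T₂ : Finset ℕ := m.divisors.image (fun c => p ^ (e - 1) * c) with hT₂
  have hfac : ∀ j : ℕ, ∀ c ∈ m.divisors, ((p ^ j * c).factorization p) = j := by
    intro j c hc
    obtain ⟨hcm, _⟩ := Nat.mem_divisors.mp hc
    have hc0 : c ≠ 0 := fun h => hm0 (by simpa [h] using hcm)
    have hpc : ¬ p ∣ c := fun h => hm (h.trans hcm)
    rw [Nat.factorization_mul (pow_ne_zero _ hp.ne_zero) hc0]
    simp [Nat.Prime.factorization_pow, hp, Nat.factorization_eq_zero_of_not_dvd hpc]
  have hsub : T₁ ∪ T₂ ⊆ n.divisors := by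
    intro d hd
    rcases Finset.mem_union.mp hd with hd | hd <;>
    · obtain ⟨c, hc, rfl⟩ := Finset.mem_image.mp hd
      exact Nat.mem_divisors.mpr
        ⟨mul_dvd_mul (pow_dvd_pow p (by omega)) (Nat.mem_divisors.mp hc).1, hn0⟩
  have hdisj : Disjoint T₁ T₂ := by
    rw [Finset.disjoint_left]
    rintro d hd1 hd2
    obtain ⟨c1, hc1, rfl⟩ := Finset.mem_image.mp hd1
    obtain ⟨c2, hc2, hd⟩ := Finset.mem_image.mp hd2
    have h1 := hfac e c1 hc1
    have h2 := hfac (e - 1) c2 hc2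
    rw [hd] at h2
    omega
  have hvanish : ∀ d ∈ n.divisors, d ∉ T₁ ∪ T₂ → a d * (μ (n / d) : ℤ) = 0 := by
    intro d hd hnot
    obtain ⟨hdn, _⟩ := Nat.mem_divisors.mp hd
    have hd0 : d ≠ 0 := fun h => hn0 (by simpa [h] using hdn)
    set j := d.factorization p with hj
    have hnfac : n.factorization p = e := hfac e m (Nat.mem_divisors.mpr ⟨dvd_rfl, hm0⟩)
    have hjle : j ≤ e := by
      have := (Nat.factorization_le_iff_dvd hd0 hn0).mpr hdn p
      omega
    set c := d / p ^ j with hc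
    have hdc : d = p ^ j * c := (Nat.ordProj_mul_ordCompl_eq_self d p).symm
    have hpc : ¬ p ∣ c := Nat.not_dvd_ordCompl hp hd0
    have hc0 : c ≠ 0 := fun h => hd0 (by rw [hdc, h, mul_zero])
    have hcm : c ∣ m := by
      have hcn : c ∣ n := dvd_trans ⟨p ^ j, by rw [hdc]; ring⟩ hdn
      have hcop : Nat.Coprime c (p ^ e) :=
        Nat.Coprime.pow_right _ (Nat.coprime_comm.mp (hp.coprime_iff_not_dvd.mpr hpc))
      exact hcop.dvd_of_dvd_mul_left hcn
    by_cases hcase : e - 1 ≤ j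
    · exfalso
      apply hnot
      rcases eq_or_lt_of_le hcase with hcase' | hlt
      · exact Finset.mem_union_right _ (Finset.mem_image.mpr
          ⟨c, Nat.mem_divisors.mpr ⟨hcm, hm0⟩, by rw [hcase', ← hdc]⟩)
      · have hje : j = e := by omega
        exact Finset.mem_union_left _ (Finset.mem_image.mpr
          ⟨c, Nat.mem_divisors.mpr ⟨hcm, hm0⟩, by rw [← hje, ← hdc]⟩)
    · have hnd0 : n / d ≠ 0 := by
        have := Nat.div_pos (Nat.le_of_dvd (Nat.pos_of_ne_zero hn0) hdn) (Nat.pos_of_ne_zero hd0)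
        omega
      have h2 : p ^ 2 ∣ n / d := by
        rw [Nat.Prime.pow_dvd_iff_le_factorization hp hnd0, Nat.factorization_div hdn]
        simp only [Finsupp.tsub_apply]
        omega
      have hnsq : ¬ Squarefree (n / d) := by
        intro hsq
        exact hp.not_isUnit (hsq p (by rw [← sq]; exact h2))
      rw [moebius_eq_zero_of_not_squarefree hnsq]
      ring
  have hinj : ∀ j : ℕ, Set.InjOn (fun c => p ^ j * c) ↑m.divisors := by
    intro j c1 _ c2 _ h
    exact Nat.eq_of_mul_eq_mul_left (Nat.pow_pos hppos) h
  have hsplit : ∑ d ∈ n.divisors, a d * (μ (n / d) : ℤ)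
      = ∑ d ∈ T₁, a d * (μ (n / d) : ℤ) + ∑ d ∈ T₂, a d * (μ (n / d) : ℤ) := by
    rw [← Finset.sum_union hdisj]
    exact (Finset.sum_subset hsub hvanish).symm
  have hq1 : ∀ c, c ∣ m → n / (p ^ e * c) = m / c := by
    intro c hc
    rw [hn, Nat.mul_div_mul_left _ _ (Nat.pow_pos hppos)]
  have hq2 : ∀ c, c ∣ m → n / (p ^ (e - 1) * c) = p * (m / c) := by
    intro c hc
    have : n = p ^ (e - 1) * (p * m) := by
      rw [hn, ← mul_assoc, ← pow_succ]
      congr 2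
      omega
    rw [this, Nat.mul_div_mul_left _ _ (Nat.pow_pos hppos),
      Nat.mul_div_assoc _ hc]
  have hmu2 : ∀ c, c ∣ m → (μ (p * (m / c)) : ℤ) = - μ (m / c) := by
    intro c hc
    have hpd : ¬ p ∣ m / c := fun h => hm (h.trans (Nat.div_dvd_of_dvd hc))
    rw [isMultiplicative_moebius.map_mul_of_coprime (hp.coprime_iff_not_dvd.mpr hpd),
      moebius_apply_prime hp]
    ring
  rw [hsplit, Finset.sum_image (hinj e), Finset.sum_image (hinj (e - 1))]
  have hfinal : ∑ c ∈ m.divisors, a (p ^ e * c) * (μ (n / (p ^ e * c)) : ℤ)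
      + ∑ c ∈ m.divisors, a (p ^ (e - 1) * c) * (μ (n / (p ^ (e - 1) * c)) : ℤ)
      = ∑ c ∈ m.divisors, (μ (m / c) : ℤ) * (a (p ^ e * c) - a (p ^ (e - 1) * c)) := by
    rw [← Finset.sum_add_distrib]
    refine Finset.sum_congr rfl fun c hc => ?_
    obtain ⟨hcm, _⟩ := Nat.mem_divisors.mp hc
    rw [hq1 c hcm, hq2 c hcm, hmu2 c hcm]
    ring
  rw [hfinal]
  exact Finset.dvd_sum fun c _ => Dvd.dvd.mul_left (hkey p hp e he c) _

open ArithmeticFunction in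
lemma gauss (a : ℕ → ℤ)
    (hkey : ∀ p : ℕ, p.Prime → ∀ e : ℕ, 1 ≤ e → ∀ c : ℕ,
      (p : ℤ) ^ e ∣ a (p ^ e * c) - a (p ^ (e - 1) * c))
    (n : ℕ) (hn : 1 ≤ n) :
    (n : ℤ) ∣ ∑ d ∈ Nat.divisors n, a d * (μ (n / d) : ℤ) := by
  have hn0 : n ≠ 0 := by omega
  have hprod : (n : ℤ) = ∏ p ∈ n.primeFactors, (p : ℤ) ^ (n.factorization p) := by
    conv_lhs => rw [← Nat.factorization_prod_pow_eq_self hn0]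
    rw [Nat.prod_factorization_eq_prod_primeFactors]
    push_cast
    rfl
  rw [hprod]
  apply Finset.prod_dvd_of_coprime
  · intro p hp q hq hpq
    have hpp := Nat.prime_of_mem_primeFactors hp
    have hqp := Nat.prime_of_mem_primeFactors hq
    apply IsCoprime.pow
    rw [Int.isCoprime_iff_gcd_eq_one, Int.gcd_natCast_natCast]
    exact (Nat.coprime_primes hpp hqp).mpr hpq
  · intro p hp
    have hpp := Nat.prime_of_mem_primeFactors hp
    have he : 1 ≤ n.factorization p :=
      hpp.factorization_pos_of_dvd hn0 (Nat.dvd_of_mem_primeFactors hp)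
    have hm0 : ordCompl[p] n ≠ 0 := Nat.pos_iff_ne_zero.mp (Nat.ordCompl_pos p hn0)
    have hpm : ¬ p ∣ ordCompl[p] n := Nat.not_dvd_ordCompl hpp hn0
    have hdec : n = p ^ (n.factorization p) * ordCompl[p] n :=
      (Nat.ordProj_mul_ordCompl_eq_self n p).symm
    calc (p : ℤ) ^ (n.factorization p)
        ∣ ∑ d ∈ Nat.divisors (p ^ (n.factorization p) * ordCompl[p] n),
          a d * (μ ((p ^ (n.factorization p) * ordCompl[p] n) / d) : ℤ) :=
        gauss_p a hkey p hpp _ _ he hm0 hpm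
      _ = ∑ d ∈ Nat.divisors n, a d * (μ (n / d) : ℤ) := by rw [← hdec]

end Gauss16

open Finset Polynomial ArithmeticFunction

theorem stmt_16 (k : ℕ) (q : Polynomial ℤ) (hmonic : q.Monic) (hdeg : q.natDegree = k)
    (x : Fin k → ℂ)
    (hroots : q.map (Int.castRingHom ℂ) = ∏ i : Fin k, (X - C (x i))) :
    ∀ n : ℕ, n ≥ 1 → ∃ t : ℤ,
      ∑ d ∈ Nat.divisors n, (∑ i : Fin k, x i ^ d) * (μ (n / d) : ℂ) = (n : ℂ) * (t : ℂ) := by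
  have hcard : Multiset.card (Finset.univ.val.map x) = k := by simp
  have hprod : (Multiset.map (fun t => X - C t) (Finset.univ.val.map x)).prod
      = q.map (Int.castRingHom ℂ) := by
    rw [hroots, Finset.prod_eq_multiset_prod, Multiset.map_map]
    rfl
  have hint : ∀ j : Fin k, ∃ z : ℤ,
      MvPolynomial.aeval x (MvPolynomial.esymm (Fin k) ℤ ((j : ℕ) + 1)) = (z : ℂ) := by
    intro j
    set jj := (j : ℕ) + 1 with hjj
    have hjk : jj ≤ k := j.isLt
    refine ⟨(-1) ^ jj * q.coeff (k - jj), ?_⟩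
    rw [MvPolynomial.aeval_esymm_eq_multiset_esymm]
    have hco := Multiset.prod_X_sub_C_coeff (Finset.univ.val.map x)
      (k := k - jj) (by rw [hcard]; omega)
    rw [hprod, hcard] at hco
    have hkk : k - (k - jj) = jj := by omega
    rw [hkk, Polynomial.coeff_map] at hco
    have h1 : ((-1 : ℂ)) ^ jj * ((-1 : ℂ)) ^ jj = 1 := by
      rw [← mul_pow]
      norm_num
    calc (Finset.univ.val.map x).esymm jj
        = ((-1 : ℂ)) ^ jj * ((-1 : ℂ)) ^ jj * (Finset.univ.val.map x).esymm jj := by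
          rw [h1, one_mul]
      _ = ((-1 : ℂ)) ^ jj * ((Int.castRingHom ℂ) (q.coeff (k - jj))) := by
          rw [mul_assoc, ← hco]
      _ = (((-1) ^ jj * q.coeff (k - jj) : ℤ) : ℂ) := by
          have hcast : (Int.castRingHom ℂ) (q.coeff (k - jj)) = ((q.coeff (k - jj) : ℤ) : ℂ) := rfl
          rw [hcast]
          push_cast
          ring
  choose a ha using fun d => Gauss16.int_val x hint (MvPolynomial.psum_isSymmetric (Fin k) ℤ d)
  have hkey : ∀ p : ℕ, p.Prime → ∀ e : ℕ, 1 ≤ e → ∀ c : ℕ,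
      (p : ℤ) ^ e ∣ a (p ^ e * c) - a (p ^ (e - 1) * c) := by
    intro p hp e he c
    obtain ⟨w, hw⟩ := Gauss16.key_cong x hint p hp (e - 1)
      (MvPolynomial.psum (Fin k) ℤ c) (MvPolynomial.psum_isSymmetric (Fin k) ℤ c)
    rw [Gauss16.psi_pow_psum, Gauss16.psi_pow_psum] at hw
    have he1 : e - 1 + 1 = e := by omega
    rw [he1, ha, ha] at hw
    refine ⟨w, ?_⟩
    exact_mod_cast hw
  intro n hn
  obtain ⟨t, ht⟩ := Gauss16.gauss a hkey n hn
  refine ⟨t, ?_⟩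
  have hterm : ∀ d, (∑ i : Fin k, x i ^ d) = ((a d : ℤ) : ℂ) := by
    intro d
    rw [← ha d]
    simp [MvPolynomial.psum]
  calc ∑ d ∈ n.divisors, (∑ i : Fin k, x i ^ d) * (μ (n / d) : ℂ)
      = ((∑ d ∈ n.divisors, a d * (μ (n / d) : ℤ) : ℤ) : ℂ) := by
        push_cast
        exact Finset.sum_congr rfl fun d _ => by rw [hterm d]
    _ = ((n * t : ℤ) : ℂ) := by rw [ht]
    _ = (n : ℂ) * (t : ℂ) := by push_cast; ring
end

section
/- Let 0 < R ≤ 1 and let f be an analytic function without zeros on the disk |z| < R with f(0) = 1 and f'(0) = 0, and let (α_n)_{n≥2} be complex numbers such that the partial products ∏_{n=2}^{N} (1−z^n)^{α_n} converge compactly to f on the disk |z| < R as N → ∞. Let m ≥ 1 be an integer with R·p_m > 1, where p_k denotes the k-th prime number (p_1 = 2). Then both infinite products below converge and ∏_{k=m}^{∞} f(1/p_k) = ∏_{n=2}^{∞} ζ_m(n)^{−α_n}, where ζ_m(s) = ∏_{k=m}^{∞} (1 − p_k^{−s})^{−1}. -/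
open Filter Topology Finset

private lemma diffOn_finset_prod {s : Finset ℕ} {U : Set ℂ} {F : ℕ → ℂ → ℂ}
    (h : ∀ n ∈ s, DifferentiableOn ℂ (F n) U) :
    DifferentiableOn ℂ (fun z => ∏ n ∈ s, F n z) U := by
  classical
  induction s using Finset.induction with
  | empty => simpa using differentiableOn_const (1 : ℂ)
  | @insert a s ha ih =>
    simp only [Finset.prod_insert ha]
    exact (h a (Finset.mem_insert_self a s)).mul
      (ih fun n hn => h n (Finset.mem_insert_of_mem hn))

/-- `|log (1 - t)| ≤ 2 t` for `0 < t ≤ 1/2`. -/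
private lemma abs_log_one_sub_le {t : ℝ} (ht0 : 0 < t) (ht : t ≤ 1 / 2) :
    |Real.log (1 - t)| ≤ 2 * t := by
  have h1 : (0:ℝ) < 1 - t := by linarith
  have h2 : Real.log (1 - t) ≤ 0 := Real.log_nonpos (by linarith) (by linarith)
  have h3 : Real.log (1 - t)⁻¹ ≤ (1 - t)⁻¹ - 1 :=
    Real.log_le_sub_one_of_pos (by positivity)
  rw [Real.log_inv] at h3
  have h4 : (1 - t)⁻¹ - 1 = t / (1 - t) := by field_simp; ring
  have h5 : t / (1 - t) ≤ 2 * t := by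
    rw [div_le_iff₀ h1]; nlinarith
  rw [abs_of_nonpos h2]
  linarith [h3.trans (h4 ▸ h5)]

private lemma sum_Icc_eq_sum_range {M : Type*} [AddCommMonoid M] (g : ℕ → M) (a N : ℕ)
    (hg : ∀ n, n < a → g n = 0) :
    ∑ n ∈ Finset.Icc a N, g n = ∑ n ∈ Finset.range (N + 1), g n := by
  apply Finset.sum_subset
  · intro x hx
    rw [Finset.mem_range]
    rw [Finset.mem_Icc] at hx
    omega
  · intro x hx1 hx2
    apply hg
    rw [Finset.mem_range] at hx1
    by_contra hc
    exact hx2 (Finset.mem_Icc.mpr (by omega))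

set_option maxHeartbeats 1000000 in
theorem stmt_18 (R : ℝ) (hR0 : 0 < R) (hR1 : R ≤ 1)
    (f : ℂ → ℂ) (hf : AnalyticOnNhd ℂ f (Metric.ball (0 : ℂ) R))
    (hfne : ∀ z ∈ Metric.ball (0 : ℂ) R, f z ≠ 0)
    (hf0 : f 0 = 1) (hf'0 : deriv f 0 = 0)
    (α : ℕ → ℂ)
    (hα : ∀ K ⊆ Metric.ball (0 : ℂ) R, IsCompact K →
      TendstoUniformlyOn
        (fun N z => ∏ n ∈ Finset.Icc 2 N, (1 - z ^ n) ^ (α n)) f atTop K)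
    (p : ℕ → ℕ) (hp : ∀ k ≥ 1, p k = Nat.nth Nat.Prime (k - 1))
    (m : ℕ) (hm : 1 ≤ m) (hRp : 1 < R * p m)
    (ζm : ℕ → ℝ)
    (hζm : ∀ s : ℕ, ζm s = ∏' j : ℕ, (1 - (1 / (p (m + j) : ℝ)) ^ s)⁻¹) :
    ∃ L : ℂ,
      Tendsto (fun N => ∏ k ∈ Finset.Icc m N, f (1 / (p k : ℂ))) atTop (𝓝 L) ∧
      Tendsto (fun N => ∏ n ∈ Finset.Icc 2 N, ((ζm n : ℂ)) ^ (-(α n))) atTop (𝓝 L) := by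
  classical
  -- ### prime facts
  have hpk2 : ∀ k, m ≤ k → 2 ≤ p k := by
    intro k hk
    rw [hp k (hm.trans hk)]
    exact (Nat.prime_nth_prime _).two_le
  have hpmk : ∀ k, m ≤ k → p m ≤ p k := by
    intro k hk
    rw [hp m hm, hp k (hm.trans hk)]
    exact (Nat.nth_le_nth Nat.infinite_setOf_prime).mpr (by omega)
  have hpm0 : (0:ℝ) < (p m : ℝ) := by
    have := hpk2 m le_rfl; positivity
  have hRm : 1 / (p m : ℝ) < R := by
    rw [div_lt_iff₀ hpm0]; linarith
  set r : ℝ := (1 / (p m : ℝ) + R) / 2 with hr_def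
  have hrl : 1 / (p m : ℝ) < r := by rw [hr_def]; linarith
  have hrR : r < R := by rw [hr_def]; linarith
  have hr0 : 0 < r := lt_trans (by positivity) hrl
  have hr1 : r < 1 := lt_of_lt_of_le hrR hR1
  -- c k = 1 / p k
  set c : ℕ → ℝ := fun k => 1 / (p k : ℝ) with hc_def
  have hck_pos : ∀ k, m ≤ k → 0 < c k := by
    intro k hk
    have h2 := hpk2 k hk
    have : (0:ℝ) < (p k : ℝ) := by positivity
    positivity
  have hck_le : ∀ k, m ≤ k → c k ≤ 1 / (p m : ℝ) := by
    intro k hk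
    apply one_div_le_one_div_of_le hpm0
    exact_mod_cast hpmk k hk
  have hck_half : ∀ k, m ≤ k → c k ≤ 1 / 2 := by
    intro k hk
    have h2 : (2:ℝ) ≤ (p k : ℝ) := by exact_mod_cast hpk2 k hk
    rw [hc_def]
    apply one_div_le_one_div_of_le (by norm_num) h2
  have hckr : ∀ k, m ≤ k → c k < r := fun k hk => lt_of_le_of_lt (hck_le k hk) hrl
  clear_value r c
    -- ### locally uniform convergence on the ball
  set B : Set ℂ := Metric.ball (0:ℂ) R with hB_def
  have hBopen : IsOpen B := Metric.isOpen_ball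
  have hslit : ∀ z ∈ B, ∀ n : ℕ, 2 ≤ n → 1 - z ^ n ∈ Complex.slitPlane := by
    intro z hz n hn
    rw [Complex.mem_slitPlane_iff]
    left
    have hz1 : ‖z‖ < 1 :=
      lt_of_lt_of_le (mem_ball_zero_iff.mp hz) hR1
    have h1 : ‖z ^ n‖ < 1 := by
      rw [norm_pow]
      exact pow_lt_one₀ (norm_nonneg z) hz1 (by omega)
    have h2 : (z ^ n).re ≤ ‖z ^ n‖ := Complex.re_le_norm _
    simp only [Complex.sub_re, Complex.one_re]
    linarith
  have hne1 : ∀ z ∈ B, ∀ n : ℕ, 2 ≤ n → 1 - z ^ n ≠ 0 :=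
    fun z hz n hn => Complex.slitPlane_ne_zero (hslit z hz n hn)
  set P : ℕ → ℂ → ℂ := fun N z => ∏ n ∈ Finset.Icc 2 N, (1 - z ^ n) ^ (α n) with hP_def
  have hfac_diff : ∀ n : ℕ, 2 ≤ n → ∀ z ∈ B,
      DifferentiableAt ℂ (fun w : ℂ => (1 - w ^ n) ^ (α n)) z := by
    intro n hn z hz
    have h1 : HasDerivAt (fun w : ℂ => 1 - w ^ n) (-(n * z ^ (n - 1))) z :=
      (hasDerivAt_pow n z).const_sub 1
    exact (h1.cpow_const (c := α n) (hslit z hz n hn)).differentiableAt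
  have hPdiff : ∀ N, DifferentiableOn ℂ (P N) B := fun N =>
    diffOn_finset_prod fun n hn z hz =>
      (hfac_diff n (Finset.mem_Icc.mp hn).1 z hz).differentiableWithinAt
  have hTLU : TendstoLocallyUniformlyOn P f atTop B :=
    (tendstoLocallyUniformlyOn_iff_forall_isCompact hBopen).mpr fun K hK1 hK2 => hα K hK1 hK2
  -- ### the evaluation point z₀ = r
  set z₀ : ℂ := (r : ℂ) with hz₀_def
  have hz₀B : z₀ ∈ B := by
    rw [hB_def, mem_ball_zero_iff, hz₀_def, Complex.norm_real, Real.norm_eq_abs,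
      abs_of_pos hr0]
    exact hrR
  have hlogT : Tendsto (fun N => logDeriv (P N) z₀) atTop (𝓝 (logDeriv f z₀)) :=
    Complex.logDeriv_tendsto hBopen hz₀B hTLU (Filter.Eventually.of_forall hPdiff)
      (hfne _ hz₀B)
  set b : ℕ → ℂ := fun n => α n * (-(n : ℂ) * (r:ℂ) ^ (n - 1)) / (1 - (r:ℂ) ^ n) with hb_def
  have hfac_log : ∀ n : ℕ, 2 ≤ n →
      logDeriv (fun z : ℂ => (1 - z ^ n) ^ (α n)) z₀ = b n := by
    intro n hn
    have h1 : HasDerivAt (fun w : ℂ => 1 - w ^ n) (-(n * z₀ ^ (n - 1))) z₀ :=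
      (hasDerivAt_pow n z₀).const_sub 1
    have h2 := h1.cpow_const (c := α n) (hslit z₀ hz₀B n hn)
    have hw : (1 - z₀ ^ n) ≠ 0 := hne1 z₀ hz₀B n hn
    have hcp : (1 - z₀ ^ n) ^ (α n) ≠ 0 := by
      rw [Complex.cpow_def_of_ne_zero hw]; exact Complex.exp_ne_zero _
    rw [logDeriv_apply, h2.deriv, Complex.cpow_sub _ _ hw, Complex.cpow_one]
    rw [hb_def]
    field_simp
    rw [hz₀_def] at hw ⊢
    linear_combination (α n * n * (r:ℂ) ^ (n - 1)) * mul_inv_cancel₀ hw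
  have hlogP : ∀ N, logDeriv (P N) z₀ = ∑ n ∈ Finset.Icc 2 N, b n := by
    intro N
    have h := logDeriv_prod (s := Finset.Icc 2 N) (f := fun n (z:ℂ) => (1 - z ^ n) ^ (α n)) (x := z₀)
      (fun n hn => by
        show (1 - z₀ ^ n) ^ (α n) ≠ 0
        have hw : (1 - z₀ ^ n) ≠ 0 := hne1 z₀ hz₀B n (Finset.mem_Icc.mp hn).1
        rw [Complex.cpow_def_of_ne_zero hw]; exact Complex.exp_ne_zero _)
      (fun n hn => hfac_diff n (Finset.mem_Icc.mp hn).1 z₀ hz₀B)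
    have h2 : logDeriv (P N) z₀
        = ∑ n ∈ Finset.Icc 2 N, logDeriv (fun z : ℂ => (1 - z ^ n) ^ (α n)) z₀ := h
    rw [h2]
    exact Finset.sum_congr rfl fun n hn => hfac_log n (Finset.mem_Icc.mp hn).1
    -- ### b tends to 0 hence is bounded; geometric bound on α
  have hsum_tendsto : Tendsto (fun N => ∑ n ∈ Finset.Icc 2 N, b n) atTop
      (𝓝 (logDeriv f z₀)) := hlogT.congr fun N => hlogP N
  have hb0 : Tendsto (fun N => b (N + 1)) atTop (𝓝 0) := by
    have h1 : Tendsto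
        (fun N => (∑ n ∈ Finset.Icc 2 (N + 1), b n) - ∑ n ∈ Finset.Icc 2 N, b n) atTop
        (𝓝 (logDeriv f z₀ - logDeriv f z₀)) :=
      (hsum_tendsto.comp (tendsto_add_atTop_nat 1)).sub hsum_tendsto
    rw [sub_self] at h1
    apply h1.congr'
    filter_upwards [eventually_ge_atTop 1] with N hN
    rw [Finset.sum_Icc_succ_top (by omega : 2 ≤ N + 1)]
    ring
  obtain ⟨C₀, hC₀⟩ := isBounded_iff_forall_norm_le.mp
    (Metric.isBounded_range_of_tendsto _ hb0)
  have hbbd : ∀ n, 1 ≤ n → ‖b n‖ ≤ C₀ := by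
    intro n hn
    exact hC₀ _ ⟨n - 1, by show b (n - 1 + 1) = b n; rw [Nat.sub_add_cancel hn]⟩
  set C : ℝ := C₀ + 1 with hC_def
  have hC0 : 0 < C := by
    have := (norm_nonneg (b 1)).trans (hbbd 1 le_rfl); rw [hC_def]; linarith
  have hα_bd : ∀ n, 2 ≤ n → ‖α n‖ ≤ C * (1 / r) ^ n := by
    intro n hn
    have hrn : r ^ n < 1 := pow_lt_one₀ hr0.le hr1 (by omega)
    have hrn1 : (0:ℝ) < r ^ (n - 1) := by positivity
    have hden : (-(n:ℂ) * (r:ℂ) ^ (n - 1)) ≠ 0 := by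
      apply mul_ne_zero
      · simp only [ne_eq, neg_eq_zero, Nat.cast_eq_zero]; omega
      · exact_mod_cast pow_ne_zero _ (by exact_mod_cast hr0.ne' : (r:ℂ) ≠ 0)
    have hwne : (1 : ℂ) - (r:ℂ) ^ n ≠ 0 := hne1 z₀ hz₀B n hn
    have hαeq : α n = b n * (1 - (r:ℂ) ^ n) / (-(n:ℂ) * (r:ℂ) ^ (n - 1)) := by
      have hbn : b n = α n * (-(n : ℂ) * (r:ℂ) ^ (n - 1)) / (1 - (r:ℂ) ^ n) := rfl
      rw [hbn, div_mul_cancel₀ _ hwne, mul_div_cancel_right₀ _ hden]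
    have hnorm : ‖α n‖ = ‖b n‖ * ‖(1:ℂ) - (r:ℂ) ^ n‖ / ‖(-(n:ℂ) * (r:ℂ) ^ (n - 1))‖ := by
      rw [hαeq, norm_div, norm_mul]
    have h1 : ‖(1:ℂ) - (r:ℂ) ^ n‖ ≤ 1 := by
      have : ((1:ℂ) - (r:ℂ) ^ n) = ((1 - r ^ n : ℝ) : ℂ) := by push_cast; ring
      rw [this, Complex.norm_real, Real.norm_eq_abs, abs_of_pos (by linarith)]
      nlinarith [pow_pos hr0 n]
    have h2 : ‖(-(n:ℂ) * (r:ℂ) ^ (n - 1))‖ = (n : ℝ) * r ^ (n - 1) := by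
      rw [norm_mul, norm_neg]
      rw [show ((r:ℂ) ^ (n-1)) = ((r ^ (n-1) : ℝ) : ℂ) by push_cast; ring]
      rw [Complex.norm_natCast, Complex.norm_real, Real.norm_eq_abs, abs_of_pos hrn1]
    have h3 : r ^ (n - 1) ≤ (n:ℝ) * r ^ (n - 1) :=
      le_mul_of_one_le_left hrn1.le (by exact_mod_cast (by omega : 1 ≤ n))
    have h4 : ‖α n‖ ≤ ‖b n‖ / r ^ (n - 1) := by
      rw [hnorm, h2]
      apply div_le_div₀ (by positivity) (by nlinarith [norm_nonneg (b n), h1]) hrn1 h3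
    have hC₀0 : 0 ≤ C₀ := (norm_nonneg (b 1)).trans (hbbd 1 le_rfl)
    have h5 : ‖α n‖ ≤ C₀ / r ^ (n - 1) :=
      h4.trans ((div_le_div_iff_of_pos_right hrn1).mpr (hbbd n (by omega)))
    have h6 : C₀ / r ^ (n - 1) ≤ C * (1 / r) ^ n := by
      have e1 : (1:ℝ) ≤ 1 / r := one_le_one_div hr0 hr1.le
      have e2 : (1 / r) ^ (n - 1) ≤ (1 / r) ^ n :=
        pow_le_pow_right₀ e1 (by omega)
      have e3 : (0:ℝ) ≤ (1 / r) ^ (n - 1) := by positivity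
      have e4 : C₀ / r ^ (n - 1) = C₀ * (1 / r) ^ (n - 1) := by
        rw [one_div_pow]; ring
      rw [e4]
      exact mul_le_mul (by rw [hC_def]; linarith) e2 e3 hC0.le
    exact h5.trans h6
    -- ### summable double family
  set t0 : ℝ := (1 / (p m : ℝ)) / r with ht0_def
  have ht00 : 0 ≤ t0 := by rw [ht0_def]; positivity
  have ht01 : t0 < 1 := by rw [ht0_def, div_lt_one hr0]; exact hrl
  clear_value t0
  have hxn : ∀ k, m ≤ k → ∀ n : ℕ, 2 ≤ n → 0 < (c k) ^ n ∧ (c k) ^ n ≤ 1 / 2 := by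
    intro k hk n hn
    refine ⟨pow_pos (hck_pos k hk) n, ?_⟩
    calc (c k) ^ n ≤ c k :=
          pow_le_of_le_one (hck_pos k hk).le
            (le_trans (hck_half k hk) (by norm_num)) (by omega)
      _ ≤ 1 / 2 := hck_half k hk
  set w : ℕ × ℕ → ℂ := fun kn =>
    if m ≤ kn.1 ∧ 2 ≤ kn.2 then α kn.2 * ((Real.log (1 - (c kn.1) ^ kn.2) : ℝ) : ℂ)
    else 0 with hw_def
  set a : ℕ → ℝ := fun k => if m ≤ k then 2 * C * (c k / r) ^ 2 else 0 with ha_def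
  set d : ℕ → ℝ := fun n => if 2 ≤ n then t0 ^ (n - 2) else 0 with hd_def
  have ha0 : ∀ k, 0 ≤ a k := by
    intro k; rw [ha_def]
    dsimp only
    split
    · positivity
    · exact le_refl 0
  have hd0 : ∀ n, 0 ≤ d n := by
    intro n; rw [hd_def]
    dsimp only
    split
    · positivity
    · exact le_refl 0
  have hwb : ∀ kn : ℕ × ℕ, ‖w kn‖ ≤ a kn.1 * d kn.2 := by
    rintro ⟨k, n⟩
    rw [hw_def, ha_def, hd_def]
    dsimp only
    by_cases h : m ≤ k ∧ 2 ≤ n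
    · obtain ⟨hk, hn⟩ := h
      rw [if_pos ⟨hk, hn⟩, if_pos hk, if_pos hn]
      obtain ⟨hx0, hx12⟩ := hxn k hk n hn
      have l1 := hα_bd n hn
      have l2 : |Real.log (1 - (c k) ^ n)| ≤ 2 * (c k) ^ n :=
        abs_log_one_sub_le hx0 hx12
      have l3 : ‖α n * ((Real.log (1 - (c k) ^ n) : ℝ) : ℂ)‖
          = ‖α n‖ * |Real.log (1 - (c k) ^ n)| := by
        rw [norm_mul, Complex.norm_real, Real.norm_eq_abs]
      rw [l3]
      have l4 : ‖α n‖ * |Real.log (1 - (c k) ^ n)|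
          ≤ (C * (1 / r) ^ n) * (2 * (c k) ^ n) :=
        mul_le_mul l1 l2 (abs_nonneg _) (by positivity)
      have l5 : (C * (1 / r) ^ n) * (2 * (c k) ^ n) = 2 * C * (c k / r) ^ n := by
        simp only [div_pow, one_pow]
        ring
      have l6 : (c k / r) ^ n = (c k / r) ^ 2 * (c k / r) ^ (n - 2) := by
        rw [← pow_add]
        congr 1
        omega
      have hckr0 : 0 ≤ c k / r := div_nonneg (hck_pos k hk).le hr0.le
      have l7 : (c k / r) ^ (n - 2) ≤ t0 ^ (n - 2) := by
        apply pow_le_pow_left₀ hckr0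
        rw [ht0_def]
        exact (div_le_div_iff_of_pos_right hr0).mpr (hck_le k hk)
      calc ‖α n‖ * |Real.log (1 - (c k) ^ n)|
          ≤ (C * (1 / r) ^ n) * (2 * (c k) ^ n) := l4
        _ = 2 * C * ((c k / r) ^ 2 * (c k / r) ^ (n - 2)) := by rw [l5, l6]
        _ ≤ 2 * C * ((c k / r) ^ 2 * t0 ^ (n - 2)) := by
            apply mul_le_mul_of_nonneg_left _ (by linarith)
            exact mul_le_mul_of_nonneg_left l7 (pow_nonneg hckr0 2)
        _ = 2 * C * (c k / r) ^ 2 * t0 ^ (n - 2) := by ring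
    · rw [if_neg h]
      rcases not_and_or.mp h with hk | hn
      · rw [if_neg hk, norm_zero, zero_mul]
      · rw [if_neg hn, norm_zero, mul_zero]
  have Sd : Summable d := by
    rw [← summable_nat_add_iff 2]
    apply Summable.congr (summable_geometric_of_lt_one ht00 ht01)
    intro n
    rw [hd_def]
    dsimp only
    rw [if_pos (by omega), Nat.add_sub_cancel]
  have Sc2 : Summable (fun j => (c (m + j)) ^ 2) := by
    have hinj : Function.Injective (fun j => Nat.nth Nat.Prime (j + (m - 1))) := by
      intro i j hij
      have := (Nat.nth_strictMono Nat.infinite_setOf_prime).injective hij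
      omega
    have hbase : Summable (fun n : ℕ => 1 / (n : ℝ) ^ 2) :=
      Real.summable_one_div_nat_pow.mpr one_lt_two
    apply Summable.congr (hbase.comp_injective hinj)
    intro j
    have hpj : (p (m + j) : ℝ) = (Nat.nth Nat.Prime (j + (m - 1)) : ℝ) := by
      rw [hp (m + j) (by omega)]
      congr 2
      omega
    rw [hc_def]
    dsimp only [Function.comp]
    rw [div_pow, one_pow, hpj]
  have Sa : Summable a := by
    rw [← summable_nat_add_iff m]
    apply Summable.congr (Sc2.mul_left (2 * C / r ^ 2))
    intro j
    rw [ha_def]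
    dsimp only
    rw [if_pos (by omega : m ≤ j + m)]
    rw [show j + m = m + j by omega, div_pow]
    ring
  have Sad : Summable (fun kn : ℕ × ℕ => a kn.1 * d kn.2) :=
    Sa.mul_of_nonneg Sd ha0 hd0
  have Sw : Summable w := Summable.of_norm_bounded Sad hwb
  set A : ℂ := ∑' kn, w kn with hA_def
  have hFfiber : ∀ k, Summable (fun n => w (k, n)) := fun k => Sw.prod_factor k
  set F : ℕ → ℂ := fun k => ∑' n, w (k, n) with hF_def
  have hFA : HasSum F A := Sw.hasSum.prod_fiberwise fun k => (hFfiber k).hasSum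
  have hwzero1 : ∀ k n, k < m → w (k, n) = 0 := by
    intro k n hk
    rw [hw_def]
    dsimp only
    rw [if_neg (by omega)]
  have hwzero2 : ∀ k n, n < 2 → w (k, n) = 0 := by
    intro k n hn
    rw [hw_def]
    dsimp only
    rw [if_neg (by omega)]
  have hFzero : ∀ k, k < m → F k = 0 := by
    intro k hk
    rw [hF_def]
    dsimp only
    convert tsum_zero with n
    exact hwzero1 k n hk
  have hkey : ∀ k, m ≤ k → f ((c k : ℝ) : ℂ) = Complex.exp (F k) := by
    intro k hk
    have hx0 : 0 < c k := hck_pos k hk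
    have hxB : ((c k : ℝ) : ℂ) ∈ B := by
      rw [hB_def, mem_ball_zero_iff, Complex.norm_real, Real.norm_eq_abs, abs_of_pos hx0]
      exact (hckr k hk).trans hrR
    have hprod : ∀ N, P N ((c k : ℝ) : ℂ)
        = Complex.exp (∑ n ∈ Finset.Icc 2 N, w (k, n)) := by
      intro N
      rw [hP_def]
      dsimp only
      rw [Complex.exp_sum]
      apply Finset.prod_congr rfl
      intro n hn
      have hn2 : 2 ≤ n := (Finset.mem_Icc.mp hn).1
      have hx12 := hxn k hk n hn2
      have hb0' : (0:ℝ) < 1 - (c k) ^ n := by linarith [hx12.2]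
      have hcast : (1 : ℂ) - ((c k : ℝ) : ℂ) ^ n = ((1 - (c k) ^ n : ℝ) : ℂ) := by
        push_cast
        ring
      rw [hcast, Complex.cpow_def_of_ne_zero (Complex.ofReal_ne_zero.mpr hb0'.ne')]
      rw [← Complex.ofReal_log hb0'.le]
      rw [hw_def]
      dsimp only
      rw [if_pos ⟨hk, hn2⟩, mul_comm]
    have hsum : HasSum (fun n => w (k, n)) (F k) := (hFfiber k).hasSum
    have h1 : Tendsto (fun N => ∑ n ∈ Finset.Icc 2 N, w (k, n)) atTop (𝓝 (F k)) := by
      have h3 := hsum.tendsto_sum_nat.comp (tendsto_add_atTop_nat 1)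
      apply h3.congr
      intro N
      exact (sum_Icc_eq_sum_range (fun n => w (k, n)) 2 N
        (fun n hn => hwzero2 k n hn)).symm
    have h4 : Tendsto (fun N => P N ((c k : ℝ) : ℂ)) atTop (𝓝 (Complex.exp (F k))) := by
      have := (Complex.continuous_exp.continuousAt (x := F k)).tendsto.comp h1
      apply this.congr
      intro N
      exact (hprod N).symm
    exact tendsto_nhds_unique (hTLU.tendsto_at hxB) h4
  refine ⟨Complex.exp A, ?_, ?_⟩
  · -- first limit
    have h4 : Tendsto (fun N => ∑ k ∈ Finset.Icc m N, F k) atTop (𝓝 A) := by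
      have h3 := hFA.tendsto_sum_nat.comp (tendsto_add_atTop_nat 1)
      apply h3.congr
      intro N
      exact (sum_Icc_eq_sum_range F m N (fun k hk => hFzero k hk)).symm
    have h5 := (Complex.continuous_exp.continuousAt (x := A)).tendsto.comp h4
    apply h5.congr
    intro N
    rw [Function.comp_apply, Complex.exp_sum]
    refine (Finset.prod_congr rfl fun k hk => ?_).symm
    have hk' : m ≤ k := (Finset.mem_Icc.mp hk).1
    have hcst : (1 / (p k : ℂ)) = ((c k : ℝ) : ℂ) := by
      rw [hc_def]
      push_cast
      ring
    rw [hcst, hkey k hk']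
  · -- second limit
    have hws : HasSum (fun nk : ℕ × ℕ => w (nk.2, nk.1)) A :=
      (Equiv.prodComm ℕ ℕ).hasSum_iff.mpr Sw.hasSum
    have hwsS : Summable (fun nk : ℕ × ℕ => w (nk.2, nk.1)) := hws.summable
    have hGA : HasSum (fun n => ∑' k, w (k, n)) A :=
      HasSum.prod_fiberwise hws (fun n => (hwsS.prod_factor n).hasSum)
    set G : ℕ → ℂ := fun n => ∑' k, w (k, n) with hG_def
    have hGzero : ∀ n, n < 2 → G n = 0 := by
      intro n hn
      rw [hG_def]
      dsimp only
      convert tsum_zero with k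
      exact hwzero2 k n hn
    -- the log series in the k-direction
    have hlogsum : ∀ n : ℕ, 2 ≤ n →
        Summable (fun j => -Real.log (1 - (c (m + j)) ^ n)) := by
      intro n hn
      apply Summable.of_norm_bounded (Sc2.mul_left 2)
      intro j
      have hx := hxn (m + j) (by omega) n hn
      have h1 : ‖-Real.log (1 - (c (m + j)) ^ n)‖ ≤ 2 * (c (m + j)) ^ n := by
        rw [norm_neg, Real.norm_eq_abs]
        exact abs_log_one_sub_le hx.1 hx.2
      have h2 : (c (m + j)) ^ n ≤ (c (m + j)) ^ 2 :=
        pow_le_pow_of_le_one (hck_pos _ (by omega)).le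
          (le_trans (hck_half _ (by omega)) (by norm_num)) hn
      calc ‖-Real.log (1 - (c (m + j)) ^ n)‖ ≤ 2 * (c (m + j)) ^ n := h1
        _ ≤ 2 * (c (m + j)) ^ 2 := by linarith
    set S : ℕ → ℝ := fun n => ∑' j, -Real.log (1 - (c (m + j)) ^ n) with hS_def
    have hSsum : ∀ n : ℕ, 2 ≤ n →
        HasSum (fun j => -Real.log (1 - (c (m + j)) ^ n)) (S n) :=
      fun n hn => (hlogsum n hn).hasSum
    have hζ : ∀ n : ℕ, 2 ≤ n → ζm n = Real.exp (S n) := by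
      intro n hn
      have h2 := (hSsum n hn).rexp
      have h3 : (fun j => (1 - (1 / (p (m + j) : ℝ)) ^ n)⁻¹)
          = (Real.exp ∘ fun j => -Real.log (1 - (c (m + j)) ^ n)) := by
        funext j
        have hx := hxn (m + j) (by omega) n hn
        have hpos : (0:ℝ) < 1 - (c (m + j)) ^ n := by linarith [hx.2]
        rw [Function.comp_apply, Real.exp_neg, Real.exp_log hpos, hc_def]
      rw [hζm n, h3, h2.tprod_eq]
    have hζpos : ∀ n : ℕ, 2 ≤ n → 0 < ζm n := by
      intro n hn
      rw [hζ n hn]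
      exact Real.exp_pos _
    have hζlog : ∀ n : ℕ, 2 ≤ n → Real.log (ζm n) = S n := by
      intro n hn
      rw [hζ n hn, Real.log_exp]
    -- identify the n-fibers
    have hGn : ∀ n : ℕ, 2 ≤ n → G n = α n * ((-(S n) : ℝ) : ℂ) := by
      intro n hn
      set g : ℕ → ℝ := fun k => if m ≤ k then Real.log (1 - (c k) ^ n) else 0 with hg_def
      have hgshift : (fun j => g (j + m)) = fun j => Real.log (1 - (c (m + j)) ^ n) := by
        funext j
        rw [hg_def]
        dsimp only
        rw [if_pos (by omega), show j + m = m + j by omega]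
      have h1 : HasSum (fun j => g (j + m)) (-(S n)) := by
        rw [hgshift]
        have hnn : (fun j => -(-Real.log (1 - (c (m + j)) ^ n)))
            = fun j => Real.log (1 - (c (m + j)) ^ n) := funext fun j => neg_neg _
        rw [← hnn]
        exact (hSsum n hn).neg
      have h2 : HasSum g (-(S n) + ∑ i ∈ Finset.range m, g i) :=
        (hasSum_nat_add_iff m).mp h1
      have h3 : ∑ i ∈ Finset.range m, g i = 0 := by
        apply Finset.sum_eq_zero
        intro i hi
        rw [hg_def]
        dsimp only
        rw [if_neg (by rw [Finset.mem_range] at hi; omega)]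
      rw [h3, add_zero] at h2
      have h4 : HasSum (fun k => α n * ((g k : ℝ) : ℂ)) (α n * ((-(S n) : ℝ) : ℂ)) :=
        (Complex.hasSum_ofReal.mpr h2).mul_left (α n)
      have h5 : (fun k => α n * ((g k : ℝ) : ℂ)) = fun k => w (k, n) := by
        funext k
        rw [hg_def, hw_def]
        dsimp only
        by_cases hk : m ≤ k
        · rw [if_pos hk, if_pos ⟨hk, hn⟩]
        · rw [if_neg hk, if_neg (by omega)]
          simp
      rw [h5] at h4
      rw [hG_def]
      exact h4.tsum_eq
    -- partial products
    have hprodN : ∀ N, ∏ n ∈ Finset.Icc 2 N, ((ζm n : ℂ)) ^ (-(α n))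
        = Complex.exp (∑ n ∈ Finset.Icc 2 N, G n) := by
      intro N
      rw [Complex.exp_sum]
      apply Finset.prod_congr rfl
      intro n hn
      have hn2 : 2 ≤ n := (Finset.mem_Icc.mp hn).1
      have hzpos := hζpos n hn2
      rw [Complex.cpow_def_of_ne_zero (Complex.ofReal_ne_zero.mpr hzpos.ne')]
      rw [← Complex.ofReal_log hzpos.le, hζlog n hn2, hGn n hn2]
      congr 1
      push_cast
      ring
    have h4 : Tendsto (fun N => ∑ n ∈ Finset.Icc 2 N, G n) atTop (𝓝 A) := by
      have h3 := hGA.tendsto_sum_nat.comp (tendsto_add_atTop_nat 1)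
      apply h3.congr
      intro N
      exact (sum_Icc_eq_sum_range G 2 N (fun n hn => hGzero n hn)).symm
    have h5 := (Complex.continuous_exp.continuousAt (x := A)).tendsto.comp h4
    apply h5.congr
    intro N
    exact (hprodN N).symm
end

section
/- Let 0 < R ≤ 1, let f be analytic and without zeros on an open set containing the closed disk |z| ≤ R, and let (α_n)_{n≥2} be complex numbers such that the partial products ∏_{n=2}^{N} (1−z^n)^{α_n} converge compactly to f on the open disk |z| < R as N → ∞. Let B > 0 be such that |f'(z)/f(z)| ≤ B for all z with |z| = R. Then |α_n| ≤ B/R^n for every n ≥ 2. -/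
open Filter Topology Finset
open Metric Complex


-- basic facts
lemma aux_slit {z : ℂ} (hz : ‖z‖ < 1) {n : ℕ} (hn : 1 ≤ n) : 1 - z ^ n ∈ Complex.slitPlane := by
  rw [Complex.mem_slitPlane_iff]
  left
  have h1 : ‖z ^ n‖ < 1 := by
    rw [norm_pow]
    exact pow_lt_one₀ (norm_nonneg z) hz (by omega)
  have h2 : (z ^ n).re ≤ ‖z ^ n‖ := Complex.re_le_norm _
  simp only [Complex.sub_re, Complex.one_re]
  linarith

lemma aux_ne {z : ℂ} (hz : ‖z‖ < 1) {n : ℕ} (hn : 1 ≤ n) : 1 - z ^ n ≠ 0 :=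
  Complex.slitPlane_ne_zero (aux_slit hz hn)

lemma factor_ne {z : ℂ} (hz : ‖z‖ < 1) {n : ℕ} (hn : 1 ≤ n) (a : ℂ) : (1 - z ^ n) ^ a ≠ 0 := by
  rw [Complex.cpow_def_of_ne_zero (aux_ne hz hn)]
  exact Complex.exp_ne_zero _

lemma hasDerivAt_factor (a : ℂ) {n : ℕ} (hn : 1 ≤ n) {z : ℂ} (hz : ‖z‖ < 1) :
    HasDerivAt (fun w : ℂ => (1 - w ^ n) ^ a)
      (a * (1 - z ^ n) ^ (a - 1) * (-(n * z ^ (n - 1)))) z := by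
  have h1 : HasDerivAt (fun w : ℂ => 1 - w ^ n) (-(n * z ^ (n - 1))) z :=
    (hasDerivAt_pow n z).const_sub 1
  exact h1.cpow_const (aux_slit hz hn)

lemma logDeriv_factor (a : ℂ) {n : ℕ} (hn : 1 ≤ n) {z : ℂ} (hz : ‖z‖ < 1) :
    logDeriv (fun w : ℂ => (1 - w ^ n) ^ a) z = -(a * n * z ^ (n - 1) / (1 - z ^ n)) := by
  have hne := aux_ne hz hn
  have hfa := factor_ne hz hn a
  rw [logDeriv_apply, (hasDerivAt_factor a hn hz).deriv, Complex.cpow_sub _ _ hne,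
    Complex.cpow_one]
  field_simp


noncomputable def Pprod (α : ℕ → ℂ) (N : ℕ) (z : ℂ) : ℂ :=
  ∏ n ∈ Finset.Icc 2 N, (1 - z ^ n) ^ (α n)

lemma Pprod_ne (α : ℕ → ℂ) (N : ℕ) {z : ℂ} (hz : ‖z‖ < 1) : Pprod α N z ≠ 0 :=
  Finset.prod_ne_zero_iff.mpr fun n hn =>
    factor_ne hz (by have := Finset.mem_Icc.mp hn; omega) (α n)

lemma Pprod_diff (α : ℕ → ℂ) (N : ℕ) {z : ℂ} (hz : ‖z‖ < 1) :
    DifferentiableAt ℂ (Pprod α N) z := by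
  have : DifferentiableAt ℂ (fun w => ∏ n ∈ Finset.Icc 2 N, (1 - w ^ n) ^ (α n)) z :=
    DifferentiableAt.fun_finsetProd fun i hi =>
      (hasDerivAt_factor (α i) (by have := Finset.mem_Icc.mp hi; omega) hz).differentiableAt
  exact this

lemma logDeriv_Pprod (α : ℕ → ℂ) (N : ℕ) {z : ℂ} (hz : ‖z‖ < 1) :
    logDeriv (Pprod α N) z
      = ∑ n ∈ Finset.Icc 2 N, -(α n * n * z ^ (n - 1) / (1 - z ^ n)) := by
  have h := logDeriv_prod (s := Finset.Icc 2 N) (f := fun (n : ℕ) (w : ℂ) => (1 - w ^ n) ^ (α n)) (x := z)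
      (fun i hi => factor_ne hz (by have := Finset.mem_Icc.mp hi; omega) (α i))
      (fun i hi => (hasDerivAt_factor (α i) (by have := Finset.mem_Icc.mp hi; omega) hz).differentiableAt)
  beta_reduce at h
  exact h.trans (Finset.sum_congr rfl fun i hi =>
    logDeriv_factor (α i) (by have := Finset.mem_Icc.mp hi; omega) hz)

lemma circleIntegral_finset_sum {ι : Type*} (s : Finset ι) (F : ι → ℂ → ℂ) (c : ℂ) (R : ℝ)
    (h : ∀ i ∈ s, CircleIntegrable (F i) c R) :
    (∮ z in C(c, R), ∑ i ∈ s, F i z) = ∑ i ∈ s, ∮ z in C(c, R), F i z := by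
  simp only [circleIntegral, Finset.smul_sum]
  exact intervalIntegral.integral_finset_sum fun i hi => (h i hi).out

lemma integral_zpow_zero_center {r : ℝ} (hr : 0 < r) (e : ℤ) :
    (∮ z in C((0 : ℂ), r), z ^ e) = if e = -1 then 2 * Real.pi * Complex.I else 0 := by
  split_ifs with h
  · subst h
    have := circleIntegral.integral_sub_center_inv (0 : ℂ) (R := r) hr.ne'
    simpa [zpow_neg_one] using this
  · simpa using circleIntegral.integral_sub_zpow_of_ne h 0 0 r

lemma tendsto_circleIntegral_of_unif {r : ℝ} (hr : 0 < r) {F : ℕ → ℂ → ℂ} {g : ℂ → ℂ}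
    (hFi : ∀ N, CircleIntegrable (F N) 0 r) (hgi : CircleIntegrable g 0 r)
    (h : TendstoUniformlyOn F g atTop (sphere (0 : ℂ) r)) :
    Tendsto (fun N => ∮ z in C((0 : ℂ), r), F N z) atTop
      (𝓝 (∮ z in C((0 : ℂ), r), g z)) := by
  rw [Metric.tendsto_nhds]
  intro ε hε
  have hε' : 0 < ε / (2 * Real.pi * r + 1) := by positivity
  filter_upwards [(Metric.tendstoUniformlyOn_iff.mp h) _ hε'] with N hN
  have key : ‖(∮ z in C((0 : ℂ), r), F N z) - ∮ z in C((0 : ℂ), r), g z‖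
      ≤ 2 * Real.pi * r * (ε / (2 * Real.pi * r + 1)) := by
    rw [← circleIntegral.integral_sub (hFi N) hgi]
    refine circleIntegral.norm_integral_le_of_norm_le_const hr.le fun z hz => ?_
    have := hN z hz
    rw [dist_eq_norm] at this
    rw [norm_sub_rev]
    exact this.le
  rw [dist_eq_norm]
  calc ‖(∮ z in C((0 : ℂ), r), F N z) - ∮ z in C((0 : ℂ), r), g z‖
      ≤ 2 * Real.pi * r * (ε / (2 * Real.pi * r + 1)) := key
    _ < ε := by
        have h1 : 0 < 2 * Real.pi * r + 1 := by positivity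
        rw [mul_comm, div_mul_eq_mul_div, div_lt_iff₀ h1]
        have hpr : 0 < 2 * Real.pi * r := by positivity
        nlinarith

lemma unif_mul_bounded {K : Set ℂ} {F : ℕ → ℂ → ℂ} {f g : ℂ → ℂ} {C : ℝ} (hC0 : 0 < C)
    (hC : ∀ z ∈ K, ‖g z‖ ≤ C)
    (h : TendstoUniformlyOn F f atTop K) :
    TendstoUniformlyOn (fun N z => F N z * g z) (fun z => f z * g z) atTop K := by
  rw [Metric.tendstoUniformlyOn_iff] at h ⊢
  intro ε hε
  filter_upwards [h (ε / (C + 1)) (by positivity)] with N hN z hz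
  have h1 := hN z hz
  rw [dist_eq_norm] at h1 ⊢
  have h2 : f z * g z - F N z * g z = (f z - F N z) * g z := by ring
  rw [h2, norm_mul]
  calc ‖f z - F N z‖ * ‖g z‖ ≤ (ε / (C + 1)) * C := by
        apply mul_le_mul h1.le (hC z hz) (norm_nonneg _) (by positivity)
    _ < ε := by
        rw [div_mul_eq_mul_div, div_lt_iff₀ (by positivity)]
        nlinarith

lemma unif_div {K : Set ℂ} {P : ℕ → ℂ → ℂ} {Pd : ℕ → ℂ → ℂ} {f fd : ℂ → ℂ}
    (hK : IsCompact K) (hKne : K.Nonempty)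
    (h1 : TendstoUniformlyOn P f atTop K)
    (h2 : TendstoUniformlyOn Pd fd atTop K)
    (hfc : ContinuousOn f K) (hfdc : ContinuousOn fd K)
    (hfz : ∀ z ∈ K, f z ≠ 0) :
    TendstoUniformlyOn (fun N z => Pd N z / P N z) (fun z => fd z / f z) atTop K := by
  obtain ⟨z0, hz0, hmin⟩ := hK.exists_isMinOn hKne hfc.norm
  set δ := ‖f z0‖ with hδdef
  have hδ : 0 < δ := norm_pos_iff.mpr (hfz z0 hz0)
  have hδle : ∀ z ∈ K, δ ≤ ‖f z‖ := fun z hz => hmin hz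
  obtain ⟨z1, hz1, hmax⟩ := hK.exists_isMaxOn hKne hfdc.norm
  set M := ‖fd z1‖ with hMdef
  have hM0 : 0 ≤ M := norm_nonneg _
  have hMle : ∀ z ∈ K, ‖fd z‖ ≤ M := fun z hz => hmax hz
  rw [Metric.tendstoUniformlyOn_iff] at h1 h2 ⊢
  intro ε hε
  set ε1 : ℝ := min (δ / 2) (ε * δ * δ / (8 * (M + 1))) with hε1def
  have hε1 : 0 < ε1 := lt_min (by positivity) (by positivity)
  set ε2 : ℝ := ε * δ / 8 with hε2def
  have hε2 : 0 < ε2 := by positivity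
  filter_upwards [h1 ε1 hε1, h2 ε2 hε2] with N hN1 hN2 z hz
  have hb1 := hN1 z hz
  have hb2 := hN2 z hz
  rw [dist_eq_norm] at hb1 hb2 ⊢
  have hfzne : f z ≠ 0 := hfz z hz
  have hPlb : δ / 2 ≤ ‖P N z‖ := by
    have h3 : ‖f z‖ - ‖P N z‖ ≤ ‖f z - P N z‖ := by
      have := norm_sub_norm_le (f z) (P N z)
      linarith [this]
    have h4 : ‖f z - P N z‖ < δ / 2 := lt_of_lt_of_le hb1 (min_le_left _ _)
    have h5 := hδle z hz
    linarith
  have hPne : P N z ≠ 0 := by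
    intro h
    rw [h, norm_zero] at hPlb
    linarith
  have key : fd z / f z - Pd N z / P N z
      = (fd z * (P N z - f z) + f z * (fd z - Pd N z)) / (f z * P N z) := by
    field_simp
    ring
  rw [key, norm_div, norm_mul]
  have hnum : ‖fd z * (P N z - f z) + f z * (fd z - Pd N z)‖
      ≤ M * ε1 + ‖f z‖ * ε2 := by
    calc ‖fd z * (P N z - f z) + f z * (fd z - Pd N z)‖
        ≤ ‖fd z * (P N z - f z)‖ + ‖f z * (fd z - Pd N z)‖ := norm_add_le _ _
      _ = ‖fd z‖ * ‖P N z - f z‖ + ‖f z‖ * ‖fd z - Pd N z‖ := by rw [norm_mul, norm_mul]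
      _ ≤ M * ε1 + ‖f z‖ * ε2 := by
          have e1 : ‖P N z - f z‖ ≤ ε1 := by rw [norm_sub_rev]; exact hb1.le
          exact add_le_add
            (mul_le_mul (hMle z hz) e1 (norm_nonneg _) hM0)
            (mul_le_mul_of_nonneg_left hb2.le (norm_nonneg _))
  have hden : 0 < ‖f z‖ * ‖P N z‖ := by
    have := hδle z hz
    have h6 : (0:ℝ) < ‖f z‖ := by linarith
    have h7 : (0:ℝ) < ‖P N z‖ := by linarith
    positivity
  calc ‖fd z * (P N z - f z) + f z * (fd z - Pd N z)‖ / (‖f z‖ * ‖P N z‖)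
      ≤ (M * ε1 + ‖f z‖ * ε2) / (‖f z‖ * ‖P N z‖) := by gcongr
    _ ≤ M * ε1 / (‖f z‖ * ‖P N z‖) + ε2 / ‖P N z‖ := by
        rw [add_div]
        have h8 : ‖f z‖ * ε2 / (‖f z‖ * ‖P N z‖) = ε2 / ‖P N z‖ := by
          rw [mul_div_mul_left]
          exact norm_ne_zero_iff.mpr hfzne
        rw [h8]
    _ < ε := by
        have hδfz := hδle z hz
        have hε1le : ε1 ≤ ε * δ * δ / (8 * (M + 1)) := min_le_right _ _
        have t1 : M * ε1 / (‖f z‖ * ‖P N z‖) ≤ ε / 4 := by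
          have hd2 : δ * (δ / 2) ≤ ‖f z‖ * ‖P N z‖ := by
            apply mul_le_mul hδfz hPlb (by positivity) (norm_nonneg _)
          have hnum2 : M * ε1 ≤ ε * δ * δ / 8 := by
            calc M * ε1 ≤ (M + 1) * (ε * δ * δ / (8 * (M + 1))) := by
                  apply mul_le_mul (by linarith) hε1le hε1.le (by linarith)
              _ = ε * δ * δ / 8 := by field_simp
          calc M * ε1 / (‖f z‖ * ‖P N z‖) ≤ (ε * δ * δ / 8) / (δ * (δ / 2)) := by
                apply div_le_div₀ (by positivity) hnum2 (by positivity) hd2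
            _ = ε / 4 := by field_simp; ring
        have t2 : ε2 / ‖P N z‖ ≤ ε / 4 := by
          calc ε2 / ‖P N z‖ ≤ ε2 / (δ / 2) := by
                apply div_le_div_of_nonneg_left hε2.le (by positivity) hPlb
            _ = ε / 4 * (δ / δ) := by rw [hε2def]; field_simp; ring
            _ ≤ ε / 4 := by rw [div_self hδ.ne']; linarith
        linarith


lemma circleIntegral_add {f g : ℂ → ℂ} {c : ℂ} {R : ℝ}
    (hf : CircleIntegrable f c R) (hg : CircleIntegrable g c R) :
    (∮ z in C(c, R), (f z + g z)) = (∮ z in C(c, R), f z) + ∮ z in C(c, R), g z := by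
  simp only [circleIntegral, smul_add]
  exact intervalIntegral.integral_add hf.out hg.out

lemma sphere_ident (m d : ℕ) {z : ℂ} (hz0 : z ≠ 0) (hzn : 1 - z ^ (m + 1) ≠ 0) :
    z ^ m * ((1 - z ^ (m + 1)) * z ^ d)⁻¹
      = (∑ k ∈ Finset.range d, z ^ ((((m + 1) * (k + 1) : ℕ) : ℤ) - 1 - (d : ℤ)))
        + z ^ (m * (d + 1)) * (1 - z ^ (m + 1))⁻¹ := by
  have hu : z ^ (m + 1) ≠ 1 := by
    intro h
    apply hzn
    rw [h]; ring
  have hu' : z ^ (m + 1) - 1 ≠ 0 := sub_ne_zero.mpr hu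
  have hzd : (z : ℂ) ^ d ≠ 0 := pow_ne_zero _ hz0
  have hk : ∀ k ∈ Finset.range d,
      z ^ ((((m + 1) * (k + 1) : ℕ) : ℤ) - 1 - (d : ℤ))
        = z ^ (m + (m + 1) * k) * ((z : ℂ) ^ d)⁻¹ := by
    intro k _
    have he : ((((m + 1) * (k + 1) : ℕ) : ℤ) - 1 - (d : ℤ))
        = ((m + (m + 1) * k : ℕ) : ℤ) - ((d : ℕ) : ℤ) := by push_cast; ring
    rw [he, zpow_sub₀ hz0, zpow_natCast, zpow_natCast, div_eq_mul_inv]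
  rw [Finset.sum_congr rfl hk, ← Finset.sum_mul]
  have hgeo : ∑ k ∈ Finset.range d, z ^ (m + (m + 1) * k)
      = z ^ m * ((z ^ (m + 1)) ^ d - 1) / (z ^ (m + 1) - 1) := by
    have hterm : ∀ k, z ^ (m + (m + 1) * k) = z ^ m * (z ^ (m + 1)) ^ k := by
      intro k; rw [pow_add, pow_mul]
    simp_rw [hterm, ← Finset.mul_sum, geom_sum_eq hu d, mul_div_assoc]
  rw [hgeo]
  field_simp
  ring_nf

lemma integral_E {n d : ℕ} (hn : 2 ≤ n) (hd : 1 ≤ d) {r : ℝ} (hr0 : 0 < r) (hr1 : r < 1) :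
    (∮ z in C((0 : ℂ), r), z ^ (n - 1) * ((1 - z ^ n) * z ^ d)⁻¹)
      = if n ∣ d then 2 * Real.pi * Complex.I else 0 := by
  obtain ⟨m, rfl⟩ : ∃ m, n = m + 1 := ⟨n - 1, by omega⟩
  have hm : m + 1 - 1 = m := by omega
  rw [hm]
  set e : ℕ → ℤ := fun k => (((m + 1) * (k + 1) : ℕ) : ℤ) - 1 - (d : ℤ) with he_def
  have hsph : ∀ z ∈ sphere (0 : ℂ) r, ‖z‖ = r ∧ z ≠ 0 ∧ ‖z‖ < 1 := by
    intro z hz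
    have h1 : ‖z‖ = r := mem_sphere_zero_iff_norm.mp hz
    exact ⟨h1, by intro h; rw [h, norm_zero] at h1; linarith, by rw [h1]; exact hr1⟩
  have hEq : Set.EqOn (fun z : ℂ => z ^ m * ((1 - z ^ (m + 1)) * z ^ d)⁻¹)
      (fun z : ℂ => (∑ k ∈ Finset.range d, z ^ (e k))
        + z ^ (m * (d + 1)) * (1 - z ^ (m + 1))⁻¹) (sphere (0 : ℂ) r) := by
    intro z hz
    obtain ⟨h1, h2, h3⟩ := hsph z hz
    exact sphere_ident m d h2 (aux_ne h3 (by omega))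
  rw [circleIntegral.integral_congr hr0.le hEq]
  have hIk : ∀ k ∈ Finset.range d, CircleIntegrable (fun z : ℂ => z ^ (e k)) 0 r := by
    intro k _
    refine ContinuousOn.circleIntegrable hr0.le ?_
    intro z hz
    exact (continuousAt_zpow₀ z (e k) (Or.inl (hsph z hz).2.1)).continuousWithinAt
  have hremC : ContinuousOn (fun z : ℂ => z ^ (m * (d + 1)) * (1 - z ^ (m + 1))⁻¹)
      (Metric.closedBall (0 : ℂ) r) := by
    intro z hz
    have hz1 : ‖z‖ < 1 := lt_of_le_of_lt (mem_closedBall_zero_iff.mp hz) hr1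
    exact ((differentiableAt_pow (𝕜 := ℂ) _).mul
      (((differentiableAt_const (1 : ℂ)).sub (differentiableAt_pow (𝕜 := ℂ) _)).inv
        (aux_ne hz1 (by omega)))).continuousAt.continuousWithinAt
  have hIrem : CircleIntegrable (fun z : ℂ => z ^ (m * (d + 1)) * (1 - z ^ (m + 1))⁻¹) 0 r :=
    ContinuousOn.circleIntegrable hr0.le (hremC.mono sphere_subset_closedBall)
  have hIsum : CircleIntegrable (fun z : ℂ => ∑ k ∈ Finset.range d, z ^ (e k)) 0 r := by
    refine ContinuousOn.circleIntegrable hr0.le ?_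
    refine continuousOn_finset_sum _ fun k _ => ?_
    intro z hz
    exact (continuousAt_zpow₀ z (e k) (Or.inl (hsph z hz).2.1)).continuousWithinAt
  rw [circleIntegral_add hIsum hIrem]
  have hrem0 : (∮ z in C((0 : ℂ), r), z ^ (m * (d + 1)) * (1 - z ^ (m + 1))⁻¹) = 0 := by
    refine Complex.circleIntegral_eq_zero_of_differentiable_on_off_countable hr0.le
      Set.countable_empty hremC fun z hz => ?_
    have hz1 : ‖z‖ < 1 := lt_of_lt_of_le (mem_ball_zero_iff.mp hz.1) hr1.le
    exact (differentiableAt_pow (𝕜 := ℂ) _).mul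
      (((differentiableAt_const (1 : ℂ)).sub (differentiableAt_pow (𝕜 := ℂ) _)).inv
        (aux_ne hz1 (by omega)))
  rw [hrem0, add_zero, circleIntegral_finset_sum _ _ _ _ hIk]
  have heval : ∀ k ∈ Finset.range d, (∮ z in C((0 : ℂ), r), z ^ (e k))
      = if (m + 1) * (k + 1) = d then 2 * Real.pi * Complex.I else 0 := by
    intro k _
    rw [integral_zpow_zero_center hr0 (e k)]
    congr 1
    rw [he_def]
    set A := (m + 1) * (k + 1) with hA
    simp only [eq_iff_iff]
    omega
  rw [Finset.sum_congr rfl heval]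
  by_cases hdvd : (m + 1) ∣ d
  · obtain ⟨c, rfl⟩ := hdvd
    have hc : 1 ≤ c := by
      by_contra h
      push_neg at h
      interval_cases c <;> omega
    have hmem : c - 1 ∈ Finset.range ((m + 1) * c) := by
      rw [Finset.mem_range]
      have h1 : c ≤ (m + 1) * c := Nat.le_mul_of_pos_left c (by omega)
      omega
    rw [if_pos ⟨c, rfl⟩,
      Finset.sum_eq_single_of_mem (c - 1) hmem (fun k _ hne => if_neg fun h => hne (by
        have := Nat.eq_of_mul_eq_mul_left (show 0 < m + 1 by omega) h
        omega)),
      if_pos (by rw [Nat.sub_add_cancel hc])]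
  · rw [if_neg hdvd]
    refine Finset.sum_eq_zero fun k _ => if_neg fun h => hdvd ⟨k + 1, h.symm⟩

theorem stmt_19 (R : ℝ) (hR0 : 0 < R) (hR1 : R ≤ 1)
    (U : Set ℂ) (hU : IsOpen U) (hsub : Metric.closedBall (0 : ℂ) R ⊆ U)
    (f : ℂ → ℂ) (hf : AnalyticOnNhd ℂ f U) (hfne : ∀ z ∈ U, f z ≠ 0)
    (α : ℕ → ℂ)
    (hα : ∀ K ⊆ Metric.ball (0 : ℂ) R, IsCompact K →
      TendstoUniformlyOn
        (fun N z => ∏ n ∈ Finset.Icc 2 N, (1 - z ^ n) ^ (α n)) f atTop K)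
    (B : ℝ) (hB : 0 < B)
    (hbound : ∀ z : ℂ, ‖z‖ = R → ‖deriv f z / f z‖ ≤ B) :
    ∀ n : ℕ, n ≥ 2 → ‖α n‖ ≤ B / R ^ n := by
  intro n hn
  -- the logarithmic derivative of f
  set g : ℂ → ℂ := fun z => deriv f z / f z with hg_def
  have hganal : AnalyticOnNhd ℂ g U := (hf.deriv).div hf hfne
  have hgdiff : DifferentiableOn ℂ g (Metric.closedBall (0 : ℂ) R) :=
    (hganal.differentiableOn).mono hsub
  -- maximum modulus principle: ‖g‖ ≤ B on the closed ball
  have hgB : ∀ z ∈ Metric.closedBall (0 : ℂ) R, ‖g z‖ ≤ B := by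
    intro z hz
    have hdc : DiffContOnCl ℂ g (Metric.ball (0 : ℂ) R) :=
      ⟨hgdiff.mono Metric.ball_subset_closedBall, by
        rw [closure_ball (0 : ℂ) hR0.ne']
        exact hgdiff.continuousOn⟩
    refine Complex.norm_le_of_forall_mem_frontier_norm_le Metric.isBounded_ball hdc ?_ ?_
    · intro w hw
      rw [frontier_ball (0 : ℂ) hR0.ne'] at hw
      exact hbound w (mem_sphere_zero_iff_norm.mp hw)
    · rw [closure_ball (0 : ℂ) hR0.ne']
      exact hz
  -- divisor sums
  set S : ℕ → ℂ := fun d => ∑ i ∈ d.divisors, (if 2 ≤ i then (i : ℂ) * α i else 0) with hS_def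
  -- the key estimate for each radius r < R
  have key : ∀ r : ℝ, 0 < r → r < R → ‖α n‖ ≤ B * r / r ^ n := by
    intro r hr0 hrR
    have hr1 : r < 1 := lt_of_lt_of_le hrR hR1
    -- subsets
    have hsph_ball : sphere (0 : ℂ) r ⊆ Metric.ball (0 : ℂ) R := fun z hz => by
      rw [mem_ball_zero_iff]
      rw [mem_sphere_zero_iff_norm] at hz
      rw [hz]; exact hrR
    have hsph_cb : sphere (0 : ℂ) r ⊆ Metric.closedBall (0 : ℂ) R :=
      hsph_ball.trans Metric.ball_subset_closedBall
    have hsph_norm : ∀ z ∈ sphere (0 : ℂ) r, ‖z‖ = r := fun z hz =>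
      mem_sphere_zero_iff_norm.mp hz
    have hsph_lt1 : ∀ z ∈ sphere (0 : ℂ) r, ‖z‖ < 1 := fun z hz => by
      rw [hsph_norm z hz]; exact hr1
    have hsph_ne : ∀ z ∈ sphere (0 : ℂ) r, z ≠ 0 := fun z hz h => by
      have := hsph_norm z hz
      rw [h, norm_zero] at this
      linarith
    -- uniform convergence of the products and their derivatives on the sphere
    have hP1 : TendstoUniformlyOn (Pprod α) f atTop (sphere (0 : ℂ) r) :=
      hα (sphere (0 : ℂ) r) hsph_ball (isCompact_sphere _ _)
    have hlocal : TendstoLocallyUniformlyOn (Pprod α) f atTop (Metric.ball (0 : ℂ) R) :=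
      (tendstoLocallyUniformlyOn_iff_forall_isCompact Metric.isOpen_ball).mpr
        fun K hK hKc => hα K hK hKc
    have hPdiff : ∀ᶠ N in atTop, DifferentiableOn ℂ (Pprod α N) (Metric.ball (0 : ℂ) R) :=
      Eventually.of_forall fun N z hz =>
        (Pprod_diff α N (lt_of_lt_of_le (mem_ball_zero_iff.mp hz) hR1)).differentiableWithinAt
    have hD : TendstoUniformlyOn (fun N => deriv (Pprod α N)) (deriv f) atTop
        (sphere (0 : ℂ) r) :=
      (tendstoLocallyUniformlyOn_iff_forall_isCompact Metric.isOpen_ball).mp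
        (hlocal.deriv hPdiff Metric.isOpen_ball) _ hsph_ball (isCompact_sphere _ _)
    -- continuity of f and deriv f on the sphere
    have hfc : ContinuousOn f (sphere (0 : ℂ) r) :=
      ((hf.differentiableOn).continuousOn).mono (hsph_cb.trans hsub)
    have hfdc : ContinuousOn (deriv f) (sphere (0 : ℂ) r) :=
      ((hf.deriv.differentiableOn).continuousOn).mono (hsph_cb.trans hsub)
    have hfz : ∀ z ∈ sphere (0 : ℂ) r, f z ≠ 0 := fun z hz =>
      hfne z (hsub (hsph_cb hz))
    have hquot : TendstoUniformlyOn (fun N z => deriv (Pprod α N) z / Pprod α N z)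
        (fun z => deriv f z / f z) atTop (sphere (0 : ℂ) r) :=
      unif_div (isCompact_sphere _ _) (NormedSpace.sphere_nonempty.mpr hr0.le)
        hP1 hD hfc hfdc hfz
    -- the bound for S d, for every d ≥ 1
    have hSd : ∀ d : ℕ, 1 ≤ d → ‖S d‖ ≤ B * r / r ^ d := by
      intro d hd
      have hrd : (0:ℝ) < r ^ d := pow_pos hr0 d
      -- multiply by z^(-d)
      have hmul : TendstoUniformlyOn
          (fun N z => (deriv (Pprod α N) z / Pprod α N z) * ((z : ℂ) ^ d)⁻¹)
          (fun z => (deriv f z / f z) * ((z : ℂ) ^ d)⁻¹) atTop (sphere (0 : ℂ) r) := by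
        refine unif_mul_bounded (C := (r ^ d)⁻¹) (by positivity) ?_ hquot
        intro z hz
        rw [norm_inv, norm_pow, hsph_norm z hz]
      set Qfun : ℕ → ℂ → ℂ := fun N z =>
        ∑ i ∈ Finset.Icc 2 N, -(α i * i) * (z ^ (i - 1) * ((1 - z ^ i) * z ^ d)⁻¹) with hQ_def
      have hEqQ : ∀ N, Set.EqOn
          (fun z => (deriv (Pprod α N) z / Pprod α N z) * ((z : ℂ) ^ d)⁻¹)
          (Qfun N) (sphere (0 : ℂ) r) := by
        intro N z hz
        have hz1 := hsph_lt1 z hz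
        have hld := logDeriv_Pprod α N hz1
        rw [logDeriv_apply] at hld
        show (deriv (Pprod α N) z / Pprod α N z) * ((z : ℂ) ^ d)⁻¹ = _
        rw [hld, Finset.sum_mul]
        refine Finset.sum_congr rfl fun i hi => ?_
        rw [mul_inv]
        ring
      have hQunif : TendstoUniformlyOn Qfun
          (fun z => (deriv f z / f z) * ((z : ℂ) ^ d)⁻¹) atTop (sphere (0 : ℂ) r) :=
        hmul.congr (Eventually.of_forall fun N => hEqQ N)
      -- integrability
      have hEcont : ∀ i : ℕ, 2 ≤ i → ContinuousOn
          (fun z : ℂ => z ^ (i - 1) * ((1 - z ^ i) * z ^ d)⁻¹) (sphere (0 : ℂ) r) := by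
        intro i hi
        refine ((continuous_pow _).continuousOn).mul (ContinuousOn.inv₀ ?_ ?_)
        · exact (continuousOn_const.sub (continuous_pow _).continuousOn).mul
            (continuous_pow _).continuousOn
        · intro z hz
          exact mul_ne_zero (aux_ne (hsph_lt1 z hz) (by omega))
            (pow_ne_zero _ (hsph_ne z hz))
      have hQint : ∀ N, CircleIntegrable (Qfun N) 0 r := by
        intro N
        refine ContinuousOn.circleIntegrable hr0.le ?_
        refine continuousOn_finset_sum _ fun i hi => ?_
        exact continuousOn_const.mul (hEcont i (Finset.mem_Icc.mp hi).1)
      have hgint : CircleIntegrable (fun z => (deriv f z / f z) * ((z : ℂ) ^ d)⁻¹) 0 r := by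
        refine ContinuousOn.circleIntegrable hr0.le ?_
        refine (hgdiff.continuousOn.mono hsph_cb).mul (ContinuousOn.inv₀
          ((continuous_pow _).continuousOn) fun z hz => pow_ne_zero _ (hsph_ne z hz))
      have hTend : Tendsto (fun N => ∮ z in C((0 : ℂ), r), Qfun N z) atTop
          (𝓝 (∮ z in C((0 : ℂ), r), (deriv f z / f z) * ((z : ℂ) ^ d)⁻¹)) :=
        tendsto_circleIntegral_of_unif hr0 hQint hgint hQunif
      -- value of the integral for large N
      have hQval : ∀ N, d ≤ N →
          (∮ z in C((0 : ℂ), r), Qfun N z)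
            = -(2 * Real.pi * Complex.I) * S d := by
        intro N hdN
        have hint : ∀ i ∈ Finset.Icc 2 N, CircleIntegrable
            (fun z : ℂ => -(α i * i) * (z ^ (i - 1) * ((1 - z ^ i) * z ^ d)⁻¹)) 0 r :=
          fun i hi => ContinuousOn.circleIntegrable hr0.le
            (continuousOn_const.mul (hEcont i (Finset.mem_Icc.mp hi).1))
        rw [hQ_def]
        rw [circleIntegral_finset_sum (Finset.Icc 2 N)
          (fun i z => -(α i * i) * (z ^ (i - 1) * ((1 - z ^ i) * z ^ d)⁻¹)) _ _ hint]
        have hterm : ∀ i ∈ Finset.Icc 2 N,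
            (∮ z in C((0 : ℂ), r), -(α i * i) * (z ^ (i - 1) * ((1 - z ^ i) * z ^ d)⁻¹))
              = if i ∣ d then -(α i * i) * (2 * Real.pi * Complex.I) else 0 := by
          intro i hi
          rw [circleIntegral.integral_const_mul, integral_E (Finset.mem_Icc.mp hi).1 hd hr0 hr1,
            mul_ite, mul_zero]
        rw [Finset.sum_congr rfl hterm]
        -- reindex to a sum over divisors
        have hsets : (Finset.Icc 2 N).filter (· ∣ d) = d.divisors.filter (fun i => 2 ≤ i) := by
          ext i
          simp only [Finset.mem_filter, Finset.mem_Icc, Nat.mem_divisors]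
          constructor
          · rintro ⟨⟨h2, _⟩, hdvd⟩
            exact ⟨⟨hdvd, by omega⟩, h2⟩
          · rintro ⟨⟨hdvd, hd0⟩, h2⟩
            have hile : i ≤ d := Nat.le_of_dvd (by omega) hdvd
            exact ⟨⟨h2, by omega⟩, hdvd⟩
        calc (∑ i ∈ Finset.Icc 2 N,
              if i ∣ d then -(α i * i) * (2 * Real.pi * Complex.I) else 0)
            = ∑ i ∈ (Finset.Icc 2 N).filter (· ∣ d),
              -(α i * i) * (2 * Real.pi * Complex.I) := (Finset.sum_filter _ _).symm
          _ = ∑ i ∈ d.divisors.filter (fun i => 2 ≤ i),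
              -(α i * i) * (2 * Real.pi * Complex.I) := by rw [hsets]
          _ = -(2 * Real.pi * Complex.I) * ∑ i ∈ d.divisors.filter (fun i => 2 ≤ i),
              ((i : ℂ) * α i) := by
              rw [Finset.mul_sum]
              exact Finset.sum_congr rfl fun i _ => by ring
          _ = -(2 * Real.pi * Complex.I) * S d := by
              rw [hS_def]
              congr 1
              rw [Finset.sum_filter]
      -- conclude the identity for the limit integral
      have hIval : (∮ z in C((0 : ℂ), r), (deriv f z / f z) * ((z : ℂ) ^ d)⁻¹)
          = -(2 * Real.pi * Complex.I) * S d := by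
        have hconst : (fun N => ∮ z in C((0 : ℂ), r), Qfun N z)
            =ᶠ[atTop] fun _ => -(2 * Real.pi * Complex.I) * S d :=
          (eventually_ge_atTop d).mono hQval
        exact tendsto_nhds_unique (hTend.congr' hconst) tendsto_const_nhds
      -- norm bound on the integral
      have hnormI : ‖∮ z in C((0 : ℂ), r), (deriv f z / f z) * ((z : ℂ) ^ d)⁻¹‖
          ≤ 2 * Real.pi * r * (B / r ^ d) := by
        refine circleIntegral.norm_integral_le_of_norm_le_const hr0.le fun z hz => ?_
        rw [norm_mul, norm_inv, norm_pow, hsph_norm z hz]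
        rw [div_eq_mul_inv]
        exact mul_le_mul_of_nonneg_right (hgB z (hsph_cb hz)) (by positivity)
      rw [hIval] at hnormI
      have h2pi : ‖(-(2 * (Real.pi : ℂ) * Complex.I))‖ = 2 * Real.pi := by
        rw [norm_neg, norm_mul, norm_mul, Complex.norm_I, mul_one]
        simp [Complex.norm_real, Real.pi_nonneg, _root_.abs_of_nonneg]
      rw [norm_mul, h2pi] at hnormI
      have hπ : (0:ℝ) < 2 * Real.pi := Real.two_pi_pos
      have : 2 * Real.pi * ‖S d‖ ≤ 2 * Real.pi * (r * (B / r ^ d)) := by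
        calc 2 * Real.pi * ‖S d‖ ≤ 2 * Real.pi * r * (B / r ^ d) := hnormI
          _ = 2 * Real.pi * (r * (B / r ^ d)) := by ring
      have := le_of_mul_le_mul_left (by linarith : 2 * Real.pi * ‖S d‖ ≤ 2 * Real.pi * (r * (B / r ^ d))) hπ
      calc ‖S d‖ ≤ r * (B / r ^ d) := this
        _ = B * r / r ^ d := by ring
    -- Moebius inversion
    have hinv := (ArithmeticFunction.sum_eq_iff_sum_smul_moebius_eq
      (f := fun i => if 2 ≤ i then (i : ℂ) * α i else 0) (g := S)).mp
      (fun d _ => rfl) n (by omega)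
    -- bound each term of the inversion sum
    have hterm_bound : ∀ x ∈ n.divisorsAntidiagonal,
        ‖(ArithmeticFunction.moebius x.1 : ℤ) • S x.2‖ ≤ B * r / r ^ n := by
      intro x hx
      obtain ⟨hxmul, hn0⟩ := Nat.mem_divisorsAntidiagonal.mp hx
      have hx2pos : 1 ≤ x.2 := by
        rcases Nat.eq_zero_or_pos x.2 with h | h
        · rw [h, mul_zero] at hxmul; omega
        · omega
      have hx2le : x.2 ≤ n := by
        have : x.2 ∣ n := ⟨x.1, by rw [← hxmul]; ring⟩
        exact Nat.le_of_dvd (by omega) this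
      have hS2 : ‖S x.2‖ ≤ B * r / r ^ x.2 := hSd x.2 hx2pos
      have hmono : B * r / r ^ x.2 ≤ B * r / r ^ n := by
        have hp : r ^ n ≤ r ^ x.2 := pow_le_pow_of_le_one hr0.le hr1.le hx2le
        gcongr
      have hμ1 : ‖((ArithmeticFunction.moebius x.1 : ℤ) : ℂ)‖ ≤ 1 := by
        have habs : |ArithmeticFunction.moebius x.1| ≤ 1 := ArithmeticFunction.abs_moebius_le_one
        rw [Complex.norm_intCast]
        exact_mod_cast habs
      rw [zsmul_eq_mul, norm_mul]
      calc ‖((ArithmeticFunction.moebius x.1 : ℤ) : ℂ)‖ * ‖S x.2‖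
          ≤ 1 * (B * r / r ^ n) := by
            apply mul_le_mul hμ1 (hS2.trans hmono) (norm_nonneg _) zero_le_one
        _ = B * r / r ^ n := one_mul _
    -- the number of divisors is at most n
    have hcard : (n.divisorsAntidiagonal).card ≤ n := by
      have hinj : Set.InjOn (fun x : ℕ × ℕ => x.2) (n.divisorsAntidiagonal : Set (ℕ × ℕ)) := by
        intro x hx y hy hxy
        simp only [Finset.coe_sort_coe, Finset.mem_coe] at hx hy
        obtain ⟨hx1, hn0⟩ := Nat.mem_divisorsAntidiagonal.mp hx
        obtain ⟨hy1, _⟩ := Nat.mem_divisorsAntidiagonal.mp hy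
        have h2 : x.2 = y.2 := hxy
        have hx2pos : 0 < x.2 := by
          rcases Nat.eq_zero_or_pos x.2 with h | h
          · rw [h, mul_zero] at hx1; omega
          · exact h
        have h1 : x.1 = y.1 := by
          have : x.1 * x.2 = y.1 * x.2 := by rw [hx1, h2, hy1]
          exact Nat.eq_of_mul_eq_mul_right hx2pos this
        exact Prod.ext h1 h2
      have hmaps : ∀ x ∈ n.divisorsAntidiagonal, x.2 ∈ Finset.Icc 1 n := by
        intro x hx
        obtain ⟨hx1, hn0⟩ := Nat.mem_divisorsAntidiagonal.mp hx
        rw [Finset.mem_Icc]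
        have hx2pos : 1 ≤ x.2 := by
          rcases Nat.eq_zero_or_pos x.2 with h | h
          · rw [h, mul_zero] at hx1; omega
          · omega
        have : x.2 ∣ n := ⟨x.1, by rw [← hx1]; ring⟩
        exact ⟨hx2pos, Nat.le_of_dvd (by omega) this⟩
      calc (n.divisorsAntidiagonal).card ≤ (Finset.Icc 1 n).card :=
            Finset.card_le_card_of_injOn _ hmaps hinj
        _ = n := by rw [Nat.card_Icc]; omega
    -- assemble the final bound
    have hnα : (n : ℝ) * ‖α n‖ ≤ (n : ℝ) * (B * r / r ^ n) := by
      have h1 : ‖(n : ℂ) * α n‖ = (n : ℝ) * ‖α n‖ := by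
        rw [norm_mul, Complex.norm_natCast]
      have h2 : ((if 2 ≤ n then (n : ℂ) * α n else 0) : ℂ) = (n : ℂ) * α n := if_pos hn
      rw [← h1]
      calc ‖(n : ℂ) * α n‖ = ‖∑ x ∈ n.divisorsAntidiagonal,
            (ArithmeticFunction.moebius x.1 : ℤ) • S x.2‖ := by rw [hinv, h2]
        _ ≤ ∑ x ∈ n.divisorsAntidiagonal,
            ‖(ArithmeticFunction.moebius x.1 : ℤ) • S x.2‖ := norm_sum_le _ _
        _ ≤ ∑ _x ∈ n.divisorsAntidiagonal, (B * r / r ^ n) :=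
            Finset.sum_le_sum hterm_bound
        _ = (n.divisorsAntidiagonal).card * (B * r / r ^ n) := by
            rw [Finset.sum_const, nsmul_eq_mul]
        _ ≤ (n : ℝ) * (B * r / r ^ n) := by
            apply mul_le_mul_of_nonneg_right _ (by positivity)
            exact_mod_cast hcard
    have hnpos : (0:ℝ) < (n : ℝ) := by exact_mod_cast (by omega : 0 < n)
    exact le_of_mul_le_mul_left hnα hnpos
  -- pass to the limit r → R
  have hlim : Tendsto (fun r : ℝ => B * r / r ^ n) (𝓝[<] R) (𝓝 (B * R / R ^ n)) := by
    have hcont : ContinuousAt (fun r : ℝ => B * r / r ^ n) R :=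
      (continuousAt_const.mul continuousAt_id).div (continuousAt_pow R n)
        (pow_ne_zero n hR0.ne')
    exact hcont.tendsto.mono_left nhdsWithin_le_nhds
  have hfinal : ‖α n‖ ≤ B * R / R ^ n := by
    refine ge_of_tendsto hlim ?_
    filter_upwards [Ioo_mem_nhdsLT_of_mem (show R ∈ Set.Ioc 0 R from ⟨hR0, le_refl R⟩)]
      with r hr
    exact key r hr.1 hr.2
  calc ‖α n‖ ≤ B * R / R ^ n := hfinal
    _ ≤ B / R ^ n := by
      have h1 : B * R ≤ B := by nlinarith
      have h2 : (0:ℝ) < R ^ n := pow_pos hR0 n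
      gcongr
end
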